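/- arXiv:2310.16929 — 8 statements merged into one kernel-verified Lean document; each statement's English description precedes it below -/
import Mathlib

section
/- Let G be a graph on n vertices, let 1 ≤ h ≤ k ≤ n, and let L_h and L_k be the Laplacian matrices of the token graphs F_h(G) and F_k(G). Let S be the (k,h)-binomial matrix, with rows indexed by k-subsets A of [n] and columns by h-subsets X, and (S)_{AX} = 1 if X ⊂ A, else 0. Then L_k S = S L_h. -/
open Finset
open scoped Classical

def tokenGraph {V : Type*} [DecidableEq V] (G : SimpleGraph V) (k : ℕ) :
    SimpleGraph {s : Finset V // s.card = k} where
  Adj A B := ∃ a b, G.Adj a b ∧ A.1 \ B.1 = {a} ∧ B.1 \ A.1 = {b}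
  symm := by
    constructor
    rintro A B ⟨a, b, h, h1, h2⟩
    exact ⟨b, a, h.symm, h2, h1⟩
  loopless := by
    constructor
    rintro A ⟨a, b, h, h1, h2⟩
    rw [Finset.sdiff_self] at h1
    exact Finset.singleton_ne_empty a h1.symm

section AuxSets

variable {α : Type*} [DecidableEq α]

lemma tg_sd_card {A : Finset α} {a b : α} (ha : a ∈ A) (hb : b ∉ A) :
    (A \ {a} ∪ {b}).card = A.card := by
  have hba : b ∉ A \ {a} := fun hmem => hb (Finset.mem_sdiff.mp hmem).1
  have hd : Disjoint (A \ {a}) ({b} : Finset α) := by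
    simpa using hba
  rw [Finset.card_union_of_disjoint hd, Finset.card_singleton,
    Finset.sdiff_singleton_eq_erase, Finset.card_erase_of_mem ha]
  have := Finset.card_pos.mpr ⟨a, ha⟩
  omega

lemma tg_sd_left {A : Finset α} {a b : α} (ha : a ∈ A) (hb : b ∉ A) :
    A \ (A \ {a} ∪ {b}) = {a} := by
  ext x
  simp only [Finset.mem_sdiff, Finset.mem_union, Finset.mem_singleton, not_or, not_and, not_not]
  constructor
  · rintro ⟨hxA, h1, _⟩
    exact h1 hxA
  · rintro rfl
    exact ⟨ha, fun _ => rfl, fun hxb => hb (hxb ▸ ha)⟩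

lemma tg_sd_right {A : Finset α} {a b : α} (ha : a ∈ A) (hb : b ∉ A) :
    (A \ {a} ∪ {b}) \ A = {b} := by
  ext x
  simp only [Finset.mem_sdiff, Finset.mem_union, Finset.mem_singleton]
  constructor
  · rintro ⟨⟨hxA, _⟩ | rfl, hx⟩
    · exact absurd hxA hx
    · rfl
  · rintro rfl
    exact ⟨Or.inr rfl, hb⟩

lemma tg_recover {A B : Finset α} {a b : α} (h1 : A \ B = {a}) (h2 : B \ A = {b}) :
    B = A \ {a} ∪ {b} := by
  have ha : a ∈ A ∧ a ∉ B := by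
    have : a ∈ A \ B := by rw [h1]; exact Finset.mem_singleton_self a
    exact Finset.mem_sdiff.mp this
  have hbB : b ∈ B ∧ b ∉ A := by
    have : b ∈ B \ A := by rw [h2]; exact Finset.mem_singleton_self b
    exact Finset.mem_sdiff.mp this
  ext x
  simp only [Finset.mem_union, Finset.mem_sdiff, Finset.mem_singleton]
  constructor
  · intro hxB
    by_cases hxA : x ∈ A
    · left
      refine ⟨hxA, fun hxa => ha.2 (hxa ▸ hxB)⟩
    · right
      have : x ∈ B \ A := Finset.mem_sdiff.mpr ⟨hxB, hxA⟩
      rw [h2] at this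
      exact Finset.mem_singleton.mp this
  · rintro (⟨hxA, hxa⟩ | rfl)
    · by_contra hxB
      have : x ∈ A \ B := Finset.mem_sdiff.mpr ⟨hxA, hxB⟩
      rw [h1] at this
      exact hxa (Finset.mem_singleton.mp this)
    · exact hbB.1

lemma tg_cond_iff_sub {A X : Finset α} {a b : α} (hab : a ≠ b) (hXA : X ⊆ A) :
    ((a ∈ A ∧ b ∉ A) ∧ ¬ X ⊆ A \ {a} ∪ {b}) ↔ ((a ∈ X ∧ b ∉ X) ∧ ¬ X \ {a} ∪ {b} ⊆ A) := by
  constructor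
  · rintro ⟨⟨haA, hbA⟩, hns⟩
    have haX : a ∈ X := by
      by_contra haX
      apply hns
      intro x hx
      refine Finset.mem_union_left _ (Finset.mem_sdiff.mpr ⟨hXA hx, ?_⟩)
      intro hxa
      rw [Finset.mem_singleton] at hxa
      subst hxa
      exact haX hx
    exact ⟨⟨haX, fun hbX => hbA (hXA hbX)⟩,
      fun hs => hbA (hs (Finset.mem_union_right _ (Finset.mem_singleton_self b)))⟩
  · rintro ⟨⟨haX, hbX⟩, hns⟩
    refine ⟨⟨hXA haX, fun hbA => hns ?_⟩, fun hs => ?_⟩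
    · intro x hx
      rcases Finset.mem_union.mp hx with hx1 | hx2
      · exact hXA (Finset.mem_sdiff.mp hx1).1
      · rw [Finset.mem_singleton] at hx2
        subst hx2
        exact hbA
    · rcases Finset.mem_union.mp (hs haX) with h1 | h2
      · exact (Finset.mem_sdiff.mp h1).2 (Finset.mem_singleton_self a)
      · exact hab (Finset.mem_singleton.mp h2)

lemma tg_cond_iff_nsub {A X : Finset α} {a b : α} (hab : a ≠ b) (hXA : ¬ X ⊆ A) :
    ((a ∈ A ∧ b ∉ A) ∧ X ⊆ A \ {a} ∪ {b}) ↔ ((b ∈ X ∧ a ∉ X) ∧ X \ {b} ∪ {a} ⊆ A) := by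
  constructor
  · rintro ⟨⟨haA, hbA⟩, hs⟩
    have hbX : b ∈ X := by
      by_contra hbX
      apply hXA
      intro x hx
      rcases Finset.mem_union.mp (hs hx) with h1 | h2
      · exact (Finset.mem_sdiff.mp h1).1
      · rw [Finset.mem_singleton] at h2
        subst h2
        exact absurd hx hbX
    have haX : a ∉ X := by
      intro haX
      rcases Finset.mem_union.mp (hs haX) with h1 | h2
      · exact (Finset.mem_sdiff.mp h1).2 (Finset.mem_singleton_self a)
      · exact hab (Finset.mem_singleton.mp h2)
    refine ⟨⟨hbX, haX⟩, ?_⟩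
    intro x hx
    rcases Finset.mem_union.mp hx with h1 | h2
    · obtain ⟨hxX, hxb⟩ := Finset.mem_sdiff.mp h1
      rcases Finset.mem_union.mp (hs hxX) with h3 | h4
      · exact (Finset.mem_sdiff.mp h3).1
      · exact absurd h4 hxb
    · rw [Finset.mem_singleton] at h2
      subst h2
      exact haA
  · rintro ⟨⟨hbX, haX⟩, hs⟩
    have haA : a ∈ A := hs (Finset.mem_union_right _ (Finset.mem_singleton_self a))
    have hbA : b ∉ A := by
      intro hbA
      apply hXA
      intro x hx
      by_cases hxb : x = b
      · subst hxb; exact hbA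
      · refine hs (Finset.mem_union_left _ (Finset.mem_sdiff.mpr ⟨hx, ?_⟩))
        simpa using hxb
    refine ⟨⟨haA, hbA⟩, ?_⟩
    intro x hx
    by_cases hxb : x = b
    · subst hxb
      exact Finset.mem_union_right _ (Finset.mem_singleton_self x)
    · have hxA : x ∈ A := by
        refine hs (Finset.mem_union_left _ (Finset.mem_sdiff.mpr ⟨hx, ?_⟩))
        simpa using hxb
      refine Finset.mem_union_left _ (Finset.mem_sdiff.mpr ⟨hxA, ?_⟩)
      intro hxa
      rw [Finset.mem_singleton] at hxa
      subst hxa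
      exact haX hx

end AuxSets

lemma tg_ite_one (c d : Prop) [Decidable c] [Decidable d] :
    (if c then ((1 : ℝ) - if d then 1 else 0) else 0) = if c ∧ ¬ d then 1 else 0 := by
  by_cases hc : c <;> by_cases hd : d <;> simp [hc, hd]

lemma tg_ite_zero (c d : Prop) [Decidable c] [Decidable d] :
    (if c then ((0 : ℝ) - if d then 1 else 0) else 0) = -(if c ∧ d then 1 else 0) := by
  by_cases hc : c <;> by_cases hd : d <;> simp [hc, hd]

lemma tg_ite_sub (c : Prop) [Decidable c] (x y : ℝ) :
    (if c then x else 0) - (if c then y else 0) = if c then x - y else 0 := by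
  split_ifs <;> simp

lemma tg_deg_eq {V : Type*} [Fintype V] (G' : SimpleGraph V) (v : V) :
    (G'.degree v : ℝ) = ∑ u, if G'.Adj v u then (1 : ℝ) else 0 := by
  rw [Finset.sum_boole]
  norm_cast
  simp [SimpleGraph.degree, SimpleGraph.neighborFinset_eq_filter]

lemma tg_sum_adj {n k : ℕ} (G : SimpleGraph (Fin n)) (A : {s : Finset (Fin n) // s.card = k})
    (φ : Finset (Fin n) → ℝ) :
    ∑ B : {s : Finset (Fin n) // s.card = k},
        (if (tokenGraph G k).Adj A B then φ B.1 else 0)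
      = ∑ p : Fin n × Fin n,
          (if G.Adj p.1 p.2 ∧ p.1 ∈ A.1 ∧ p.2 ∉ A.1 then φ (A.1 \ {p.1} ∪ {p.2}) else 0) := by
  rw [← Finset.sum_filter, ← Finset.sum_filter]
  symm
  refine Finset.sum_bij'
    (i := fun p hp => (⟨A.1 \ {p.1} ∪ {p.2}, by
      have h := (Finset.mem_filter.mp hp).2
      rw [tg_sd_card h.2.1 h.2.2]
      exact A.2⟩ : {s : Finset (Fin n) // s.card = k}))
    (j := fun B hB => (((Finset.mem_filter.mp hB).2).choose,
      ((Finset.mem_filter.mp hB).2).choose_spec.choose))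
    ?_ ?_ ?_ ?_ ?_
  · intro p hp
    have h := (Finset.mem_filter.mp hp).2
    refine Finset.mem_filter.mpr ⟨Finset.mem_univ _, ?_⟩
    exact ⟨p.1, p.2, h.1, tg_sd_left h.2.1 h.2.2, tg_sd_right h.2.1 h.2.2⟩
  · intro B hB
    have h := (Finset.mem_filter.mp hB).2
    obtain ⟨hadj, h1, h2⟩ := h.choose_spec.choose_spec
    refine Finset.mem_filter.mpr ⟨Finset.mem_univ _, hadj, ?_, ?_⟩
    · have ha : ∀ x ∈ A.1 \ B.1, x ∈ A.1 := fun x hxm => (Finset.mem_sdiff.mp hxm).1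
      rw [h1] at ha
      exact ha _ (Finset.mem_singleton_self _)
    · have hb : ∀ x ∈ B.1 \ A.1, x ∉ A.1 := fun x hxm => (Finset.mem_sdiff.mp hxm).2
      rw [h2] at hb
      exact hb _ (Finset.mem_singleton_self _)
  · intro p hp
    have h := (Finset.mem_filter.mp hp).2
    -- the membership proof of i p hp in the filter
    set B : {s : Finset (Fin n) // s.card = k} := ⟨A.1 \ {p.1} ∪ {p.2}, by
      rw [tg_sd_card h.2.1 h.2.2]; exact A.2⟩ with hBdef
    have hmem : B ∈ Finset.univ.filter (fun B => (tokenGraph G k).Adj A B) := by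
      refine Finset.mem_filter.mpr ⟨Finset.mem_univ _, ?_⟩
      exact ⟨p.1, p.2, h.1, tg_sd_left h.2.1 h.2.2, tg_sd_right h.2.1 h.2.2⟩
    have hadjB := (Finset.mem_filter.mp hmem).2
    obtain ⟨hadj', h1', h2'⟩ := hadjB.choose_spec.choose_spec
    have e1 : hadjB.choose = p.1 := by
      have : ({hadjB.choose} : Finset (Fin n)) = {p.1} := by
        rw [← h1', tg_sd_left h.2.1 h.2.2]
      exact Finset.singleton_injective this
    have e2 : hadjB.choose_spec.choose = p.2 := by
      have : ({hadjB.choose_spec.choose} : Finset (Fin n)) = {p.2} := by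
        rw [← h2', tg_sd_right h.2.1 h.2.2]
      exact Finset.singleton_injective this
    exact Prod.ext e1 e2
  · intro B hB
    have h := (Finset.mem_filter.mp hB).2
    obtain ⟨hadj, h1, h2⟩ := h.choose_spec.choose_spec
    exact Subtype.ext (tg_recover h1 h2).symm
  · intro p hp
    rfl

theorem token_laplacian_commutation (n h k : ℕ) (G : SimpleGraph (Fin n))
    (hh : 1 ≤ h) (hhk : h ≤ k) (hkn : k ≤ n)
    (S : Matrix {s : Finset (Fin n) // s.card = k} {s : Finset (Fin n) // s.card = h} ℝ)
    (hS : ∀ A X, S A X = if X.1 ⊆ A.1 then 1 else 0) :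
    (tokenGraph G k).lapMatrix ℝ * S = S * (tokenGraph G h).lapMatrix ℝ := by
  ext A X
  rw [Matrix.mul_apply, Matrix.mul_apply]
  have hL : ∑ B, (tokenGraph G k).lapMatrix ℝ A B * S B X
      = ∑ p : Fin n × Fin n, (if G.Adj p.1 p.2 ∧ p.1 ∈ A.1 ∧ p.2 ∉ A.1
          then ((if X.1 ⊆ A.1 then (1 : ℝ) else 0)
            - (if X.1 ⊆ A.1 \ {p.1} ∪ {p.2} then 1 else 0)) else 0) := by
    simp only [SimpleGraph.lapMatrix, Matrix.sub_apply, SimpleGraph.degMatrix,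
      Matrix.diagonal_apply, SimpleGraph.adjMatrix_apply, hS, sub_mul, ite_mul, zero_mul, one_mul]
    rw [Finset.sum_sub_distrib, Finset.sum_ite_eq, if_pos (Finset.mem_univ A)]
    rw [tg_sum_adj G A (fun s => if X.1 ⊆ s then (1 : ℝ) else 0)]
    have hdegA : ((tokenGraph G k).degree A : ℝ) * (if X.1 ⊆ A.1 then (1 : ℝ) else 0)
        = ∑ p : Fin n × Fin n, (if G.Adj p.1 p.2 ∧ p.1 ∈ A.1 ∧ p.2 ∉ A.1
            then (if X.1 ⊆ A.1 then (1 : ℝ) else 0) else 0) := by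
      rw [tg_deg_eq, Finset.sum_mul]
      simp only [ite_mul, one_mul, zero_mul]
      exact tg_sum_adj G A (fun _ => if X.1 ⊆ A.1 then (1 : ℝ) else 0)
    rw [hdegA, ← Finset.sum_sub_distrib]
    exact Finset.sum_congr rfl fun p _ => tg_ite_sub _ _ _
  have hR : ∑ Y, S A Y * (tokenGraph G h).lapMatrix ℝ Y X
      = ∑ p : Fin n × Fin n, (if G.Adj p.1 p.2 ∧ p.1 ∈ X.1 ∧ p.2 ∉ X.1
          then ((if X.1 ⊆ A.1 then (1 : ℝ) else 0)
            - (if X.1 \ {p.1} ∪ {p.2} ⊆ A.1 then 1 else 0)) else 0) := by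
    simp only [SimpleGraph.lapMatrix, Matrix.sub_apply, SimpleGraph.degMatrix,
      Matrix.diagonal_apply, SimpleGraph.adjMatrix_apply, hS, mul_sub, mul_ite, mul_zero, mul_one]
    rw [Finset.sum_sub_distrib, Finset.sum_ite_eq', if_pos (Finset.mem_univ X)]
    have hsw : ∀ Y : {s : Finset (Fin n) // s.card = h},
        (if (tokenGraph G h).Adj Y X then (if Y.1 ⊆ A.1 then (1 : ℝ) else 0) else 0)
          = (if (tokenGraph G h).Adj X Y then (if Y.1 ⊆ A.1 then (1 : ℝ) else 0) else 0) := by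
      intro Y
      rw [SimpleGraph.adj_comm]
    simp only [hsw]
    rw [tg_sum_adj G X (fun s => if s ⊆ A.1 then (1 : ℝ) else 0)]
    have hdegX : (if X.1 ⊆ A.1 then (1 : ℝ) else 0) * ((tokenGraph G h).degree X : ℝ)
        = ∑ p : Fin n × Fin n, (if G.Adj p.1 p.2 ∧ p.1 ∈ X.1 ∧ p.2 ∉ X.1
            then (if X.1 ⊆ A.1 then (1 : ℝ) else 0) else 0) := by
      rw [tg_deg_eq, Finset.mul_sum]
      simp only [mul_ite, mul_one, mul_zero]
      exact tg_sum_adj G X (fun _ => if X.1 ⊆ A.1 then (1 : ℝ) else 0)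
    rw [hdegX, ← Finset.sum_sub_distrib]
    exact Finset.sum_congr rfl fun p _ => tg_ite_sub _ _ _
  rw [hL, hR]
  by_cases hXA : X.1 ⊆ A.1
  · simp only [if_pos hXA]
    refine Finset.sum_congr rfl fun p _ => ?_
    by_cases hadj : G.Adj p.1 p.2
    · simp only [hadj, true_and]
      rw [tg_ite_one, tg_ite_one]
      exact if_congr (tg_cond_iff_sub hadj.ne hXA) rfl rfl
    · simp [hadj]
  · simp only [if_neg hXA]
    have hswap : ∑ p : Fin n × Fin n, (if G.Adj p.1 p.2 ∧ p.1 ∈ X.1 ∧ p.2 ∉ X.1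
          then ((0 : ℝ) - (if X.1 \ {p.1} ∪ {p.2} ⊆ A.1 then 1 else 0)) else 0)
        = ∑ p : Fin n × Fin n, (if G.Adj p.2 p.1 ∧ p.2 ∈ X.1 ∧ p.1 ∉ X.1
          then ((0 : ℝ) - (if X.1 \ {p.2} ∪ {p.1} ⊆ A.1 then 1 else 0)) else 0) := by
      exact (Fintype.sum_equiv (Equiv.prodComm (Fin n) (Fin n)) _ _ (fun p => rfl)).symm
    rw [hswap]
    refine Finset.sum_congr rfl fun p _ => ?_
    by_cases hadj : G.Adj p.1 p.2
    · have hadj' : G.Adj p.2 p.1 := hadj.symm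
      simp only [hadj, hadj', true_and]
      rw [tg_ite_zero, tg_ite_zero]
      exact congrArg Neg.neg (if_congr (tg_cond_iff_nsub hadj.ne hXA) rfl rfl)
    · have hadj' : ¬ G.Adj p.2 p.1 := fun hc => hadj hc.symm
      simp [hadj, hadj']
end

section
/- Let G be a graph on n vertices, 1 ≤ h ≤ k ≤ n, with L_h, L_k the Laplacians of F_h(G), F_k(G) and S the (k,h)-binomial (inclusion) matrix. If v is an eigenvector of L_h with eigenvalue λ, then Sv is a nonzero eigenvector of L_k with eigenvalue λ; hence the Laplacian spectrum of F_h(G) is contained in that of F_k(G). -/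
open Finset
open scoped Classical

set_option linter.unusedSectionVars false

variable {V : Type*} [DecidableEq V] [Fintype V]

lemma move_card {A : Finset V} {a b : V} (ha : a ∈ A) (hb : b ∉ A) :
    (insert b (A.erase a)).card = A.card := by
  rw [Finset.card_insert_of_notMem (fun hc => hb (Finset.mem_of_mem_erase hc)),
    Finset.card_erase_of_mem ha]
  have := Finset.card_pos.mpr ⟨a, ha⟩
  omega

lemma move_sdiff {A : Finset V} {a b : V} (ha : a ∈ A) (hb : b ∉ A) :
    A \ (insert b (A.erase a)) = {a} ∧ (insert b (A.erase a)) \ A = {b} := by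
  constructor <;> ext x <;>
    simp only [Finset.mem_sdiff, Finset.mem_insert, Finset.mem_erase, Finset.mem_singleton,
      not_or, not_and] <;>
    constructor
  · rintro ⟨hx, hxb, h2⟩
    by_contra hxa
    exact (h2 hxa) hx
  · rintro rfl
    exact ⟨ha, fun e => hb (e ▸ ha), fun h => absurd rfl h⟩
  · rintro ⟨hx1 | ⟨_, hx2⟩, hx3⟩
    · exact hx1
    · exact absurd hx2 hx3
  · rintro rfl
    exact ⟨Or.inl rfl, hb⟩

lemma tokenAdj_iff {G : SimpleGraph V} {k : ℕ} {A B : {s : Finset V // s.card = k}} :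
    (tokenGraph G k).Adj A B ↔
      ∃ a b, a ∈ A.1 ∧ b ∉ A.1 ∧ G.Adj a b ∧ B.1 = insert b (A.1.erase a) := by
  constructor
  · rintro ⟨a, b, hab, h1, h2⟩
    have ha : a ∈ A.1 := (Finset.mem_sdiff.mp (h1 ▸ Finset.mem_singleton_self a)).1
    have haB : a ∉ B.1 := (Finset.mem_sdiff.mp (h1 ▸ Finset.mem_singleton_self a)).2
    have hbB : b ∈ B.1 := (Finset.mem_sdiff.mp (h2 ▸ Finset.mem_singleton_self b)).1
    have hb : b ∉ A.1 := (Finset.mem_sdiff.mp (h2 ▸ Finset.mem_singleton_self b)).2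
    refine ⟨a, b, ha, hb, hab, ?_⟩
    ext x
    simp only [Finset.mem_insert, Finset.mem_erase]
    constructor
    · intro hx
      by_cases hxA : x ∈ A.1
      · right
        refine ⟨fun he => haB (he ▸ hx), hxA⟩
      · left
        have : x ∈ B.1 \ A.1 := Finset.mem_sdiff.mpr ⟨hx, hxA⟩
        rw [h2, Finset.mem_singleton] at this; exact this
    · rintro (rfl | ⟨hxa, hxA⟩)
      · exact hbB
      · by_contra hxB
        have : x ∈ A.1 \ B.1 := Finset.mem_sdiff.mpr ⟨hxA, hxB⟩
        rw [h1, Finset.mem_singleton] at this; exact hxa this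
  · rintro ⟨a, b, ha, hb, hab, hB⟩
    obtain ⟨h1, h2⟩ := move_sdiff ha hb
    exact ⟨a, b, hab, by rw [hB]; exact h1, by rw [hB]; exact h2⟩

lemma sub_move_of_sub {X A : Finset V} {a b : V} (hXA : X ⊆ A) (hb : b ∉ A) :
    X ⊆ insert b (A.erase a) ↔ a ∉ X := by
  constructor
  · intro hsub haX
    rcases Finset.mem_insert.mp (hsub haX) with he | hm
    · exact hb (he ▸ hXA haX)
    · exact (Finset.mem_erase.mp hm).1 rfl
  · intro haX x hx
    exact Finset.mem_insert.mpr (Or.inr (Finset.mem_erase.mpr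
      ⟨fun e => haX (e ▸ hx), hXA hx⟩))

lemma sub_move_of_not_sub {X A : Finset V} {a b : V} (hXA : ¬ X ⊆ A) (ha : a ∈ A)
    (hb : b ∉ A) : X ⊆ insert b (A.erase a) ↔ X \ A = {b} ∧ a ∉ X := by
  constructor
  · intro hsub
    have hab : a ≠ b := fun e => hb (e ▸ ha)
    have haX : a ∉ X := by
      intro haX
      rcases Finset.mem_insert.mp (hsub haX) with he | hm
      · exact hab he
      · exact (Finset.mem_erase.mp hm).1 rfl
    refine ⟨?_, haX⟩
    ext x
    simp only [Finset.mem_sdiff, Finset.mem_singleton]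
    constructor
    · rintro ⟨hx, hxA⟩
      rcases Finset.mem_insert.mp (hsub hx) with he | hm
      · exact he
      · exact absurd (Finset.mem_erase.mp hm).2 hxA
    · rintro rfl
      obtain ⟨x, hx, hxA⟩ := Finset.not_subset.mp hXA
      rcases Finset.mem_insert.mp (hsub hx) with he | hm
      · exact he ▸ ⟨hx, hxA⟩
      · exact absurd (Finset.mem_erase.mp hm).2 hxA
  · rintro ⟨hXb, haX⟩ x hx
    by_cases hxA : x ∈ A
    · exact Finset.mem_insert.mpr (Or.inr (Finset.mem_erase.mpr
        ⟨fun e => haX (e ▸ hx), hxA⟩))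
    · have : x ∈ X \ A := Finset.mem_sdiff.mpr ⟨hx, hxA⟩
      rw [hXb, Finset.mem_singleton] at this
      exact Finset.mem_insert.mpr (Or.inl this)

lemma move_sub_of_sub {X A : Finset V} {x y : V} (hXA : X ⊆ A) (hy : y ∉ X) :
    insert y (X.erase x) ⊆ A ↔ y ∈ A := by
  constructor
  · intro hsub
    exact hsub (Finset.mem_insert_self y _)
  · intro hyA z hz
    rcases Finset.mem_insert.mp hz with he | hm
    · exact he ▸ hyA
    · exact hXA (Finset.mem_of_mem_erase hm)

lemma move_sub_of_not_sub {X A : Finset V} {x y : V} (hXA : ¬ X ⊆ A) (hx : x ∈ X)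
    (hy : y ∉ X) : insert y (X.erase x) ⊆ A ↔ X \ A = {x} ∧ y ∈ A := by
  constructor
  · intro hsub
    have hyA : y ∈ A := hsub (Finset.mem_insert_self y _)
    refine ⟨?_, hyA⟩
    ext z
    simp only [Finset.mem_sdiff, Finset.mem_singleton]
    constructor
    · rintro ⟨hz, hzA⟩
      by_contra hzx
      exact hzA (hsub (Finset.mem_insert.mpr (Or.inr (Finset.mem_erase.mpr ⟨hzx, hz⟩))))
    · intro he
      rw [he]
      refine ⟨hx, fun hxA => hXA fun w hw => ?_⟩
      by_cases hwx : w = x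
      · exact hwx ▸ hxA
      · exact hsub (Finset.mem_insert.mpr (Or.inr (Finset.mem_erase.mpr ⟨hwx, hw⟩)))
  · rintro ⟨hXx, hyA⟩ z hz
    rcases Finset.mem_insert.mp hz with he | hm
    · exact he ▸ hyA
    · obtain ⟨hzx, hz⟩ := Finset.mem_erase.mp hm
      by_contra hzA
      have : z ∈ X \ A := Finset.mem_sdiff.mpr ⟨hz, hzA⟩
      rw [hXx, Finset.mem_singleton] at this
      exact hzx this

lemma mem_pairs {G : SimpleGraph V} {A : Finset V} {p : V × V} :
    p ∈ (A ×ˢ Aᶜ).filter (fun p => G.Adj p.1 p.2) ↔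
      p.1 ∈ A ∧ p.2 ∉ A ∧ G.Adj p.1 p.2 := by
  simp only [Finset.mem_filter, Finset.mem_product, Finset.mem_compl]
  tauto

lemma sum_neighbors {G : SimpleGraph V} {k : ℕ} (A : {s : Finset V // s.card = k})
    (f : Finset V → ℝ) :
    ∑ B ∈ (tokenGraph G k).neighborFinset A, f B.1
      = ∑ p ∈ (A.1 ×ˢ A.1ᶜ).filter (fun p => G.Adj p.1 p.2),
          f (insert p.2 (A.1.erase p.1)) := by
  refine (Finset.sum_bij (fun p hp => (⟨insert p.2 (A.1.erase p.1), by
    rw [move_card (mem_pairs.mp hp).1 (mem_pairs.mp hp).2.1]; exact A.2⟩ :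
      {s : Finset V // s.card = k})) ?_ ?_ ?_ ?_).symm
  · intro p hp
    obtain ⟨h1, h2, h3⟩ := mem_pairs.mp hp
    rw [SimpleGraph.mem_neighborFinset]
    exact tokenAdj_iff.mpr ⟨p.1, p.2, h1, h2, h3, rfl⟩
  · intro p hp q hq hpq
    obtain ⟨hp1, hp2, _⟩ := mem_pairs.mp hp
    obtain ⟨hq1, hq2, _⟩ := mem_pairs.mp hq
    have hB := congrArg (fun B : {s : Finset V // s.card = k} => B.1) hpq
    simp only at hB
    have e1 := (move_sdiff hp1 hp2).1
    have e2 := (move_sdiff hq1 hq2).1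
    have e3 := (move_sdiff hp1 hp2).2
    have e4 := (move_sdiff hq1 hq2).2
    rw [hB] at e1 e3
    have : p.1 = q.1 := Finset.singleton_injective (e1.symm.trans e2)
    have : p.2 = q.2 := Finset.singleton_injective (e3.symm.trans e4)
    exact Prod.ext ‹p.1 = q.1› ‹p.2 = q.2›
  · intro B hB
    rw [SimpleGraph.mem_neighborFinset] at hB
    obtain ⟨a, b, ha, hb, hab, hBe⟩ := tokenAdj_iff.mp hB
    exact ⟨(a, b), mem_pairs.mpr ⟨ha, hb, hab⟩, Subtype.ext hBe.symm⟩
  · intro p hp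
    rfl

lemma key_identity {G : SimpleGraph V} {h k : ℕ} (A : {s : Finset V // s.card = k})
    (X : {s : Finset V // s.card = h}) :
    ∑ B ∈ (tokenGraph G k).neighborFinset A,
        ((if X.1 ⊆ A.1 then (1:ℝ) else 0) - (if X.1 ⊆ B.1 then (1:ℝ) else 0))
      = ∑ Y ∈ (tokenGraph G h).neighborFinset X,
          ((if X.1 ⊆ A.1 then (1:ℝ) else 0) - (if Y.1 ⊆ A.1 then (1:ℝ) else 0)) := by
  rw [sum_neighbors A (fun B => (if X.1 ⊆ A.1 then (1:ℝ) else 0) - (if X.1 ⊆ B then 1 else 0)),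
    sum_neighbors X (fun Y => (if X.1 ⊆ A.1 then (1:ℝ) else 0) - (if Y ⊆ A.1 then 1 else 0))]
  by_cases hXA : X.1 ⊆ A.1
  · simp only [hXA, if_true]
    have l1 : ∀ p ∈ (A.1 ×ˢ A.1ᶜ).filter (fun p => G.Adj p.1 p.2),
        (1:ℝ) - (if X.1 ⊆ insert p.2 (A.1.erase p.1) then 1 else 0)
          = if p.1 ∈ X.1 then 1 else 0 := by
      intro p hp
      obtain ⟨h1, h2, _⟩ := mem_pairs.mp hp
      simp only [sub_move_of_sub hXA h2]
      by_cases hc : p.1 ∈ X.1 <;> simp [hc]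
    have l2 : ∀ q ∈ (X.1 ×ˢ X.1ᶜ).filter (fun q => G.Adj q.1 q.2),
        (1:ℝ) - (if insert q.2 (X.1.erase q.1) ⊆ A.1 then 1 else 0)
          = if q.2 ∉ A.1 then 1 else 0 := by
      intro q hq
      obtain ⟨h1, h2, _⟩ := mem_pairs.mp hq
      simp only [move_sub_of_sub hXA h2]
      by_cases hc : q.2 ∈ A.1 <;> simp [hc]
    rw [Finset.sum_congr rfl l1, Finset.sum_congr rfl l2, Finset.sum_boole, Finset.sum_boole]
    congr 1
    congr 1
    ext p
    simp only [Finset.filter_filter, Finset.mem_filter, Finset.mem_product, Finset.mem_compl]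
    constructor
    · rintro ⟨⟨h1, h2⟩, h3, h4⟩
      exact ⟨⟨h4, fun hc => h2 (hXA hc)⟩, h3, h2⟩
    · rintro ⟨⟨h1, h2⟩, h3, h4⟩
      exact ⟨⟨hXA h1, h4⟩, h3, h1⟩
  · simp only [hXA, if_false]
    have l1 : ∀ p ∈ (A.1 ×ˢ A.1ᶜ).filter (fun p => G.Adj p.1 p.2),
        (0:ℝ) - (if X.1 ⊆ insert p.2 (A.1.erase p.1) then 1 else 0)
          = -(if X.1 \ A.1 = {p.2} ∧ p.1 ∉ X.1 then 1 else 0) := by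
      intro p hp
      obtain ⟨h1, h2, _⟩ := mem_pairs.mp hp
      simp only [sub_move_of_not_sub hXA h1 h2]
      ring
    have l2 : ∀ q ∈ (X.1 ×ˢ X.1ᶜ).filter (fun q => G.Adj q.1 q.2),
        (0:ℝ) - (if insert q.2 (X.1.erase q.1) ⊆ A.1 then 1 else 0)
          = -(if X.1 \ A.1 = {q.1} ∧ q.2 ∈ A.1 then 1 else 0) := by
      intro q hq
      obtain ⟨h1, h2, _⟩ := mem_pairs.mp hq
      simp only [move_sub_of_not_sub hXA h1 h2]
      ring
    rw [Finset.sum_congr rfl l1, Finset.sum_congr rfl l2, Finset.sum_neg_distrib,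
      Finset.sum_neg_distrib, Finset.sum_boole, Finset.sum_boole]
    congr 2
    refine Finset.card_bij' (fun p _ => p.swap) (fun q _ => q.swap) ?_ ?_ ?_ ?_
    · intro p hp
      simp only [Finset.filter_filter, Finset.mem_filter, Finset.mem_product,
        Finset.mem_compl] at hp ⊢
      obtain ⟨⟨h1, h2⟩, h3, h4, h5⟩ := hp
      have hb : p.2 ∈ X.1 := by
        have : p.2 ∈ X.1 \ A.1 := h4 ▸ Finset.mem_singleton_self p.2
        exact (Finset.mem_sdiff.mp this).1
      exact ⟨⟨hb, h5⟩, h3.symm, h4, h1⟩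
    · intro q hq
      simp only [Finset.filter_filter, Finset.mem_filter, Finset.mem_product,
        Finset.mem_compl] at hq ⊢
      obtain ⟨⟨h1, h2⟩, h3, h4, h5⟩ := hq
      have hb : q.1 ∉ A.1 := by
        have : q.1 ∈ X.1 \ A.1 := h4 ▸ Finset.mem_singleton_self q.1
        exact (Finset.mem_sdiff.mp this).2
      exact ⟨⟨h5, hb⟩, h3.symm, h4, h2⟩
    · intro p _; exact Prod.swap_swap p
    · intro q _; exact Prod.swap_swap q

lemma sum_sum_neighbors {W : Type*} [Fintype W] (G' : SimpleGraph W) (F : W → W → ℝ) :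
    ∑ X : W, ∑ Y ∈ G'.neighborFinset X, F X Y
      = ∑ X : W, ∑ Y ∈ G'.neighborFinset X, F Y X := by
  simp only [SimpleGraph.neighborFinset_eq_filter, Finset.sum_filter]
  rw [Finset.sum_comm]
  refine Finset.sum_congr rfl fun X _ => Finset.sum_congr rfl fun Y _ => ?_
  exact if_congr (G'.adj_comm Y X) rfl rfl

lemma lap_comm {G : SimpleGraph V} {h k : ℕ}
    (S : Matrix {s : Finset V // s.card = k} {s : Finset V // s.card = h} ℝ)
    (hS : ∀ A X, S A X = if X.1 ⊆ A.1 then 1 else 0)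
    (v : {s : Finset V // s.card = h} → ℝ) :
    ((tokenGraph G k).lapMatrix ℝ).mulVec (S.mulVec v)
      = S.mulVec (((tokenGraph G h).lapMatrix ℝ).mulVec v) := by
  funext A
  have hSv : ∀ C : {s : Finset V // s.card = k},
      S.mulVec v C = ∑ X, (if X.1 ⊆ C.1 then (1:ℝ) else 0) * v X := fun C => by
    simp [Matrix.mulVec, dotProduct, hS]
  rw [SimpleGraph.lapMatrix_mulVec_apply]
  calc ((tokenGraph G k).degree A : ℝ) * S.mulVec v A
        - ∑ B ∈ (tokenGraph G k).neighborFinset A, S.mulVec v B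
      = ∑ B ∈ (tokenGraph G k).neighborFinset A, (S.mulVec v A - S.mulVec v B) := by
        rw [Finset.sum_sub_distrib, Finset.sum_const, nsmul_eq_mul,
          SimpleGraph.card_neighborFinset_eq_degree]
    _ = ∑ B ∈ (tokenGraph G k).neighborFinset A,
          ∑ X, ((if X.1 ⊆ A.1 then (1:ℝ) else 0) - (if X.1 ⊆ B.1 then 1 else 0)) * v X := by
        refine Finset.sum_congr rfl fun B _ => ?_
        rw [hSv, hSv, ← Finset.sum_sub_distrib]
        exact Finset.sum_congr rfl fun X _ => (sub_mul _ _ _).symm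
    _ = ∑ X, (∑ B ∈ (tokenGraph G k).neighborFinset A,
          ((if X.1 ⊆ A.1 then (1:ℝ) else 0) - (if X.1 ⊆ B.1 then 1 else 0))) * v X := by
        rw [Finset.sum_comm]
        exact Finset.sum_congr rfl fun X _ => (Finset.sum_mul _ _ _).symm
    _ = ∑ X, (∑ Y ∈ (tokenGraph G h).neighborFinset X,
          ((if X.1 ⊆ A.1 then (1:ℝ) else 0) - (if Y.1 ⊆ A.1 then 1 else 0))) * v X := by
        refine Finset.sum_congr rfl fun X _ => ?_
        rw [key_identity]
    _ = ∑ X, ∑ Y ∈ (tokenGraph G h).neighborFinset X,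
          ((if X.1 ⊆ A.1 then (1:ℝ) else 0) * v X - (if Y.1 ⊆ A.1 then 1 else 0) * v X) := by
        refine Finset.sum_congr rfl fun X _ => ?_
        rw [Finset.sum_mul]
        exact Finset.sum_congr rfl fun Y _ => sub_mul _ _ _
    _ = ∑ X, ∑ Y ∈ (tokenGraph G h).neighborFinset X,
          ((if X.1 ⊆ A.1 then (1:ℝ) else 0) * v X - (if X.1 ⊆ A.1 then 1 else 0) * v Y) := by
        simp only [Finset.sum_sub_distrib]
        congr 1
        exact sum_sum_neighbors (tokenGraph G h)
          (fun X Y => (if Y.1 ⊆ A.1 then (1:ℝ) else 0) * v X)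
    _ = S.mulVec (((tokenGraph G h).lapMatrix ℝ).mulVec v) A := by
        have hSw : ∀ (w : {s : Finset V // s.card = h} → ℝ) (C : {s : Finset V // s.card = k}),
            S.mulVec w C = ∑ X, (if X.1 ⊆ C.1 then (1:ℝ) else 0) * w X := fun w C => by
          simp [Matrix.mulVec, dotProduct, hS]
        rw [hSw]
        refine Finset.sum_congr rfl fun X _ => ?_
        rw [SimpleGraph.lapMatrix_mulVec_apply, Finset.sum_sub_distrib, Finset.sum_const,
          nsmul_eq_mul, SimpleGraph.card_neighborFinset_eq_degree, mul_sub, Finset.mul_sum]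
        ring

lemma count_formula {h k : ℕ} (X Y : Finset V) (hX : X.card = h) (hY : Y.card = h)
    (hhk : h ≤ k) (j : ℕ) (hij : (X ∩ Y).card ≤ j) (hjh : j ≤ h)
    (hjk : j - (X ∩ Y).card ≤ k - h) :
    ((Finset.univ.powersetCard k).filter fun A => Y ⊆ A ∧ (X ∩ A).card = j).card
      = (h - (X ∩ Y).card).choose (j - (X ∩ Y).card) *
        (Fintype.card V - (2 * h - (X ∩ Y).card)).choose (k - h - (j - (X ∩ Y).card)) := by
  set i := (X ∩ Y).card with hi
  have hih : i ≤ h := hX ▸ Finset.card_le_card (Finset.inter_subset_left)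
  have hcard1 : (X \ Y).card = h - i := by
    have := Finset.card_sdiff_add_card_inter X Y
    omega
  have hcard2 : ((X ∪ Y)ᶜ : Finset V).card = Fintype.card V - (2 * h - i) := by
    rw [Finset.card_compl]
    have := Finset.card_union_add_card_inter X Y
    omega
  rw [← hcard1, ← hcard2, ← Finset.card_powersetCard, ← Finset.card_powersetCard,
    ← Finset.card_product]
  refine Finset.card_bij' (fun A _ => ((X ∩ A) \ Y, A \ (X ∪ Y)))
    (fun p _ => Y ∪ p.1 ∪ p.2) ?_ ?_ ?_ ?_
  · -- forward membership
    intro A hA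
    simp only [Finset.mem_filter, Finset.mem_powersetCard] at hA
    obtain ⟨⟨-, hAk⟩, hYA, hXAj⟩ := hA
    have e1 : (X ∩ A) ∩ Y = X ∩ Y := by
      ext z
      simp only [Finset.mem_inter]
      exact ⟨fun ⟨⟨a, _⟩, c⟩ => ⟨a, c⟩, fun ⟨a, c⟩ => ⟨⟨a, hYA c⟩, c⟩⟩
    have c1 : ((X ∩ A) \ Y).card = j - i := by
      have := Finset.card_sdiff_add_card_inter (X ∩ A) Y
      rw [e1, hXAj] at this
      omega
    have e2 : A ∩ (X ∪ Y) = (X ∩ A) ∪ Y := by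
      ext z
      simp only [Finset.mem_inter, Finset.mem_union]
      constructor
      · rintro ⟨hzA, hz | hz⟩
        · exact Or.inl ⟨hz, hzA⟩
        · exact Or.inr hz
      · rintro (⟨hz1, hz2⟩ | hz)
        · exact ⟨hz2, Or.inl hz1⟩
        · exact ⟨hYA hz, Or.inr hz⟩
    have c2 : (A \ (X ∪ Y)).card = k - h - (j - i) := by
      have t1 := Finset.card_sdiff_add_card_inter A (X ∪ Y)
      have t2 := Finset.card_union_add_card_inter (X ∩ A) Y
      rw [e2] at t1
      rw [e1] at t2
      have t3 : ((X ∩ A) ∪ Y).card ≤ A.card :=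
        Finset.card_le_card (Finset.union_subset (Finset.inter_subset_right) hYA)
      omega
    simp only [Finset.mem_product, Finset.mem_powersetCard]
    exact ⟨⟨Finset.sdiff_subset_sdiff (Finset.inter_subset_left) (le_refl _), c1⟩,
      ⟨fun z hz => Finset.mem_compl.mpr (Finset.mem_sdiff.mp hz).2, c2⟩⟩
  · -- backward membership
    rintro ⟨T, R⟩ hp
    simp only [Finset.mem_product, Finset.mem_powersetCard] at hp
    obtain ⟨⟨hT, hTc⟩, hR, hRc⟩ := hp
    have hTX : ∀ z ∈ T, z ∈ X ∧ z ∉ Y := fun z hz => Finset.mem_sdiff.mp (hT hz)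
    have hRXY : ∀ z ∈ R, z ∉ X ∧ z ∉ Y := by
      intro z hz
      have := Finset.mem_compl.mp (hR hz)
      simp only [Finset.mem_union] at this
      tauto
    have d1 : Disjoint Y T := Finset.disjoint_left.mpr fun z hz hzT => (hTX z hzT).2 hz
    have d2 : Disjoint (Y ∪ T) R := Finset.disjoint_left.mpr (by
      intro z hz hzR
      rcases Finset.mem_union.mp hz with hz | hz
      · exact (hRXY z hzR).2 hz
      · exact (hRXY z hzR).1 (hTX z hz).1)
    have cardA : (Y ∪ T ∪ R).card = k := by
      rw [Finset.card_union_of_disjoint d2, Finset.card_union_of_disjoint d1, hY, hTc, hRc]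
      omega
    have eXA : X ∩ (Y ∪ T ∪ R) = (X ∩ Y) ∪ T := by
      ext z
      simp only [Finset.mem_inter, Finset.mem_union]
      constructor
      · rintro ⟨hzX, (hz | hz) | hz⟩
        · exact Or.inl ⟨hzX, hz⟩
        · exact Or.inr hz
        · exact absurd hzX (hRXY z hz).1
      · rintro (⟨hz1, hz2⟩ | hz)
        · exact ⟨hz1, Or.inl (Or.inl hz2)⟩
        · exact ⟨(hTX z hz).1, Or.inl (Or.inr hz)⟩
    have cardXA : (X ∩ (Y ∪ T ∪ R)).card = j := by
      rw [eXA, Finset.card_union_of_disjoint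
        (Finset.disjoint_left.mpr fun z hz hzT => (hTX z hzT).2 (Finset.mem_inter.mp hz).2),
        hTc]
      omega
    simp only [Finset.mem_filter, Finset.mem_powersetCard]
    exact ⟨⟨Finset.subset_univ _, cardA⟩,
      fun z hz => Finset.mem_union.mpr (Or.inl (Finset.mem_union.mpr (Or.inl hz))), cardXA⟩
  · -- left inverse
    intro A hA
    simp only [Finset.mem_filter, Finset.mem_powersetCard] at hA
    obtain ⟨⟨-, hAk⟩, hYA, -⟩ := hA
    ext z
    simp only [Finset.mem_union, Finset.mem_sdiff, Finset.mem_inter]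
    constructor
    · rintro ((hz | ⟨⟨_, hz⟩, _⟩) | ⟨hz, _⟩)
      · exact hYA hz
      · exact hz
      · exact hz
    · intro hz
      by_cases hzY : z ∈ Y
      · exact Or.inl (Or.inl hzY)
      · by_cases hzX : z ∈ X
        · exact Or.inl (Or.inr ⟨⟨hzX, hz⟩, hzY⟩)
        · exact Or.inr ⟨hz, by simp [hzX, hzY]⟩
  · -- right inverse
    rintro ⟨T, R⟩ hp
    simp only [Finset.mem_product, Finset.mem_powersetCard] at hp
    obtain ⟨⟨hT, -⟩, hR, -⟩ := hp
    have hTX : ∀ z ∈ T, z ∈ X ∧ z ∉ Y := fun z hz => Finset.mem_sdiff.mp (hT hz)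
    have hRXY : ∀ z ∈ R, z ∉ X ∧ z ∉ Y := by
      intro z hz
      have := Finset.mem_compl.mp (hR hz)
      simp only [Finset.mem_union] at this
      tauto
    have e1 : (X ∩ (Y ∪ T ∪ R)) \ Y = T := by
      ext z
      simp only [Finset.mem_sdiff, Finset.mem_inter, Finset.mem_union]
      constructor
      · rintro ⟨⟨hzX, (hz | hz) | hz⟩, hzY⟩
        · exact absurd hz hzY
        · exact hz
        · exact absurd hzX (hRXY z hz).1
      · intro hz
        exact ⟨⟨(hTX z hz).1, Or.inl (Or.inr hz)⟩, (hTX z hz).2⟩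
    have e2 : (Y ∪ T ∪ R) \ (X ∪ Y) = R := by
      ext z
      simp only [Finset.mem_sdiff, Finset.mem_union, not_or]
      constructor
      · rintro ⟨(hz | hz) | hz, hzX, hzY⟩
        · exact absurd hz hzY
        · exact absurd (hTX z hz).1 hzX
        · exact hz
      · intro hz
        exact ⟨Or.inr hz, (hRXY z hz).1, (hRXY z hz).2⟩
    show ((X ∩ (Y ∪ T ∪ R)) \ Y, (Y ∪ T ∪ R) \ (X ∪ Y)) = (T, R)
    rw [e1, e2]

lemma count_zero {h k : ℕ} (X Y : Finset V) (hY : Y.card = h) (j : ℕ)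
    (hjk : k - h < j - (X ∩ Y).card) :
    ((Finset.univ.powersetCard k).filter fun A => Y ⊆ A ∧ (X ∩ A).card = j).card = 0 := by
  rw [Finset.card_eq_zero, Finset.filter_eq_empty_iff]
  intro A hA
  simp only [Finset.mem_powersetCard] at hA
  rintro ⟨hYA, hXAj⟩
  have e1 : (X ∩ A) ∩ Y = X ∩ Y := by
    ext z
    simp only [Finset.mem_inter]
    exact ⟨fun ⟨⟨a, _⟩, c⟩ => ⟨a, c⟩, fun ⟨a, c⟩ => ⟨⟨a, hYA c⟩, c⟩⟩
  have c1 := Finset.card_sdiff_add_card_inter (X ∩ A) Y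
  rw [e1, hXAj] at c1
  have c2 := Finset.card_sdiff_add_card_inter A Y
  rw [Finset.inter_eq_right.mpr hYA, hY, hA.2] at c2
  have c3 : ((X ∩ A) \ Y).card ≤ (A \ Y).card :=
    Finset.card_le_card (Finset.sdiff_subset_sdiff (Finset.inter_subset_right) (le_refl _))
  omega

def cFun (n h k : ℕ) (i j : ℕ) : ℕ :=
  if j - i ≤ k - h then (h - i).choose (j - i) * (n - (2 * h - i)).choose (k - h - (j - i))
  else 0

noncomputable def fAux (n h k : ℕ) : ℕ → ℝ
  | m => ((if m = 0 then (1:ℝ) else 0)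
      - ∑ m' ∈ (Finset.range m).attach, (cFun n h k (h - m) (h - m'.1) : ℝ) * fAux n h k m'.1)
      / (cFun n h k (h - m) (h - m) : ℝ)
termination_by m => m
decreasing_by exact Finset.mem_range.mp m'.2

noncomputable def fFun (n h k : ℕ) (j : ℕ) : ℝ := fAux n h k (h - j)

lemma cFun_diag (n h k i : ℕ) : cFun n h k i i = (n - (2 * h - i)).choose (k - h) := by
  simp [cFun]

lemma triangular (n h k : ℕ) (hdiag : ∀ i ≤ h, cFun n h k i i ≠ 0) (i : ℕ) (hih : i ≤ h) :
    ∑ j ∈ Finset.Icc i h, (cFun n h k i j : ℝ) * fFun n h k j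
      = if i = h then 1 else 0 := by
  set m := h - i with hm
  have him : h - m = i := by omega
  have step1 : ∑ j ∈ Finset.Icc i h, (cFun n h k i j : ℝ) * fFun n h k j
      = ∑ m' ∈ Finset.range (m + 1), (cFun n h k i (h - m') : ℝ) * fAux n h k m' := by
    refine Finset.sum_nbij' (fun j => h - j) (fun m' => h - m') ?_ ?_ ?_ ?_ ?_
    · intro j hj
      simp only [Finset.mem_Icc] at hj
      simp only [Finset.mem_range]
      omega
    · intro m' hm'
      simp only [Finset.mem_range] at hm'
      simp only [Finset.mem_Icc]
      omega
    · intro j hj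
      simp only [Finset.mem_Icc] at hj
      omega
    · intro m' hm'
      simp only [Finset.mem_range] at hm'
      omega
    · intro j hj
      simp only [Finset.mem_Icc] at hj
      have hjj : h - (h - j) = j := by omega
      simp only [fFun, hjj]
  rw [step1, Finset.sum_range_succ]
  have hne : (cFun n h k i i : ℝ) ≠ 0 := by
    exact_mod_cast hdiag i hih
  have key : (cFun n h k i (h - m) : ℝ) * fAux n h k m
      = (if m = 0 then (1:ℝ) else 0)
        - ∑ m' ∈ Finset.range m, (cFun n h k (h - m) (h - m') : ℝ) * fAux n h k m' := by
    conv_lhs => rw [fAux]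
    rw [him, mul_comm, div_mul_cancel₀ _ hne]
    congr 1
    exact Finset.sum_attach (Finset.range m)
      (fun m' => (cFun n h k i (h - m') : ℝ) * fAux n h k m')
  rw [key, him]
  have hiff : (m = 0) = (i = h) := by
    simp only [eq_iff_iff]
    omega
  simp only [hiff]
  ring

lemma inner_sum_eq {h k : ℕ} (hhk : h ≤ k) (hkn : k + h ≤ Fintype.card V)
    (X₀ Y : {s : Finset V // s.card = h}) :
    ∑ A : {s : Finset V // s.card = k},
        (if Y.1 ⊆ A.1 then (1:ℝ) else 0) * fFun (Fintype.card V) h k ((X₀.1 ∩ A.1).card)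
      = if Y = X₀ then 1 else 0 := by
  set n := Fintype.card V with hn
  set i₀ := (X₀.1 ∩ Y.1).card with hi₀
  have hi₀h : i₀ ≤ h := X₀.2 ▸ Finset.card_le_card (Finset.inter_subset_left)
  have step1 : ∑ A : {s : Finset V // s.card = k},
      (if Y.1 ⊆ A.1 then (1:ℝ) else 0) * fFun n h k ((X₀.1 ∩ A.1).card)
      = ∑ A ∈ Finset.univ.powersetCard k,
          (if Y.1 ⊆ A then (1:ℝ) else 0) * fFun n h k ((X₀.1 ∩ A).card) := by
    refine (Finset.sum_subtype (p := fun s => s.card = k) (Finset.univ.powersetCard k)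
      (fun A => ?_)
      (fun A => (if Y.1 ⊆ A then (1:ℝ) else 0) * fFun n h k ((X₀.1 ∩ A).card))).symm
    simp [Finset.mem_powersetCard]
  rw [step1]
  have step2 : ∑ A ∈ Finset.univ.powersetCard k,
      (if Y.1 ⊆ A then (1:ℝ) else 0) * fFun n h k ((X₀.1 ∩ A).card)
      = ∑ A ∈ (Finset.univ.powersetCard k).filter (fun A => Y.1 ⊆ A),
          fFun n h k ((X₀.1 ∩ A).card) := by
    rw [Finset.sum_filter]
    exact Finset.sum_congr rfl fun A _ => by rw [ite_mul, one_mul, zero_mul]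
  rw [step2]
  have maps : ∀ A ∈ (Finset.univ.powersetCard k).filter (fun A => Y.1 ⊆ A),
      (X₀.1 ∩ A).card ∈ Finset.Icc i₀ h := by
    intro A hA
    simp only [Finset.mem_filter, Finset.mem_powersetCard] at hA
    rw [Finset.mem_Icc]
    constructor
    · exact Finset.card_le_card (Finset.inter_subset_inter (le_refl _) hA.2)
    · exact le_trans (Finset.card_le_card (Finset.inter_subset_left)) (le_of_eq X₀.2)
  rw [← Finset.sum_fiberwise_of_maps_to maps (fun A => fFun n h k ((X₀.1 ∩ A).card))]
  have step3 : ∀ j ∈ Finset.Icc i₀ h,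
      ∑ A ∈ ((Finset.univ.powersetCard k).filter (fun A => Y.1 ⊆ A)).filter
          (fun A => (X₀.1 ∩ A).card = j), fFun n h k ((X₀.1 ∩ A).card)
        = (cFun n h k i₀ j : ℝ) * fFun n h k j := by
    intro j hj
    rw [Finset.mem_Icc] at hj
    rw [Finset.filter_filter]
    have : ∀ A ∈ (Finset.univ.powersetCard k).filter
        (fun A => Y.1 ⊆ A ∧ (X₀.1 ∩ A).card = j),
        fFun n h k ((X₀.1 ∩ A).card) = fFun n h k j := by
      intro A hA
      rw [(Finset.mem_filter.mp hA).2.2]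
    rw [Finset.sum_congr rfl this, Finset.sum_const, nsmul_eq_mul]
    congr 1
    by_cases hc : j - i₀ ≤ k - h
    · rw [count_formula X₀.1 Y.1 X₀.2 Y.2 hhk j hj.1 hj.2 hc]
      rw [cFun]
      simp only [hc, if_true]
      rfl
    · rw [count_zero X₀.1 Y.1 Y.2 j (by omega)]
      rw [cFun]
      simp [hc]
  rw [Finset.sum_congr rfl step3]
  have hdiag : ∀ i ≤ h, cFun n h k i i ≠ 0 := by
    intro i hi
    rw [cFun_diag]
    exact (Nat.choose_pos (by omega)).ne'
  rw [triangular n h k hdiag i₀ hi₀h]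
  congr 1
  simp only [eq_iff_iff]
  constructor
  · intro hih
    have hsub : X₀.1 ∩ Y.1 = X₀.1 :=
      Finset.eq_of_subset_of_card_le (Finset.inter_subset_left) (by rw [X₀.2, ← hi₀]; exact hih.ge)
    have hsub2 : X₀.1 ⊆ Y.1 := by
      rw [← hsub]
      exact Finset.inter_subset_right
    have : Y.1 = X₀.1 :=
      (Finset.eq_of_subset_of_card_le hsub2 (by rw [X₀.2, Y.2])).symm
    exact Subtype.ext this
  · rintro rfl
    rw [hi₀, Finset.inter_self, Y.2]

lemma S_inj {h k : ℕ} (hhk : h ≤ k) (hkn : k + h ≤ Fintype.card V)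
    (S : Matrix {s : Finset V // s.card = k} {s : Finset V // s.card = h} ℝ)
    (hS : ∀ A X, S A X = if X.1 ⊆ A.1 then 1 else 0)
    (v : {s : Finset V // s.card = h} → ℝ) (hv : S.mulVec v = 0) : v = 0 := by
  set n := Fintype.card V with hn
  funext X₀
  have expand : ∀ A : {s : Finset V // s.card = k}, S.mulVec v A
      = ∑ Y, (if Y.1 ⊆ A.1 then (1:ℝ) else 0) * v Y := fun A => by
    simp [Matrix.mulVec, dotProduct, hS]
  have h1 : ∑ A : {s : Finset V // s.card = k},
      fFun n h k ((X₀.1 ∩ A.1).card) * S.mulVec v A = 0 := by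
    simp [hv]
  have h2 : ∑ A : {s : Finset V // s.card = k},
      fFun n h k ((X₀.1 ∩ A.1).card) * S.mulVec v A
      = ∑ Y : {s : Finset V // s.card = h},
          (∑ A : {s : Finset V // s.card = k},
            (if Y.1 ⊆ A.1 then (1:ℝ) else 0) * fFun n h k ((X₀.1 ∩ A.1).card)) * v Y := by
    calc ∑ A : {s : Finset V // s.card = k},
        fFun n h k ((X₀.1 ∩ A.1).card) * S.mulVec v A
        = ∑ A : {s : Finset V // s.card = k}, ∑ Y : {s : Finset V // s.card = h},
            (if Y.1 ⊆ A.1 then (1:ℝ) else 0) * fFun n h k ((X₀.1 ∩ A.1).card) * v Y := by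
          refine Finset.sum_congr rfl fun A _ => ?_
          rw [expand, Finset.mul_sum]
          exact Finset.sum_congr rfl fun Y _ => by ring
      _ = ∑ Y : {s : Finset V // s.card = h}, ∑ A : {s : Finset V // s.card = k},
            (if Y.1 ⊆ A.1 then (1:ℝ) else 0) * fFun n h k ((X₀.1 ∩ A.1).card) * v Y :=
          Finset.sum_comm
      _ = _ := Finset.sum_congr rfl fun Y _ => (Finset.sum_mul _ _ _).symm
  rw [h2] at h1
  rw [Finset.sum_congr rfl (fun Y _ => by rw [inner_sum_eq hhk hkn X₀ Y])] at h1
  simp only [ite_mul, one_mul, zero_mul, Finset.sum_ite_eq', Finset.mem_univ, if_true] at h1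
  exact h1

theorem token_laplacian_eigenvector_lift (n h k : ℕ) (G : SimpleGraph (Fin n))
    (hh : 1 ≤ h) (hhk : h ≤ k) (hkn : k ≤ n - h)
    (S : Matrix {s : Finset (Fin n) // s.card = k} {s : Finset (Fin n) // s.card = h} ℝ)
    (hS : ∀ A X, S A X = if X.1 ⊆ A.1 then 1 else 0) :
    (∀ (lam : ℝ) (v : {s : Finset (Fin n) // s.card = h} → ℝ), v ≠ 0 →
      ((tokenGraph G h).lapMatrix ℝ).mulVec v = lam • v →
      S.mulVec v ≠ 0 ∧
        ((tokenGraph G k).lapMatrix ℝ).mulVec (S.mulVec v) = lam • S.mulVec v) ∧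
    (∀ lam : ℝ,
      (∃ v : {s : Finset (Fin n) // s.card = h} → ℝ, v ≠ 0 ∧
        ((tokenGraph G h).lapMatrix ℝ).mulVec v = lam • v) →
      ∃ w : {s : Finset (Fin n) // s.card = k} → ℝ, w ≠ 0 ∧
        ((tokenGraph G k).lapMatrix ℝ).mulVec w = lam • w) := by
  have hn' : k + h ≤ Fintype.card (Fin n) := by
    rw [Fintype.card_fin]
    omega
  have part1 : ∀ (lam : ℝ) (v : {s : Finset (Fin n) // s.card = h} → ℝ), v ≠ 0 →
      ((tokenGraph G h).lapMatrix ℝ).mulVec v = lam • v →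
      S.mulVec v ≠ 0 ∧
        ((tokenGraph G k).lapMatrix ℝ).mulVec (S.mulVec v) = lam • S.mulVec v := by
    intro lam v hv0 hev
    constructor
    · intro hzero
      exact hv0 (S_inj hhk hn' S hS v hzero)
    · rw [lap_comm S hS v, hev, Matrix.mulVec_smul]
  exact ⟨part1, fun lam ⟨v, hv0, hev⟩ =>
    ⟨S.mulVec v, (part1 lam v hv0 hev).1, (part1 lam v hv0 hev).2⟩⟩
end

section
/- For every graph G on n vertices and every 1 ≤ k ≤ ⌊n/2⌋, the k-algebraic connectivity satisfies α_k(G) ≤ k(n−k+1), and the k-spectral radius satisfies ρ_k(G) ≤ k(n−k+1). -/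
open Finset
open scoped Classical

noncomputable def lapSpec {W : Type*} [Fintype W] [DecidableEq W] (H : SimpleGraph W) :
    Multiset ℝ :=
  (H.lapMatrix ℝ).charpoly.roots

namespace TokenAux

open Matrix

variable {n k : ℕ}

/-- Adjacency in the token graph of the complete graph. -/
lemma top_adj_iff (hk : 1 ≤ k) (A B : {s : Finset (Fin n) // s.card = k}) :
    (tokenGraph (⊤ : SimpleGraph (Fin n)) k).Adj A B ↔ (A.1 ∩ B.1).card = k - 1 := by
  constructor
  · rintro ⟨a, b, hab, h1, h2⟩
    have h := Finset.card_sdiff_add_card_inter A.1 B.1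
    rw [h1, A.2, Finset.card_singleton] at h
    omega
  · intro h
    have hA := Finset.card_sdiff_add_card_inter A.1 B.1
    have hB := Finset.card_sdiff_add_card_inter B.1 A.1
    rw [Finset.inter_comm] at hB
    rw [h, A.2] at hA
    rw [h, B.2] at hB
    obtain ⟨a, ha⟩ := Finset.card_eq_one.mp (show (A.1 \ B.1).card = 1 by omega)
    obtain ⟨b, hb⟩ := Finset.card_eq_one.mp (show (B.1 \ A.1).card = 1 by omega)
    have haA : a ∈ A.1 \ B.1 := ha ▸ Finset.mem_singleton_self a
    have hbB : b ∈ B.1 \ A.1 := hb ▸ Finset.mem_singleton_self b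
    refine ⟨a, b, ?_, ha, hb⟩
    simp only [SimpleGraph.top_adj]
    rintro rfl
    exact (Finset.mem_sdiff.mp haA).2 (Finset.mem_sdiff.mp hbB).1

/-- Degree in the token graph of the complete graph. -/
lemma top_degree (hk : 1 ≤ k) (A : {s : Finset (Fin n) // s.card = k}) :
    (tokenGraph (⊤ : SimpleGraph (Fin n)) k).degree A = k * (n - k) := by
  classical
  have : ((A.1 ×ˢ A.1ᶜ).card) =
      ((tokenGraph (⊤ : SimpleGraph (Fin n)) k).neighborFinset A).card := by
    refine Finset.card_bij (fun p hp => (⟨insert p.2 (A.1.erase p.1), ?_⟩ :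
        {s : Finset (Fin n) // s.card = k})) ?_ ?_ ?_
    · -- card
      obtain ⟨hp1, hp2⟩ := Finset.mem_product.mp hp
      rw [Finset.mem_compl] at hp2
      rw [Finset.card_insert_of_notMem (fun hx => hp2 (Finset.mem_of_mem_erase hx)),
        Finset.card_erase_of_mem hp1, A.2]
      omega
    · -- maps to neighbors
      rintro ⟨a, b⟩ hp
      obtain ⟨hp1, hp2⟩ := Finset.mem_product.mp hp
      rw [Finset.mem_compl] at hp2
      rw [SimpleGraph.mem_neighborFinset]
      refine ⟨a, b, ?_, ?_, ?_⟩
      · simp only [SimpleGraph.top_adj]; rintro rfl; exact hp2 hp1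
      · ext x
        simp only [Finset.mem_sdiff, Finset.mem_insert, Finset.mem_erase,
          Finset.mem_singleton]
        constructor
        · rintro ⟨hxA, hx⟩
          by_contra hxa
          exact hx (Or.inr ⟨hxa, hxA⟩)
        · rintro rfl
          refine ⟨hp1, ?_⟩
          rintro (rfl | ⟨hxa, hxA⟩)
          · exact hp2 hp1
          · exact hxa rfl
      · ext x
        simp only [Finset.mem_sdiff, Finset.mem_insert, Finset.mem_erase,
          Finset.mem_singleton]
        constructor
        · rintro ⟨rfl | ⟨hxa, hxA⟩, hx⟩
          · rfl
          · exact absurd hxA hx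
        · rintro rfl
          exact ⟨Or.inl rfl, hp2⟩
    · -- injective
      rintro ⟨a, b⟩ hp ⟨a', b'⟩ hp' heq
      obtain ⟨hp1, hp2⟩ := Finset.mem_product.mp hp
      obtain ⟨hp1', hp2'⟩ := Finset.mem_product.mp hp'
      rw [Finset.mem_compl] at hp2 hp2'
      have heq' : insert b (A.1.erase a) = insert b' (A.1.erase a') :=
        congrArg Subtype.val heq
      have hbb : b = b' := by
        have : b ∈ insert b' (A.1.erase a') := heq' ▸ Finset.mem_insert_self b _
        rcases Finset.mem_insert.mp this with h | h
        · exact h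
        · exact absurd (Finset.mem_of_mem_erase h) hp2
      subst hbb
      have hsets : A.1.erase a = A.1.erase a' := by
        ext x
        constructor
        · intro hx
          have hxA := Finset.mem_of_mem_erase hx
          have : x ∈ insert b (A.1.erase a') := heq' ▸ Finset.mem_insert_of_mem hx
          rcases Finset.mem_insert.mp this with h | h
          · exact absurd (h ▸ hxA) hp2
          · exact h
        · intro hx
          have hxA := Finset.mem_of_mem_erase hx
          have : x ∈ insert b (A.1.erase a) := heq' ▸ Finset.mem_insert_of_mem hx
          rcases Finset.mem_insert.mp this with h | h
          · exact absurd (h ▸ hxA) hp2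
          · exact h
      have : a = a' := by
        by_contra hne
        have ha' : a ∈ A.1.erase a' := Finset.mem_erase.mpr ⟨hne, hp1⟩
        rw [← hsets] at ha'
        exact Finset.notMem_erase a A.1 ha'
      simp [this]
    · -- surjective
      intro B hB
      rw [SimpleGraph.mem_neighborFinset] at hB
      obtain ⟨a, b, hab, h1, h2⟩ := hB
      have haA : a ∈ A.1 ∧ a ∉ B.1 := by
        have : a ∈ A.1 \ B.1 := h1 ▸ Finset.mem_singleton_self a
        exact Finset.mem_sdiff.mp this
      have hbB : b ∈ B.1 ∧ b ∉ A.1 := by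
        have : b ∈ B.1 \ A.1 := h2 ▸ Finset.mem_singleton_self b
        exact Finset.mem_sdiff.mp this
      refine ⟨(a, b), Finset.mem_product.mpr ⟨haA.1, Finset.mem_compl.mpr hbB.2⟩, ?_⟩
      apply Subtype.ext
      show insert b (A.1.erase a) = B.1
      ext x
      simp only [Finset.mem_insert, Finset.mem_erase]
      constructor
      · rintro (rfl | ⟨hxa, hxA⟩)
        · exact hbB.1
        · by_contra hxB
          have : x ∈ A.1 \ B.1 := Finset.mem_sdiff.mpr ⟨hxA, hxB⟩
          exact hxa (Finset.mem_singleton.mp (h1 ▸ this))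
      · intro hxB
        by_cases hxA : x ∈ A.1
        · right
          refine ⟨?_, hxA⟩
          rintro rfl
          exact haA.2 hxB
        · left
          have : x ∈ B.1 \ A.1 := Finset.mem_sdiff.mpr ⟨hxB, hxA⟩
          exact Finset.mem_singleton.mp (h2 ▸ this)
  rw [SimpleGraph.degree, ← this, Finset.card_product, A.2, Finset.card_compl,
    Fintype.card_fin, A.2]

/-- Inclusion matrix of `(k-1)`-subsets into `k`-subsets. -/
noncomputable def Wmat (n k : ℕ) :
    Matrix {s : Finset (Fin n) // s.card = k} {s : Finset (Fin n) // s.card = k - 1} ℝ :=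
  Matrix.of fun A S => if S.1 ⊆ A.1 then 1 else 0

lemma WW_apply (A B : {s : Finset (Fin n) // s.card = k}) :
    (Wmat n k * (Wmat n k)ᵀ) A B = (((A.1 ∩ B.1).card.choose (k - 1) : ℝ)) := by
  classical
  rw [Matrix.mul_apply]
  have h1 : ∀ S : {s : Finset (Fin n) // s.card = k - 1},
      Wmat n k A S * (Wmat n k)ᵀ S B = if S.1 ⊆ A.1 ∩ B.1 then (1 : ℝ) else 0 := by
    intro S
    simp only [Wmat, Matrix.transpose_apply, Matrix.of_apply, Finset.subset_inter_iff]
    by_cases h1 : S.1 ⊆ A.1 <;> by_cases h2 : S.1 ⊆ B.1 <;> simp [h1, h2]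
  simp_rw [h1]
  rw [Finset.sum_boole]
  congr 1
  rw [← Finset.card_powersetCard (k - 1) (A.1 ∩ B.1)]
  refine Finset.card_bij (fun S _ => S.1) ?_ ?_ ?_
  · intro S hS
    rw [Finset.mem_filter] at hS
    rw [Finset.mem_powersetCard]
    exact ⟨hS.2, S.2⟩
  · intro S hS T hT h
    exact Subtype.ext h
  · intro s hs
    rw [Finset.mem_powersetCard] at hs
    exact ⟨⟨s, hs.2⟩, Finset.mem_filter.mpr ⟨Finset.mem_univ _, hs.1⟩, rfl⟩

/-- The key matrix identity: `L(J(n,k)) + W Wᵀ = k(n-k+1) I`. -/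
lemma key_identity (hk : 1 ≤ k) (hkn : k ≤ n) :
    (tokenGraph (⊤ : SimpleGraph (Fin n)) k).lapMatrix ℝ + Wmat n k * (Wmat n k)ᵀ
      = ((k : ℝ) * ((n : ℝ) - k + 1)) • (1 : Matrix _ _ ℝ) := by
  classical
  ext A B
  rw [Matrix.add_apply, WW_apply, SimpleGraph.lapMatrix, Matrix.sub_apply,
    SimpleGraph.degMatrix, Matrix.smul_apply]
  by_cases hAB : A = B
  · subst hAB
    rw [Matrix.diagonal_apply_eq, top_degree hk A, SimpleGraph.adjMatrix_apply,
      if_neg (tokenGraph _ k).irrefl, Matrix.one_apply_eq, Finset.inter_self, A.2]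
    have hch : k.choose (k - 1) = k := by
      have h1 : k - (k - 1) = 1 := by omega
      rw [← Nat.choose_symm (Nat.sub_le k 1), h1, Nat.choose_one_right]
    rw [hch]
    have hcast : ((k * (n - k) : ℕ) : ℝ) = (k : ℝ) * ((n : ℝ) - k) := by
      push_cast [Nat.cast_sub hkn]
      ring
    rw [hcast, smul_eq_mul]
    ring
  · rw [Matrix.diagonal_apply_ne _ hAB, Matrix.one_apply_ne hAB, SimpleGraph.adjMatrix_apply,
      smul_zero]
    by_cases hadj : (tokenGraph (⊤ : SimpleGraph (Fin n)) k).Adj A B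
    · rw [if_pos hadj]
      have hcard := (top_adj_iff hk A B).mp hadj
      rw [hcard, Nat.choose_self]
      ring
    · rw [if_neg hadj]
      have hcard : (A.1 ∩ B.1).card ≠ k - 1 := fun h => hadj ((top_adj_iff hk A B).mpr h)
      have hlt : (A.1 ∩ B.1).card < k := by
        have hle : (A.1 ∩ B.1).card ≤ A.1.card :=
          Finset.card_le_card Finset.inter_subset_left
        rw [A.2] at hle
        rcases lt_or_eq_of_le hle with h | h
        · exact h
        · exfalso
          have h1 : A.1 ∩ B.1 = A.1 :=
            Finset.eq_of_subset_of_card_le Finset.inter_subset_left (by rw [A.2, h])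
          have h2 : A.1 ⊆ B.1 := by rw [← h1]; exact Finset.inter_subset_right
          have : A.1 = B.1 := Finset.eq_of_subset_of_card_le h2 (by rw [A.2, B.2])
          exact hAB (Subtype.ext this)
      rw [Nat.choose_eq_zero_of_lt (by omega)]
      ring

/-- Laplacians of token graphs of `G` and `Gᶜ` add up to that of the complete graph. -/
lemma lap_add (G : SimpleGraph (Fin n)) (hk : 1 ≤ k) :
    (tokenGraph G k).lapMatrix ℝ + (tokenGraph Gᶜ k).lapMatrix ℝ
      = (tokenGraph (⊤ : SimpleGraph (Fin n)) k).lapMatrix ℝ := by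
  classical
  have hind : ∀ A B : {s : Finset (Fin n) // s.card = k},
      ((if (tokenGraph G k).Adj A B then (1 : ℝ) else 0) +
        (if (tokenGraph Gᶜ k).Adj A B then (1 : ℝ) else 0)) =
      (if (tokenGraph (⊤ : SimpleGraph (Fin n)) k).Adj A B then (1 : ℝ) else 0) := by
    intro A B
    by_cases hG : (tokenGraph G k).Adj A B
    · obtain ⟨a, b, hab, h1, h2⟩ := hG
      have hnc : ¬ (tokenGraph Gᶜ k).Adj A B := by
        rintro ⟨a', b', hab', h1', h2'⟩
        have ha : a = a' := by
          have := h1.symm.trans h1'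
          exact Finset.singleton_injective this
        have hb : b = b' := by
          have := h2.symm.trans h2'
          exact Finset.singleton_injective this
        subst ha; subst hb
        exact hab'.2 hab
      have htop : (tokenGraph (⊤ : SimpleGraph (Fin n)) k).Adj A B :=
        ⟨a, b, by simp [hab.ne], h1, h2⟩
      rw [if_pos ⟨a, b, hab, h1, h2⟩, if_neg hnc, if_pos htop]
      ring
    · by_cases hC : (tokenGraph Gᶜ k).Adj A B
      · obtain ⟨a, b, hab, h1, h2⟩ := hC
        have htop : (tokenGraph (⊤ : SimpleGraph (Fin n)) k).Adj A B :=
          ⟨a, b, by simp [hab.1], h1, h2⟩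
        rw [if_neg hG, if_pos ⟨a, b, hab, h1, h2⟩, if_pos htop]
        ring
      · have hnt : ¬ (tokenGraph (⊤ : SimpleGraph (Fin n)) k).Adj A B := by
          rintro ⟨a, b, hab, h1, h2⟩
          simp only [SimpleGraph.top_adj] at hab
          by_cases hGab : G.Adj a b
          · exact hG ⟨a, b, hGab, h1, h2⟩
          · exact hC ⟨a, b, ⟨hab, hGab⟩, h1, h2⟩
        rw [if_neg hG, if_neg hC, if_neg hnt]
        ring
  ext A B
  simp only [SimpleGraph.lapMatrix, Matrix.sub_apply, Matrix.add_apply,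
    SimpleGraph.degMatrix, SimpleGraph.adjMatrix_apply]
  by_cases hAB : A = B
  · subst hAB
    simp only [Matrix.diagonal_apply_eq]
    have hd : ((tokenGraph G k).degree A : ℝ) + ((tokenGraph Gᶜ k).degree A : ℝ)
        = ((tokenGraph (⊤ : SimpleGraph (Fin n)) k).degree A : ℝ) := by
      rw [SimpleGraph.degree_eq_sum_if_adj, SimpleGraph.degree_eq_sum_if_adj,
        SimpleGraph.degree_eq_sum_if_adj, ← Finset.sum_add_distrib]
      exact Finset.sum_congr rfl fun B _ => hind A B
    rw [if_neg ((tokenGraph G k).irrefl), if_neg ((tokenGraph Gᶜ k).irrefl),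
      if_neg ((tokenGraph (⊤ : SimpleGraph (Fin n)) k).irrefl)]
    push_cast at hd ⊢
    linarith
  · simp only [Matrix.diagonal_apply_ne _ hAB]
    have := hind A B
    linarith [hind A B]

lemma spec_bound (G : SimpleGraph (Fin n)) (hk : 1 ≤ k) (hkn : k ≤ n)
    {x : ℝ} (hx : x ∈ lapSpec (tokenGraph G k)) : x ≤ (k : ℝ) * ((n : ℝ) - k + 1) := by
  classical
  set M := (tokenGraph G k).lapMatrix ℝ with hMdef
  have hroot : M.charpoly.IsRoot x := (Polynomial.mem_roots'.mp hx).2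
  have hdet : (Matrix.scalar _ x - M).det = 0 := by
    have h := hroot
    rw [Polynomial.IsRoot, Matrix.charpoly, eval_det, Matrix.matPolyEquiv_charmatrix,
      Polynomial.eval_sub, Polynomial.eval_X, Polynomial.eval_C] at h
    exact h
  obtain ⟨v, hv0, hveq⟩ := Matrix.exists_mulVec_eq_zero_iff.mpr hdet
  have hMv : M *ᵥ v = x • v := by
    rw [Matrix.sub_mulVec, sub_eq_zero] at hveq
    rw [← hveq]
    ext i
    simp [Matrix.scalar, Matrix.mulVec_diagonal]
  have hvvnn : 0 ≤ v ⬝ᵥ v := Finset.sum_nonneg fun i _ => mul_self_nonneg _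
  have hvv : 0 < v ⬝ᵥ v := by
    rcases hvvnn.lt_or_eq with h | h
    · exact h
    · exact absurd (dotProduct_self_eq_zero.mp h.symm) hv0
  have e1 : v ⬝ᵥ (M *ᵥ v) = x * (v ⬝ᵥ v) := by
    rw [hMv, dotProduct_smul, smul_eq_mul]
  have psd1 : 0 ≤ v ⬝ᵥ ((tokenGraph Gᶜ k).lapMatrix ℝ *ᵥ v) := by
    have h := (SimpleGraph.posSemidef_lapMatrix ℝ (tokenGraph Gᶜ k)).dotProduct_mulVec_nonneg v
    rwa [star_trivial] at h
  have hWH : (Wmat n k)ᴴ = (Wmat n k)ᵀ :=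
    Matrix.ext fun i j => star_trivial _
  have psd2 : 0 ≤ v ⬝ᵥ ((Wmat n k * (Wmat n k)ᵀ) *ᵥ v) := by
    have h := (Matrix.posSemidef_self_mul_conjTranspose (Wmat n k)).dotProduct_mulVec_nonneg v
    rwa [star_trivial, hWH] at h
  have hkey : (tokenGraph (⊤ : SimpleGraph (Fin n)) k).lapMatrix ℝ
      = ((k : ℝ) * ((n : ℝ) - k + 1)) • (1 : Matrix _ _ ℝ) - Wmat n k * (Wmat n k)ᵀ :=
    eq_sub_of_add_eq (key_identity hk hkn)
  have htot : v ⬝ᵥ ((tokenGraph (⊤ : SimpleGraph (Fin n)) k).lapMatrix ℝ *ᵥ v)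
      = (k : ℝ) * ((n : ℝ) - k + 1) * (v ⬝ᵥ v)
        - v ⬝ᵥ ((Wmat n k * (Wmat n k)ᵀ) *ᵥ v) := by
    rw [hkey, Matrix.sub_mulVec, dotProduct_sub, Matrix.smul_mulVec,
      Matrix.one_mulVec, dotProduct_smul, smul_eq_mul]
  have hadd : v ⬝ᵥ (M *ᵥ v) + v ⬝ᵥ ((tokenGraph Gᶜ k).lapMatrix ℝ *ᵥ v)
      = v ⬝ᵥ ((tokenGraph (⊤ : SimpleGraph (Fin n)) k).lapMatrix ℝ *ᵥ v) := by
    rw [← dotProduct_add, ← Matrix.add_mulVec, hMdef, lap_add G hk]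
  have hmain : x * (v ⬝ᵥ v) ≤ (k : ℝ) * ((n : ℝ) - k + 1) * (v ⬝ᵥ v) := by
    linarith
  exact le_of_mul_le_mul_right hmain hvv

end TokenAux

theorem k_connectivity_and_radius_bounds (n k : ℕ) (G : SimpleGraph (Fin n))
    (hk : 1 ≤ k) (hkn : k ≤ n / 2) :
    (∀ α : ℝ,
      IsLeast {x : ℝ | x ∈ lapSpec (tokenGraph G k) - lapSpec (tokenGraph G (k - 1))} α →
      α ≤ (k : ℝ) * ((n : ℝ) - k + 1)) ∧
    (∀ ρ : ℝ,
      IsGreatest {x : ℝ | x ∈ lapSpec (tokenGraph G k) - lapSpec (tokenGraph G (k - 1))} ρ →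
      ρ ≤ (k : ℝ) * ((n : ℝ) - k + 1)) := by
  have hkn' : k ≤ n := le_trans hkn (Nat.div_le_self n 2)
  constructor
  · intro α hα
    exact TokenAux.spec_bound G hk hkn' (Multiset.mem_of_le tsub_le_self hα.1)
  · intro ρ hρ
    exact TokenAux.spec_bound G hk hkn' (Multiset.mem_of_le tsub_le_self hρ.1)
end

section
/- Let G be a connected graph with spectral radius ρ(G) and vertex-connectivity κ > 1. For 1 ≤ k < κ, the spectral radius of the k-token graph satisfies ρ(F_k(G)) ≤ k·ρ^{k−1}_M(G), where ρ^{k−1}_M(G) is the maximum spectral radius of G∖U over (k−1)-subsets U of V(G). -/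
open Finset
open scoped Classical

noncomputable def specRad {m : Type*} [Fintype m] (M : Matrix m m ℝ) : ℝ :=
  sSup {μ : ℝ | ∃ v : m → ℝ, v ≠ 0 ∧ M.mulVec v = μ • v}

noncomputable def delSpecRadSet {V : Type*} [Fintype V] [DecidableEq V]
    (G : SimpleGraph V) (k : ℕ) : Set ℝ :=
  {r : ℝ | ∃ U : Finset V, U.card = k ∧
    r = specRad ((G.adjMatrix ℝ).submatrix
      (fun x : {v : V // v ∉ U} => (x : V)) (fun x : {v : V // v ∉ U} => (x : V)))}

/-! ### Spectral lemmas -/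

open Matrix

lemma sum_smul_dotProduct' {m : Type*} [Fintype m] (f : m → ℝ) (v : m → m → ℝ) (w : m → ℝ) :
    (∑ i, f i • v i) ⬝ᵥ w = ∑ i, f i * (v i ⬝ᵥ w) := by
  simp only [dotProduct, Finset.sum_apply, Pi.smul_apply, smul_eq_mul, Finset.sum_mul,
    Finset.mul_sum]
  rw [Finset.sum_comm]
  simp [mul_assoc]

lemma dotProduct_sum_smul' {m : Type*} [Fintype m] (f : m → ℝ) (v : m → m → ℝ) (w : m → ℝ) :
    w ⬝ᵥ (∑ i, f i • v i) = ∑ i, f i * (w ⬝ᵥ v i) := by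
  rw [dotProduct_comm, sum_smul_dotProduct']
  simp [dotProduct_comm]

lemma dotProduct_self_pos {m : Type*} [Fintype m] {v : m → ℝ} (hv : v ≠ 0) : 0 < v ⬝ᵥ v := by
  have h0 : v ⬝ᵥ v ≠ 0 := fun h => hv (dotProduct_self_eq_zero.mp h)
  have h1 : 0 ≤ v ⬝ᵥ v := Finset.sum_nonneg fun i _ => mul_self_nonneg (v i)
  exact lt_of_le_of_ne h1 (Ne.symm h0)

lemma dotProduct_self_nonneg' {m : Type*} [Fintype m] (v : m → ℝ) : 0 ≤ v ⬝ᵥ v :=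
  Finset.sum_nonneg fun i _ => mul_self_nonneg (v i)

section spec
variable {m : Type*} [Fintype m] [DecidableEq m] {M : Matrix m m ℝ} (hM : M.IsHermitian)

noncomputable def maxEig [Nonempty m] : ℝ :=
  Finset.univ.sup' Finset.univ_nonempty hM.eigenvalues

variable [Nonempty m]

lemma sum_coord_smul (x : m → ℝ) :
    ∑ i, ((⇑(hM.eigenvectorBasis i) : m → ℝ) ⬝ᵥ x) • (⇑(hM.eigenvectorBasis i) : m → ℝ) = x := by
  have h := hM.eigenvectorBasis.sum_repr (WithLp.toLp 2 x)
  have h2 : ∀ i, hM.eigenvectorBasis.repr (WithLp.toLp 2 x) i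
      = (⇑(hM.eigenvectorBasis i) : m → ℝ) ⬝ᵥ x := by
    intro i
    rw [OrthonormalBasis.repr_apply_apply]
    simp [PiLp.inner_apply, RCLike.inner_apply, dotProduct, mul_comm]
  have h' := congrArg (WithLp.linearEquiv 2 ℝ (m → ℝ)) h
  rw [map_sum] at h'
  simp_rw [_root_.map_smul] at h'
  simp only [WithLp.linearEquiv_apply, WithLp.ofLp_toLp] at h'
  calc ∑ i, ((⇑(hM.eigenvectorBasis i) : m → ℝ) ⬝ᵥ x) • (⇑(hM.eigenvectorBasis i) : m → ℝ)
      = ∑ i, hM.eigenvectorBasis.repr (WithLp.toLp 2 x) i • ⇑(hM.eigenvectorBasis i) := by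
        simp_rw [h2]
    _ = x := h'

lemma rayleigh (x : m → ℝ) : x ⬝ᵥ M.mulVec x ≤ maxEig hM * (x ⬝ᵥ x) := by
  classical
  have hx : ∑ i, ((⇑(hM.eigenvectorBasis i) : m → ℝ) ⬝ᵥ x) • (⇑(hM.eigenvectorBasis i) : m → ℝ)
      = x := sum_coord_smul hM x
  set c : m → ℝ := fun i => (⇑(hM.eigenvectorBasis i) : m → ℝ) ⬝ᵥ x with hc
  have hxx : x ⬝ᵥ x = ∑ i, c i ^ 2 := by
    conv_lhs => rw [show x ⬝ᵥ x = (∑ i, c i • (⇑(hM.eigenvectorBasis i) : m → ℝ)) ⬝ᵥ x from by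
      rw [hx]]
    rw [sum_smul_dotProduct']
    exact Finset.sum_congr rfl fun i _ => by rw [hc, sq]
  have hMx : M.mulVec x = ∑ i, (c i * hM.eigenvalues i) • (⇑(hM.eigenvectorBasis i) : m → ℝ) := by
    conv_lhs => rw [← hx, ← Matrix.mulVecLin_apply, map_sum]
    refine Finset.sum_congr rfl fun i _ => ?_
    rw [_root_.map_smul, Matrix.mulVecLin_apply, hM.mulVec_eigenvectorBasis i, smul_smul]
  have key : x ⬝ᵥ M.mulVec x = ∑ i, hM.eigenvalues i * c i ^ 2 := by
    rw [hMx, dotProduct_sum_smul']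
    refine Finset.sum_congr rfl fun i _ => ?_
    have hxb : x ⬝ᵥ (⇑(hM.eigenvectorBasis i) : m → ℝ) = c i := by rw [dotProduct_comm]
    rw [hxb]; ring
  rw [key, hxx, Finset.mul_sum]
  refine Finset.sum_le_sum fun i _ => ?_
  exact mul_le_mul_of_nonneg_right (Finset.le_sup' _ (Finset.mem_univ i)) (sq_nonneg _)

lemma mem_eigSet (i : m) :
    hM.eigenvalues i ∈ {μ : ℝ | ∃ v : m → ℝ, v ≠ 0 ∧ M.mulVec v = μ • v} := by
  refine ⟨⇑(hM.eigenvectorBasis i), ?_, hM.mulVec_eigenvectorBasis i⟩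
  intro h0
  exact hM.eigenvectorBasis.orthonormal.ne_zero i (by ext j; exact congrFun h0 j)

lemma le_maxEig {μ : ℝ} (hμ : μ ∈ {μ : ℝ | ∃ v : m → ℝ, v ≠ 0 ∧ M.mulVec v = μ • v}) :
    μ ≤ maxEig hM := by
  obtain ⟨v, hv, hev⟩ := hμ
  have hvv : 0 < v ⬝ᵥ v := dotProduct_self_pos hv
  have h1 : v ⬝ᵥ M.mulVec v = μ * (v ⬝ᵥ v) := by rw [hev, dotProduct_smul, smul_eq_mul]
  have h2 := rayleigh hM v
  rw [h1] at h2
  exact le_of_mul_le_mul_right h2 hvv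

lemma specRad_eq_maxEig : specRad M = maxEig hM := by
  obtain ⟨i, -, hi⟩ := Finset.exists_mem_eq_sup' (Finset.univ_nonempty (α := m)) hM.eigenvalues
  refine le_antisymm (csSup_le ⟨_, mem_eigSet hM i⟩ fun μ hμ => le_maxEig hM hμ) ?_
  have hmem : maxEig hM ∈ {μ : ℝ | ∃ v : m → ℝ, v ≠ 0 ∧ M.mulVec v = μ • v} := by
    rw [maxEig, hi]; exact mem_eigSet hM i
  exact le_csSup ⟨maxEig hM, fun μ hμ => le_maxEig hM hμ⟩ hmem

include hM in
lemma rayleigh_specRad (x : m → ℝ) : x ⬝ᵥ M.mulVec x ≤ specRad M * (x ⬝ᵥ x) := by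
  rw [specRad_eq_maxEig hM]; exact rayleigh hM x

include hM in
lemma specRad_le_of_forall {c : ℝ}
    (h : ∀ μ ∈ {μ : ℝ | ∃ v : m → ℝ, v ≠ 0 ∧ M.mulVec v = μ • v}, μ ≤ c) :
    specRad M ≤ c :=
  csSup_le ⟨_, mem_eigSet hM (Classical.arbitrary m)⟩ h

include hM in
lemma specRad_nonneg (hdiag : ∀ i, M i i = 0) : 0 ≤ specRad M := by
  inhabit m
  have h := rayleigh_specRad hM (Pi.single (default : m) 1)
  have e1 : Pi.single (default : m) (1:ℝ) ⬝ᵥ (M.mulVec (Pi.single (default : m) 1)) = 0 := by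
    simp [dotProduct, Matrix.mulVec, Pi.single_apply, mul_ite, ite_mul, hdiag]
  have e2 : Pi.single (default : m) (1:ℝ) ⬝ᵥ Pi.single (default : m) 1 = 1 := by
    simp [dotProduct, Pi.single_apply]
  rw [e1, e2, mul_one] at h
  exact h

end spec

lemma specRad_of_isEmpty {m : Type*} [Fintype m] [IsEmpty m] (M : Matrix m m ℝ) :
    specRad M = 0 := by
  have h : {μ : ℝ | ∃ v : m → ℝ, v ≠ 0 ∧ M.mulVec v = μ • v} = ∅ := by
    ext μ
    simp only [Set.mem_setOf_eq, Set.mem_empty_iff_false, iff_false, not_exists]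
    rintro v ⟨hv, -⟩
    exact hv (funext fun i => isEmptyElim i)
  rw [specRad, h, Real.sSup_empty]

lemma adjMatrix_isHermitian {V : Type*} (G : SimpleGraph V) [DecidableRel G.Adj] :
    (G.adjMatrix ℝ).IsHermitian := by
  unfold Matrix.IsHermitian
  ext i j
  simp [Matrix.conjTranspose_apply, SimpleGraph.adjMatrix_apply, SimpleGraph.adj_comm]

lemma adjMatrix_submatrix_isHermitian {V m : Type*} (G : SimpleGraph V) [DecidableRel G.Adj]
    (e : m → V) : ((G.adjMatrix ℝ).submatrix e e).IsHermitian := by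
  unfold Matrix.IsHermitian
  ext i j
  simp [Matrix.conjTranspose_apply, Matrix.submatrix_apply, SimpleGraph.adjMatrix_apply,
    SimpleGraph.adj_comm]

/-! ### delSpecRadSet lemmas -/

section del
variable {V : Type*} [Fintype V] [DecidableEq V] (G : SimpleGraph V) (j : ℕ)

lemma delSpecRadSet_bddAbove : BddAbove (delSpecRadSet G j) := by
  refine Set.Finite.bddAbove (Set.Finite.subset (Set.finite_range
    (fun U : Finset V => specRad ((G.adjMatrix ℝ).submatrix
      (fun x : {v : V // v ∉ U} => (x : V)) (fun x : {v : V // v ∉ U} => (x : V))))) ?_)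
  rintro r ⟨U, -, rfl⟩
  exact ⟨U, rfl⟩

lemma delSpecRad_elem_nonneg {r : ℝ} (hr : r ∈ delSpecRadSet G j) : 0 ≤ r := by
  obtain ⟨U, -, rfl⟩ := hr
  by_cases hne : Nonempty {v : V // v ∉ U}
  · refine specRad_nonneg (adjMatrix_submatrix_isHermitian G _) fun i => ?_
    simp
  · rw [not_nonempty_iff] at hne
    rw [specRad_of_isEmpty]
  
lemma sSup_delSpecRadSet_nonneg : 0 ≤ sSup (delSpecRadSet G j) := by
  by_cases h : (delSpecRadSet G j).Nonempty
  · obtain ⟨r, hr⟩ := h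
    exact le_trans (delSpecRad_elem_nonneg G j hr) (le_csSup (delSpecRadSet_bddAbove G j) hr)
  · rw [Set.not_nonempty_iff_eq_empty] at h
    rw [h, Real.sSup_empty]

end del


lemma insert_sdiff_insert'' {V : Type*} [DecidableEq V] {a b : V} {S : Finset V}
    (hab : a ≠ b) (ha : a ∉ S) : insert a S \ insert b S = {a} := by
  ext x
  simp only [Finset.mem_sdiff, Finset.mem_insert, Finset.mem_singleton, not_or]
  constructor
  · rintro ⟨hx1 | hx2, -, hx3⟩
    · exact hx1
    · exact absurd hx2 hx3
  · rintro rfl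
    exact ⟨Or.inl rfl, hab, ha⟩

/-! ### The main theorem -/

theorem token_spectral_radius_upper_bound {V : Type*} [Fintype V] [DecidableEq V]
    (G : SimpleGraph V) (κ k : ℕ) (hG : G.Connected)
    (hκ : ∀ U : Finset V, U.card < κ → (G.induce {v : V | v ∉ U}).Connected)
    (hκ1 : 1 < κ) (hk1 : 1 ≤ k) (hkκ : k < κ) :
    specRad ((tokenGraph G k).adjMatrix ℝ) ≤ (k : ℝ) * sSup (delSpecRadSet G (k - 1)) := by
  classical
  set j : ℕ := k - 1 with hj
  set R : ℝ := sSup (delSpecRadSet G j) with hR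
  have hR0 : 0 ≤ R := sSup_delSpecRadSet_nonneg G j
  by_cases hne : Nonempty {s : Finset V // s.card = k}
  swap
  · rw [not_nonempty_iff] at hne
    rw [specRad_of_isEmpty]
    positivity
  -- main case
  have hHerm : ((tokenGraph G k).adjMatrix ℝ).IsHermitian := adjMatrix_isHermitian _
  refine specRad_le_of_forall hHerm fun μ hμ => ?_
  obtain ⟨w, hw, hew⟩ := hμ
  -- notation
  set Pk : Finset (Finset V) := Finset.univ.powersetCard k with hPk
  set Pj : Finset (Finset V) := Finset.univ.powersetCard j with hPj
  set W : Finset V → ℝ := fun A => if h : A.card = k then w ⟨A, h⟩ else 0 with hW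
  set g : (S : Finset V) → {v : V // v ∉ S} → ℝ :=
    fun S x => W (insert x.1 S) with hg
  set subM : (S : Finset V) → Matrix {v : V // v ∉ S} {v : V // v ∉ S} ℝ :=
    fun S => (G.adjMatrix ℝ).submatrix
      (fun x : {v : V // v ∉ S} => (x : V)) (fun x : {v : V // v ∉ S} => (x : V)) with hsubM
  have hWA : ∀ A : {s : Finset V // s.card = k}, W A.1 = w A := by
    intro A
    rw [hW]
    simp only [A.2, dif_pos]
  -- Identity I
  have idI : w ⬝ᵥ ((tokenGraph G k).adjMatrix ℝ).mulVec w
      = ∑ p ∈ (Pk ×ˢ Pk).filter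
          (fun p => ∃ a b, G.Adj a b ∧ p.1 \ p.2 = {a} ∧ p.2 \ p.1 = {b}),
          W p.1 * W p.2 := by
    have conv1 : ∀ (F : Finset V → ℝ), ∑ A ∈ Pk, F A = ∑ A : {s : Finset V // s.card = k}, F A.1 :=
      fun F => Finset.sum_subtype Pk (fun A => Finset.mem_powersetCard_univ) F
    have expand : w ⬝ᵥ ((tokenGraph G k).adjMatrix ℝ).mulVec w
        = ∑ A : {s : Finset V // s.card = k}, ∑ B : {s : Finset V // s.card = k},
            if (∃ a b, G.Adj a b ∧ A.1 \ B.1 = {a} ∧ B.1 \ A.1 = {b})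
            then W A.1 * W B.1 else 0 := by
      simp only [dotProduct, Matrix.mulVec, SimpleGraph.adjMatrix_apply,
        mul_ite, ite_mul, one_mul, mul_one, mul_zero, zero_mul, Finset.mul_sum]
      refine Finset.sum_congr rfl fun A _ => Finset.sum_congr rfl fun B _ => ?_
      refine if_congr Iff.rfl ?_ rfl
      rw [hWA, hWA]
    rw [expand, Finset.sum_filter, Finset.sum_product, conv1]
    refine Finset.sum_congr rfl fun A _ => ?_
    rw [conv1]
  -- Identity II: reindex by (S, a, b)
  have hjk : j + 1 = k := Nat.sub_add_cancel hk1
  have hmemPk : ∀ A : Finset V, A ∈ Pk ↔ A.card = k := fun A => Finset.mem_powersetCard_univ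
  have hmemPj : ∀ A : Finset V, A ∈ Pj ↔ A.card = j := fun A => Finset.mem_powersetCard_univ
  have idII : ∑ p ∈ (Pk ×ˢ Pk).filter
          (fun p => ∃ a b, G.Adj a b ∧ p.1 \ p.2 = {a} ∧ p.2 \ p.1 = {b}),
          W p.1 * W p.2
      = ∑ q ∈ (Pj ×ˢ (Finset.univ ×ˢ Finset.univ)).filter
          (fun q : Finset V × V × V => q.2.1 ∉ q.1 ∧ q.2.2 ∉ q.1 ∧ G.Adj q.2.1 q.2.2),
          W (insert q.2.1 q.1) * W (insert q.2.2 q.1) := by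
    refine (Finset.sum_nbij
      (fun q : Finset V × V × V => (insert q.2.1 q.1, insert q.2.2 q.1)) ?_ ?_ ?_ ?_).symm
    · -- maps into
      rintro ⟨S, a, b⟩ hq
      simp only [Finset.mem_filter, Finset.mem_product, hmemPj,
        Finset.mem_univ, true_and, and_true] at hq
      obtain ⟨hS, ha, hb, hadj⟩ := hq
      have hab : a ≠ b := hadj.ne
      exact Finset.mem_filter.mpr ⟨Finset.mem_product.mpr
        ⟨(hmemPk _).mpr (by rw [Finset.card_insert_of_notMem ha, hS, hjk]),
         (hmemPk _).mpr (by rw [Finset.card_insert_of_notMem hb, hS, hjk])⟩,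
        a, b, hadj, insert_sdiff_insert'' hab ha, insert_sdiff_insert'' hab.symm hb⟩
    · -- injective
      rintro ⟨S, a, b⟩ hq ⟨S', a', b'⟩ hq' heq
      simp only [Finset.coe_filter, Set.mem_setOf_eq, Finset.mem_product,
        hmemPj, Finset.mem_univ, true_and, and_true] at hq hq'
      obtain ⟨-, ha, hb, hadj⟩ := hq
      obtain ⟨-, ha', hb', hadj'⟩ := hq'
      have hab : a ≠ b := hadj.ne
      have hab' : a' ≠ b' := hadj'.ne
      have h1 : insert a S = insert a' S' := congrArg Prod.fst heq
      have h2 : insert b S = insert b' S' := congrArg Prod.snd heq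
      have ea : a = a' := by
        have : ({a} : Finset V) = {a'} := by
          rw [← insert_sdiff_insert'' hab ha, h1, h2, insert_sdiff_insert'' hab' ha']
        exact Finset.singleton_injective this
      have eb : b = b' := by
        have : ({b} : Finset V) = {b'} := by
          rw [← insert_sdiff_insert'' hab.symm hb, h2, h1,
            insert_sdiff_insert'' hab'.symm hb']
        exact Finset.singleton_injective this
      have eS : S = S' := by
        have h3 := congrArg (fun t => Finset.erase t a) h1
        rw [Finset.erase_insert ha, ea, Finset.erase_insert ha'] at h3
        exact h3
      simp [ea, eb, eS]
    · -- surjective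
      rintro ⟨A, B⟩ hp
      simp only [Finset.coe_filter, Set.mem_setOf_eq, Finset.mem_product,
        hmemPk] at hp
      obtain ⟨⟨hA, hB⟩, a, b, hadj, hAB, hBA⟩ := hp
      have haAB : a ∈ A \ B := by rw [hAB]; exact Finset.mem_singleton_self a
      have hbBA : b ∈ B \ A := by rw [hBA]; exact Finset.mem_singleton_self b
      have haA : a ∈ A := (Finset.mem_sdiff.mp haAB).1
      have haB : a ∉ B := (Finset.mem_sdiff.mp haAB).2
      have hbB : b ∈ B := (Finset.mem_sdiff.mp hbBA).1
      have hbA : b ∉ A := (Finset.mem_sdiff.mp hbBA).2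
      have hAe : A.erase a = A ∩ B := by
        rw [Finset.erase_eq, ← hAB, Finset.sdiff_sdiff_self_left]
      have hins : insert b (A.erase a) = B := by
        ext x
        simp only [Finset.mem_insert, hAe, Finset.mem_inter]
        constructor
        · rintro (rfl | ⟨-, h2⟩)
          · exact hbB
          · exact h2
        · intro hxB
          by_cases hxA : x ∈ A
          · exact Or.inr ⟨hxA, hxB⟩
          · left
            have hx : x ∈ B \ A := Finset.mem_sdiff.mpr ⟨hxB, hxA⟩
            rw [hBA] at hx
            exact Finset.mem_singleton.mp hx
      refine ⟨(A.erase a, a, b), Finset.mem_coe.mpr (Finset.mem_filter.mpr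
        ⟨Finset.mem_product.mpr ⟨(hmemPj _).mpr
            (by rw [Finset.card_erase_of_mem haA, hA]),
          Finset.mem_product.mpr ⟨Finset.mem_univ a, Finset.mem_univ b⟩⟩,
         Finset.notMem_erase a A, fun h => hbA (Finset.mem_of_mem_erase h), hadj⟩), ?_⟩
      simp only
      rw [Finset.insert_erase haA, hins]
    · -- values
      rintro ⟨S, a, b⟩ -
      rfl
  -- Identity III: regroup as iterated sum over S then dot products
  have conv1 : ∀ (F : Finset V → ℝ), ∑ A ∈ Pk, F A = ∑ A : {s : Finset V // s.card = k}, F A.1 :=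
    fun F => Finset.sum_subtype Pk (fun A => Finset.mem_powersetCard_univ) F
  have convS : ∀ (S : Finset V) (F : V → ℝ),
      ∑ a ∈ Finset.univ.filter (fun v => v ∉ S), F a = ∑ x : {v : V // v ∉ S}, F x.1 :=
    fun S F => Finset.sum_subtype _ (fun x => by simp) F
  have idIII : ∑ q ∈ (Pj ×ˢ (Finset.univ ×ˢ Finset.univ)).filter
          (fun q : Finset V × V × V => q.2.1 ∉ q.1 ∧ q.2.2 ∉ q.1 ∧ G.Adj q.2.1 q.2.2),
          W (insert q.2.1 q.1) * W (insert q.2.2 q.1)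
      = ∑ S ∈ Pj, g S ⬝ᵥ (subM S).mulVec (g S) := by
    rw [Finset.sum_filter, Finset.sum_product]
    refine Finset.sum_congr rfl fun S hS => ?_
    rw [Finset.sum_product]
    have expand2 : g S ⬝ᵥ (subM S).mulVec (g S)
        = ∑ x : {v : V // v ∉ S}, ∑ y : {v : V // v ∉ S},
            (if G.Adj x.1 y.1 then W (insert x.1 S) * W (insert y.1 S) else 0) := by
      simp only [dotProduct, Matrix.mulVec, hsubM, Matrix.submatrix_apply,
        SimpleGraph.adjMatrix_apply, hg, mul_ite, ite_mul, one_mul, mul_one, mul_zero,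
        zero_mul, Finset.mul_sum]
    have rhs : g S ⬝ᵥ (subM S).mulVec (g S)
        = ∑ a ∈ Finset.univ.filter (fun v => v ∉ S),
            ∑ b ∈ Finset.univ.filter (fun v => v ∉ S),
              (if G.Adj a b then W (insert a S) * W (insert b S) else 0) := by
      rw [expand2, convS S (fun a => ∑ b ∈ Finset.univ.filter (fun v => v ∉ S),
        (if G.Adj a b then W (insert a S) * W (insert b S) else 0))]
      exact Finset.sum_congr rfl fun x _ => (convS S
        (fun b => if G.Adj x.1 b then W (insert x.1 S) * W (insert b S) else 0)).symm
    rw [rhs, Finset.sum_filter]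
    refine Finset.sum_congr rfl fun a _ => ?_
    by_cases ha : a ∉ S
    · simp only [ha, if_true, true_and, not_false_iff]
      rw [Finset.sum_filter]
      refine Finset.sum_congr rfl fun b _ => ?_
      by_cases hb : b ∉ S
      · simp [ha, hb]
      · simp [ha, hb]
    · simp [ha]
  -- bound each term
  have hband : ∀ S ∈ Pj, g S ⬝ᵥ (subM S).mulVec (g S) ≤ R * (g S ⬝ᵥ g S) := by
    intro S hS
    by_cases ht : Nonempty {v : V // v ∉ S}
    · haveI := ht
      have h1 := rayleigh_specRad (adjMatrix_submatrix_isHermitian G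
        (fun x : {v : V // v ∉ S} => (x : V))) (g S)
      have h2 : specRad (subM S) ≤ R := by
        refine le_csSup (delSpecRadSet_bddAbove G j) ⟨S, (hmemPj S).mp hS, by rw [hsubM]⟩
      refine le_trans ?_ (mul_le_mul_of_nonneg_right h2 (dotProduct_self_nonneg' _))
      rw [hsubM]
      exact h1
    · rw [not_nonempty_iff] at ht
      haveI := ht
      have h0 : ∀ (u v : {v : V // v ∉ S} → ℝ), u ⬝ᵥ v = 0 := fun u v => by
        simp [dotProduct]
      rw [h0, h0, mul_zero]
  -- Identity IV : the norms
  have idIV : ∑ S ∈ Pj, (g S ⬝ᵥ g S) = (k : ℝ) * (w ⬝ᵥ w) := by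
    have step1 : ∀ S : Finset V, g S ⬝ᵥ g S
        = ∑ a ∈ Finset.univ.filter (fun v => v ∉ S), W (insert a S) * W (insert a S) := by
      intro S
      rw [convS S (fun a => W (insert a S) * W (insert a S))]
      simp [dotProduct, hg]
    have e2 : ∑ S ∈ Pj, ∑ a ∈ Finset.univ.filter (fun v => v ∉ S),
          W (insert a S) * W (insert a S)
        = ∑ q ∈ (Pj ×ˢ (Finset.univ : Finset V)).filter (fun q => q.2 ∉ q.1),
            W (insert q.2 q.1) * W (insert q.2 q.1) := by
      rw [Finset.sum_filter, Finset.sum_product]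
      exact Finset.sum_congr rfl fun S _ => Finset.sum_filter _ _
    have e3 : ∑ q ∈ (Pj ×ˢ (Finset.univ : Finset V)).filter (fun q => q.2 ∉ q.1),
          W (insert q.2 q.1) * W (insert q.2 q.1)
        = ∑ p ∈ (Pk ×ˢ (Finset.univ : Finset V)).filter (fun p => p.2 ∈ p.1),
            W p.1 * W p.1 := by
      refine Finset.sum_nbij' (fun q => (insert q.2 q.1, q.2)) (fun p => (p.1.erase p.2, p.2))
        ?_ ?_ ?_ ?_ ?_
      · rintro ⟨S, a⟩ hq
        simp only [Finset.mem_filter, Finset.mem_product, hmemPj, Finset.mem_univ,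
          and_true] at hq
        obtain ⟨hS, ha⟩ := hq
        exact Finset.mem_filter.mpr ⟨Finset.mem_product.mpr
          ⟨(hmemPk _).mpr (by rw [Finset.card_insert_of_notMem ha, hS, hjk]),
           Finset.mem_univ a⟩, Finset.mem_insert_self a S⟩
      · rintro ⟨A, a⟩ hp
        simp only [Finset.mem_filter, Finset.mem_product, hmemPk, Finset.mem_univ,
          and_true] at hp
        obtain ⟨hA, ha⟩ := hp
        exact Finset.mem_filter.mpr ⟨Finset.mem_product.mpr
          ⟨(hmemPj _).mpr (by rw [Finset.card_erase_of_mem ha, hA]),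
           Finset.mem_univ a⟩, Finset.notMem_erase a A⟩
      · rintro ⟨S, a⟩ hq
        simp only [Finset.mem_filter, Finset.mem_product, hmemPj, Finset.mem_univ,
          and_true] at hq
        simp only [Prod.mk.injEq]
        exact ⟨Finset.erase_insert hq.2, trivial⟩
      · rintro ⟨A, a⟩ hp
        simp only [Finset.mem_filter, Finset.mem_product, hmemPk, Finset.mem_univ,
          and_true] at hp
        simp only [Prod.mk.injEq]
        exact ⟨Finset.insert_erase hp.2, trivial⟩
      · rintro ⟨S, a⟩ -
        rfl
    have e4 : ∑ p ∈ (Pk ×ˢ (Finset.univ : Finset V)).filter (fun p => p.2 ∈ p.1),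
          W p.1 * W p.1 = (k : ℝ) * ∑ A ∈ Pk, W A * W A := by
      rw [Finset.sum_filter, Finset.sum_product, Finset.mul_sum]
      refine Finset.sum_congr rfl fun A hA => ?_
      simp only [Finset.sum_ite_mem, Finset.univ_inter, Finset.sum_const, nsmul_eq_mul]
      rw [(hmemPk A).mp hA]
    have e5 : ∑ A ∈ Pk, W A * W A = w ⬝ᵥ w := by
      rw [conv1 (fun A => W A * W A)]
      simp only [hWA]
      simp [dotProduct]
    simp_rw [step1]
    rw [e2, e3, e4, e5]
  -- assemble
  have hchain : μ * (w ⬝ᵥ w) ≤ R * ((k : ℝ) * (w ⬝ᵥ w)) := by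
    calc μ * (w ⬝ᵥ w) = w ⬝ᵥ ((tokenGraph G k).adjMatrix ℝ).mulVec w := by
          rw [hew, dotProduct_smul, smul_eq_mul]
      _ = ∑ S ∈ Pj, g S ⬝ᵥ (subM S).mulVec (g S) := by rw [idI, idII, idIII]
      _ ≤ ∑ S ∈ Pj, R * (g S ⬝ᵥ g S) := Finset.sum_le_sum hband
      _ = R * ∑ S ∈ Pj, (g S ⬝ᵥ g S) := by rw [Finset.mul_sum]
      _ = R * ((k : ℝ) * (w ⬝ᵥ w)) := by rw [idIV]
  have hww : 0 < w ⬝ᵥ w := dotProduct_self_pos hw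
  have : μ ≤ R * (k : ℝ) := by
    have := (mul_le_mul_iff_of_pos_right hww).mp (by linarith [hchain] : μ * (w ⬝ᵥ w) ≤ (R * (k:ℝ)) * (w ⬝ᵥ w))
    exact this
  linarith [this]
end

section
/- The 2-token graph of the cycle C_n (n ≥ 3) has spectral radius 4cos(π/n), equal to twice the spectral radius of the path P_{n−1}. -/
open Finset
open scoped Classical

open Fin.CommRing

lemma specRad_eq_of_pos_eigenvector {m : Type*} [Fintype m] [Nonempty m]
    (M : Matrix m m ℝ) (hM : ∀ i j, 0 ≤ M i j)
    (f : m → ℝ) (hf : ∀ i, 0 < f i) (lam : ℝ)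
    (hMf : M.mulVec f = lam • f) :
    specRad M = lam := by
  have hfne : f ≠ 0 := fun h => (hf (Classical.arbitrary m)).ne' (congrFun h _)
  apply IsGreatest.csSup_eq
  refine ⟨⟨f, hfne, hMf⟩, ?_⟩
  rintro μ ⟨v, hv, hMv⟩
  obtain ⟨i0, -, hmax⟩ := Finset.exists_max_image Finset.univ (fun i => |v i| / f i)
    ⟨Classical.arbitrary m, Finset.mem_univ _⟩
  set c := |v i0| / f i0 with hc
  have hcpos : 0 < c := by
    obtain ⟨j, hj⟩ : ∃ j, v j ≠ 0 := by
      by_contra h; push_neg at h; exact hv (funext h)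
    exact lt_of_lt_of_le (div_pos (abs_pos.mpr hj) (hf j)) (hmax j (Finset.mem_univ j))
  have hle : ∀ j, |v j| ≤ c * f j := fun j => by
    have := hmax j (Finset.mem_univ j)
    rwa [div_le_iff₀ (hf j)] at this
  have hvi0 : |v i0| = c * f i0 := by
    rw [hc, div_mul_cancel₀]; exact (hf i0).ne'
  have h1 : μ * v i0 = ∑ j, M i0 j * v j := by
    have := congrFun hMv i0
    simpa [Matrix.mulVec, dotProduct, mul_comm] using this.symm
  have h2 : lam * f i0 = ∑ j, M i0 j * f j := by
    have := congrFun hMf i0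
    simpa [Matrix.mulVec, dotProduct, mul_comm] using this.symm
  have key : |μ| * (c * f i0) ≤ c * (lam * f i0) := by
    rw [← hvi0, ← abs_mul, h1]
    calc |∑ j, M i0 j * v j| ≤ ∑ j, |M i0 j * v j| := Finset.abs_sum_le_sum_abs _ _
      _ ≤ ∑ j, M i0 j * (c * f j) := by
          refine Finset.sum_le_sum fun j _ => ?_
          rw [abs_mul, abs_of_nonneg (hM i0 j)]
          exact mul_le_mul_of_nonneg_left (hle j) (hM i0 j)
      _ = c * (lam * f i0) := by rw [h2, Finset.mul_sum]; exact Finset.sum_congr rfl fun j _ => by ring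
  have : |μ| ≤ lam := by
    have h3 : 0 < c * f i0 := mul_pos hcpos (hf i0)
    have := (mul_le_mul_iff_of_pos_right h3).mp (by linarith [key] : |μ| * (c * f i0) ≤ lam * (c * f i0))
    exact this
  exact (le_abs_self μ).trans this

noncomputable def Wf (n k : ℕ) : ℝ := Real.sin (Real.pi * k / n)

lemma Wf_zero (n : ℕ) : Wf n 0 = 0 := by simp [Wf]

lemma Wf_n (n : ℕ) (hn : 3 ≤ n) : Wf n n = 0 := by
  have h : (n:ℝ) ≠ 0 := by positivity
  rw [Wf, show Real.pi * n / n = Real.pi by field_simp, Real.sin_pi]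

lemma Wf_pos (n : ℕ) (hn : 3 ≤ n) {k : ℕ} (h1 : 1 ≤ k) (h2 : k ≤ n - 1) : 0 < Wf n k := by
  have hn0 : (0:ℝ) < n := by positivity
  apply Real.sin_pos_of_pos_of_lt_pi
  · have : (0:ℝ) < (k:ℝ) := by exact_mod_cast h1
    positivity
  · rw [div_lt_iff₀ hn0]
    have : (k:ℝ) < n := by exact_mod_cast (by omega : k < n)
    nlinarith [Real.pi_pos]

lemma Wf_symm (n : ℕ) (hn : 3 ≤ n) {k : ℕ} (hk : k ≤ n) : Wf n (n - k) = Wf n k := by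
  have h : (n:ℝ) ≠ 0 := by positivity
  have hc : ((n - k : ℕ) : ℝ) = (n:ℝ) - k := by
    push_cast [Nat.cast_sub hk]; ring
  rw [Wf, Wf, hc, show Real.pi * ((n:ℝ) - k) / n = Real.pi - Real.pi * k / n by field_simp,
    Real.sin_pi_sub]

lemma Wf_step (n : ℕ) (hn : 3 ≤ n) {k : ℕ} (hk : 1 ≤ k) :
    Wf n (k-1) + Wf n (k+1) = 2 * Real.cos (Real.pi / n) * Wf n k := by
  have h : (n:ℝ) ≠ 0 := by positivity
  obtain ⟨m, rfl⟩ : ∃ m, k = m + 1 := ⟨k - 1, by omega⟩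
  simp only [Wf, Nat.add_sub_cancel]
  push_cast
  rw [show Real.pi * m / n = Real.pi * (m+1) / n - Real.pi / n by field_simp; ring,
      show Real.pi * (m+1+1) / n = Real.pi * (m+1) / n + Real.pi / n by field_simp,
      Real.sin_sub, Real.sin_add]
  ring

lemma path_mulVec (n : ℕ) (hn : 3 ≤ n) :
    ((SimpleGraph.pathGraph (n-1)).adjMatrix ℝ).mulVec (fun i => Wf n (i.val+1))
      = (2 * Real.cos (Real.pi / n)) • (fun i => Wf n (i.val+1)) := by
  funext i
  rw [SimpleGraph.adjMatrix_mulVec_apply]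
  have hi := i.isLt
  have key : ∑ u ∈ (SimpleGraph.pathGraph (n-1)).neighborFinset i, Wf n (u.val+1)
      = Wf n i.val + Wf n (i.val+2) := by
    rcases Nat.eq_zero_or_pos i.val with h0 | h0
    · have hne : (SimpleGraph.pathGraph (n-1)).neighborFinset i = {⟨1, by omega⟩} := by
        ext b
        simp only [SimpleGraph.mem_neighborFinset, SimpleGraph.pathGraph_adj, mem_singleton,
          Fin.ext_iff]
        have hb := b.isLt
        omega
      rw [hne, Finset.sum_singleton, h0, Wf_zero]
      norm_num
    rcases eq_or_lt_of_le (by omega : i.val ≤ n - 2) with hl | hl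
    · have hne : (SimpleGraph.pathGraph (n-1)).neighborFinset i = {⟨i.val - 1, by omega⟩} := by
        ext b
        simp only [SimpleGraph.mem_neighborFinset, SimpleGraph.pathGraph_adj, mem_singleton,
          Fin.ext_iff]
        have hb := b.isLt
        omega
      rw [hne, Finset.sum_singleton, show i.val - 1 + 1 = i.val by omega,
        show i.val + 2 = n by omega, Wf_n n hn]
      norm_num
    · have hne : (SimpleGraph.pathGraph (n-1)).neighborFinset i
          = {⟨i.val - 1, by omega⟩, ⟨i.val + 1, by omega⟩} := by
        ext b
        simp only [SimpleGraph.mem_neighborFinset, SimpleGraph.pathGraph_adj, mem_insert,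
          mem_singleton, Fin.ext_iff]
        have hb := b.isLt
        omega
      rw [hne, Finset.sum_pair (by simp only [ne_eq, Fin.mk.injEq]; omega)]
      rw [show i.val - 1 + 1 = i.val by omega]
    -- done
  rw [key]
  have := Wf_step n hn (k := i.val + 1) (by omega)
  simpa using this

lemma path_specRad (n : ℕ) (hn : 3 ≤ n) :
    specRad ((SimpleGraph.pathGraph (n-1)).adjMatrix ℝ) = 2 * Real.cos (Real.pi / n) := by
  haveI : Nonempty (Fin (n-1)) := ⟨⟨0, by omega⟩⟩
  apply specRad_eq_of_pos_eigenvector _ (fun i j => by simp [SimpleGraph.adjMatrix]; split <;> norm_num)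
    (fun i => Wf n (i.val+1)) (fun i => Wf_pos n hn (by omega) (by have := i.isLt; omega))
  exact path_mulVec n hn
section FinFacts
variable {n : ℕ} [NeZero n]

lemma fin_one_val (hn : 3 ≤ n) : ((1:Fin n)).val = 1 := by
  rw [Fin.val_one']; exact Nat.mod_eq_of_lt (by omega)

lemma fin_two_val (hn : 3 ≤ n) : ((1:Fin n) + 1).val = 2 := by
  have h1 : 1 % n = 1 := Nat.mod_eq_of_lt (by omega)
  rw [Fin.add_def]
  simp only [Fin.val_one', h1]
  exact Nat.mod_eq_of_lt (by omega)

lemma fin_one_ne_zero (hn : 3 ≤ n) : (1 : Fin n) ≠ 0 := by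
  intro h
  have := fin_one_val (n := n) hn
  rw [h] at this
  simp at this

lemma fin_two_ne_zero (hn : 3 ≤ n) : (1 : Fin n) + 1 ≠ 0 := by
  intro h
  have := fin_two_val (n := n) hn
  rw [h] at this
  simp at this

lemma fin_neg_one_val (hn : 3 ≤ n) : ((-1 : Fin n)).val = n - 1 := by
  have h1 : 1 % n = 1 := Nat.mod_eq_of_lt (by omega)
  rw [Fin.coe_neg, Fin.val_one', h1, Nat.mod_eq_of_lt (by omega)]

lemma fin_val_pos {d : Fin n} (hd : d ≠ 0) : 1 ≤ d.val := by
  have : d.val ≠ 0 := fun hc => hd (Fin.ext (by simp [hc]))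
  omega

lemma fin_neg_val (hn : 3 ≤ n) {d : Fin n} (hd : d ≠ 0) : (-d).val = n - d.val := by
  have := fin_val_pos hd
  rw [Fin.coe_neg, Nat.mod_eq_of_lt (by omega)]

lemma fin_add_one_val (hn : 3 ≤ n) {d : Fin n} (hd : d.val + 1 < n) : (d + 1).val = d.val + 1 := by
  have h1 : 1 % n = 1 := Nat.mod_eq_of_lt (by omega)
  rw [Fin.add_def]
  simp only [Fin.val_one', h1]
  exact Nat.mod_eq_of_lt (by omega)

lemma fin_sub_one_val (hn : 3 ≤ n) {d : Fin n} (hd : d ≠ 0) : (d - 1).val = d.val - 1 := by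
  have h1 : 1 % n = 1 := Nat.mod_eq_of_lt (by omega)
  have h2 := fin_val_pos hd
  have h3 := d.isLt
  rw [Fin.sub_def]
  simp only [Fin.val_one', h1]
  rw [show n - 1 + d.val = (d.val - 1) + n by omega, Nat.add_mod_right,
    Nat.mod_eq_of_lt (by omega)]

end FinFacts

lemma finset_pair_eq_pair_iff {α : Type*} [DecidableEq α] {a b c d : α} :
    ({a, b} : Finset α) = {c, d} ↔ a = c ∧ b = d ∨ a = d ∧ b = c := by
  rw [← Finset.coe_inj]
  simp only [Finset.coe_insert, Finset.coe_singleton]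
  exact Set.pair_eq_pair_iff

lemma pair_sdiff_pair {α : Type*} [DecidableEq α] {a c b : α} (h1 : a ≠ b) (h2 : a ≠ c) :
    ({a, c} : Finset α) \ {b, c} = {a} := by
  ext x
  simp only [Finset.mem_sdiff, Finset.mem_insert, Finset.mem_singleton]
  constructor
  · rintro ⟨h3 | h3, h4⟩
    · exact h3
    · exact absurd (Or.inr h3) h4
  · rintro rfl
    exact ⟨Or.inl rfl, by push_neg; exact ⟨h1, h2⟩⟩

def vpair {n : ℕ} (x y : Fin n) (h : x ≠ y) : {s : Finset (Fin n) // s.card = 2} :=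
  ⟨{x, y}, by rw [Finset.card_insert_of_notMem (by simp [h]), Finset.card_singleton]⟩

noncomputable def tvec (n : ℕ) (A : {s : Finset (Fin n) // s.card = 2}) : ℝ :=
  ∑ p ∈ A.1 ×ˢ A.1, Wf n ((p.2 - p.1 : Fin n)).val

lemma tvec_eval {n : ℕ} [NeZero n] (hn : 3 ≤ n) (A : {s : Finset (Fin n) // s.card = 2})
    (x y : Fin n) (h : x ≠ y) (hA : A.1 = {x, y}) :
    tvec n A = Wf n (y - x).val + Wf n (n - (y - x).val) := by
  have hd : y - x ≠ 0 := sub_ne_zero_of_ne h.symm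
  have hx : x ∉ ({y} : Finset (Fin n)) := by simp [h]
  rw [tvec, hA, Finset.sum_product, show ({x,y} : Finset (Fin n)) = insert x {y} from rfl,
    Finset.sum_insert hx, Finset.sum_singleton, Finset.sum_insert hx, Finset.sum_singleton,
    Finset.sum_insert hx, Finset.sum_singleton]
  rw [sub_self, show x - y = -(y - x) by ring, fin_neg_val hn hd]
  simp only [Fin.val_zero, Wf_zero, zero_add, add_zero, sub_self]

lemma tvec_pos {n : ℕ} [NeZero n] (hn : 3 ≤ n) (A : {s : Finset (Fin n) // s.card = 2}) :
    0 < tvec n A := by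
  obtain ⟨i, j, hij, hA⟩ := Finset.card_eq_two.mp A.2
  have hd : j - i ≠ 0 := sub_ne_zero_of_ne hij.symm
  rw [tvec_eval hn A i j hij hA]
  have h1 := fin_val_pos hd
  have h2 := (j - i).isLt
  have ha := Wf_pos n hn h1 (by omega)
  have hb := Wf_pos n hn (k := n - (j - i).val) (by omega) (by omega)
  linarith

lemma token_adj_iff {n : ℕ} [NeZero n] (hn : 3 ≤ n)
    (A B : {s : Finset (Fin n) // s.card = 2}) (i j : Fin n) (hij : i ≠ j)
    (hA : A.1 = {i, j}) :
    (tokenGraph (SimpleGraph.cycleGraph n) 2).Adj A B ↔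
      (j - i ≠ -1 ∧ B.1 = {i-1, j}) ∨ (j - i ≠ 1 ∧ B.1 = {i+1, j}) ∨
      (j - i ≠ 1 ∧ B.1 = {i, j-1}) ∨ (j - i ≠ -1 ∧ B.1 = {i, j+1}) := by
  have hone : (1:Fin n) ≠ 0 := fin_one_ne_zero hn
  have hsub1 : ∀ x : Fin n, x - 1 ≠ x := fun x h => hone (by rwa [sub_eq_self] at h)
  have hadd1 : ∀ x : Fin n, x + 1 ≠ x := fun x h => hone (by rwa [add_eq_left] at h)
  constructor
  · rintro ⟨a, b, hab, h1, h2⟩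
    have haA : a ∈ A.1 := (Finset.mem_sdiff.mp (h1 ▸ Finset.mem_singleton_self a)).1
    have hbB : b ∈ B.1 := (Finset.mem_sdiff.mp (h2 ▸ Finset.mem_singleton_self b)).1
    have hbA : b ∉ A.1 := (Finset.mem_sdiff.mp (h2 ▸ Finset.mem_singleton_self b)).2
    have hb : b = a - 1 ∨ b = a + 1 := by
      rcases SimpleGraph.cycleGraph_adj'.mp hab with h | h
      · left
        have hab1 : a - b = 1 := Fin.ext (by rw [h, fin_one_val hn])
        have : b = a - (a - b) := by ring
        rw [hab1] at this
        exact this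
      · right
        have hab1 : b - a = 1 := Fin.ext (by rw [h, fin_one_val hn])
        have : b = (b - a) + a := by ring
        rw [hab1] at this
        rw [this, add_comm]
    have haij : a = i ∨ a = j := by
      rw [hA] at haA
      simpa using haA
    rcases haij with rfl | rfl
    · -- a = i
      have hjB : j ∈ B.1 := by
        by_contra hj
        have hmem : j ∈ A.1 \ B.1 := Finset.mem_sdiff.mpr ⟨by rw [hA]; simp, hj⟩
        rw [h1] at hmem
        exact hij (Finset.mem_singleton.mp hmem).symm
      have hbj : b ≠ j := fun h => hbA (by rw [hA, h]; simp)
      have hBeq : B.1 = {b, j} := by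
        refine (Finset.eq_of_subset_of_card_le
          (Finset.insert_subset hbB (Finset.singleton_subset_iff.mpr hjB)) ?_).symm
        rw [B.2, Finset.card_insert_of_notMem (by simp [hbj]), Finset.card_singleton]
      rcases hb with rfl | rfl
      · left
        refine ⟨fun h => hbj ?_, hBeq⟩
        have h3 : j = j - a + a := by ring
        rw [h] at h3
        rw [h3]; ring
      · right; left
        refine ⟨fun h => hbj ?_, hBeq⟩
        have h3 : j = j - a + a := by ring
        rw [h] at h3
        rw [h3]; ring
    · -- a = j
      have hiB : i ∈ B.1 := by
        by_contra hi
        have hmem : i ∈ A.1 \ B.1 := Finset.mem_sdiff.mpr ⟨by rw [hA]; simp, hi⟩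
        rw [h1] at hmem
        exact hij (Finset.mem_singleton.mp hmem)
      have hbi : b ≠ i := fun h => hbA (by rw [hA, h]; simp)
      have hBeq : B.1 = {i, b} := by
        rw [Finset.pair_comm]
        refine (Finset.eq_of_subset_of_card_le
          (Finset.insert_subset hbB (Finset.singleton_subset_iff.mpr hiB)) ?_).symm
        rw [B.2, Finset.card_insert_of_notMem (by simp [hbi]), Finset.card_singleton]
      rcases hb with rfl | rfl
      · right; right; left
        refine ⟨fun h => hbi ?_, hBeq⟩
        have h3 : i = a - (a - i) := by ring
        rw [h] at h3
        exact h3.symm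
      · right; right; right
        refine ⟨fun h => hbi ?_, hBeq⟩
        have h3 : i = a - (a - i) := by ring
        rw [h] at h3
        have h4 : a - (-1 : Fin n) = a + 1 := by ring
        rw [h4] at h3
        exact h3.symm
  · rintro (⟨hc, hB⟩ | ⟨hc, hB⟩ | ⟨hc, hB⟩ | ⟨hc, hB⟩)
    · refine ⟨i, i - 1, ?_, ?_, ?_⟩
      · exact SimpleGraph.cycleGraph_adj'.mpr (Or.inl (by
          rw [show i - (i - 1) = 1 by ring, fin_one_val hn]))
      · rw [hA, hB]
        exact pair_sdiff_pair (hsub1 i).symm hij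
      · rw [hA, hB]
        exact pair_sdiff_pair (hsub1 i) (fun h => hc (by rw [← h]; ring))
    · refine ⟨i, i + 1, ?_, ?_, ?_⟩
      · exact SimpleGraph.cycleGraph_adj'.mpr (Or.inr (by
          rw [show (i + 1) - i = 1 by ring, fin_one_val hn]))
      · rw [hA, hB]
        exact pair_sdiff_pair (hadd1 i).symm hij
      · rw [hA, hB]
        exact pair_sdiff_pair (hadd1 i) (fun h => hc (by rw [← h]; ring))
    · refine ⟨j, j - 1, ?_, ?_, ?_⟩
      · exact SimpleGraph.cycleGraph_adj'.mpr (Or.inl (by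
          rw [show j - (j - 1) = 1 by ring, fin_one_val hn]))
      · rw [hA, hB, Finset.pair_comm i j, Finset.pair_comm i (j-1)]
        exact pair_sdiff_pair (hsub1 j).symm hij.symm
      · rw [hA, hB, Finset.pair_comm i j, Finset.pair_comm i (j-1)]
        exact pair_sdiff_pair (hsub1 j) (fun h => hc (by rw [← h]; ring))
    · refine ⟨j, j + 1, ?_, ?_, ?_⟩
      · exact SimpleGraph.cycleGraph_adj'.mpr (Or.inr (by
          rw [show (j + 1) - j = 1 by ring, fin_one_val hn]))
      · rw [hA, hB, Finset.pair_comm i j, Finset.pair_comm i (j+1)]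
        exact pair_sdiff_pair (hadd1 j).symm hij.symm
      · rw [hA, hB, Finset.pair_comm i j, Finset.pair_comm i (j+1)]
        exact pair_sdiff_pair (hadd1 j) (fun h => hc (by rw [← h]; ring))

lemma token_mulVec {n : ℕ} [NeZero n] (hn : 3 ≤ n) :
    ((tokenGraph (SimpleGraph.cycleGraph n) 2).adjMatrix ℝ).mulVec (tvec n)
      = (4 * Real.cos (Real.pi / n)) • tvec n := by
  have hone : (1:Fin n) ≠ 0 := fin_one_ne_zero hn
  have htwo : (1:Fin n) + 1 ≠ 0 := fin_two_ne_zero hn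
  have hsub1 : ∀ x : Fin n, x - 1 ≠ x := fun x h => hone (by rwa [sub_eq_self] at h)
  have hadd1 : ∀ x : Fin n, x + 1 ≠ x := fun x h => hone (by rwa [add_eq_left] at h)
  have hstep1 : Wf n 2 = 2 * Real.cos (Real.pi / n) * Wf n 1 := by
    have := Wf_step n hn (k := 1) le_rfl
    rwa [show (1:ℕ) - 1 = 0 from rfl, Wf_zero, zero_add] at this
  funext A
  obtain ⟨i, j, hij, hA⟩ := Finset.card_eq_two.mp A.2
  have hd : j - i ≠ 0 := sub_ne_zero_of_ne hij.symm
  have hd1 : 1 ≤ (j - i).val := fin_val_pos hd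
  have hdn : (j - i).val < n := (j - i).isLt
  rw [Pi.smul_apply, smul_eq_mul, SimpleGraph.adjMatrix_mulVec_apply,
    tvec_eval hn A i j hij hA]
  by_cases hc1 : j - i = 1
  · have hcond : j - i ≠ -1 := by
      intro h
      have h12 : (1:Fin n) = -1 := hc1.symm.trans h
      apply htwo
      rw [show (1:Fin n)+1 = 1 - (-1) by ring, ← h12, sub_self]
    have hne1 : i - 1 ≠ j := fun h => hcond (by rw [← h]; ring)
    have hne2 : i ≠ j + 1 := fun h => hcond (by rw [h]; ring)
    have hN : (tokenGraph (SimpleGraph.cycleGraph n) 2).neighborFinset A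
        = {vpair (i-1) j hne1, vpair i (j+1) hne2} := by
      ext B
      rw [SimpleGraph.mem_neighborFinset, token_adj_iff hn A B i j hij hA]
      simp only [Finset.mem_insert, Finset.mem_singleton, Subtype.ext_iff, vpair]
      constructor
      · rintro (⟨-, h⟩ | ⟨hcc, -⟩ | ⟨hcc, -⟩ | ⟨-, h⟩)
        · exact Or.inl h
        · exact absurd hc1 hcc
        · exact absurd hc1 hcc
        · exact Or.inr h
      · rintro (h | h)
        · exact Or.inl ⟨hcond, h⟩
        · exact Or.inr (Or.inr (Or.inr ⟨hcond, h⟩))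
    have hne12 : vpair (i-1) j hne1 ≠ vpair i (j+1) hne2 := by
      intro h
      rcases finset_pair_eq_pair_iff.mp (Subtype.ext_iff.mp h) with ⟨h1, -⟩ | ⟨-, h2⟩
      · exact hsub1 i h1
      · exact hij h2.symm
    rw [hN, Finset.sum_pair hne12,
      tvec_eval hn _ (i-1) j hne1 rfl, tvec_eval hn _ i (j+1) hne2 rfl,
      show j - (i-1) = (j - i) + 1 by ring, show (j+1) - i = (j - i) + 1 by ring,
      hc1, fin_two_val hn, fin_one_val hn,
      Wf_symm n hn (show 2 ≤ n by omega), Wf_symm n hn (show 1 ≤ n by omega)]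
    linarith [hstep1]
  by_cases hcm : j - i = -1
  · have hne1 : i + 1 ≠ j := fun h => hc1 (by rw [← h]; ring)
    have hne2 : i ≠ j - 1 := fun h => hc1 (by rw [h]; ring)
    have hN : (tokenGraph (SimpleGraph.cycleGraph n) 2).neighborFinset A
        = {vpair (i+1) j hne1, vpair i (j-1) hne2} := by
      ext B
      rw [SimpleGraph.mem_neighborFinset, token_adj_iff hn A B i j hij hA]
      simp only [Finset.mem_insert, Finset.mem_singleton, Subtype.ext_iff, vpair]
      constructor
      · rintro (⟨hcc, -⟩ | ⟨-, h⟩ | ⟨-, h⟩ | ⟨hcc, -⟩)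
        · exact absurd hcm hcc
        · exact Or.inl h
        · exact Or.inr h
        · exact absurd hcm hcc
      · rintro (h | h)
        · exact Or.inr (Or.inl ⟨hc1, h⟩)
        · exact Or.inr (Or.inr (Or.inl ⟨hc1, h⟩))
    have hne12 : vpair (i+1) j hne1 ≠ vpair i (j-1) hne2 := by
      intro h
      rcases finset_pair_eq_pair_iff.mp (Subtype.ext_iff.mp h) with ⟨h1, -⟩ | ⟨-, h2⟩
      · exact hadd1 i h1
      · exact hij h2.symm
    rw [hN, Finset.sum_pair hne12,
      tvec_eval hn _ (i+1) j hne1 rfl, tvec_eval hn _ i (j-1) hne2 rfl,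
      show j - (i+1) = (j - i) - 1 by ring, show (j-1) - i = (j - i) - 1 by ring,
      hcm, show (-1 : Fin n) - 1 = -(1+1) by ring, fin_neg_val hn htwo, fin_two_val hn,
      fin_neg_one_val hn,
      show n - (n-2) = 2 by omega, show n - (n-1) = 1 by omega,
      Wf_symm n hn (show 2 ≤ n by omega), Wf_symm n hn (show 1 ≤ n by omega)]
    linarith [hstep1]
  · have hv1 : (j - i).val ≠ 1 := fun h => hc1 (Fin.ext (by rw [h, fin_one_val hn]))
    have hvm : (j - i).val ≠ n - 1 := fun h => hcm (Fin.ext (by rw [h, fin_neg_one_val hn]))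
    have hne1 : i - 1 ≠ j := fun h => hcm (by rw [← h]; ring)
    have hne2 : i + 1 ≠ j := fun h => hc1 (by rw [← h]; ring)
    have hne3 : i ≠ j - 1 := fun h => hc1 (by rw [h]; ring)
    have hne4 : i ≠ j + 1 := fun h => hcm (by rw [h]; ring)
    have hN : (tokenGraph (SimpleGraph.cycleGraph n) 2).neighborFinset A
        = {vpair (i-1) j hne1, vpair (i+1) j hne2, vpair i (j-1) hne3, vpair i (j+1) hne4} := by
      ext B
      rw [SimpleGraph.mem_neighborFinset, token_adj_iff hn A B i j hij hA]
      simp only [Finset.mem_insert, Finset.mem_singleton, Subtype.ext_iff, vpair]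
      constructor
      · rintro (⟨-, h⟩ | ⟨-, h⟩ | ⟨-, h⟩ | ⟨-, h⟩) <;> tauto
      · rintro (h | h | h | h)
        · exact Or.inl ⟨hcm, h⟩
        · exact Or.inr (Or.inl ⟨hc1, h⟩)
        · exact Or.inr (Or.inr (Or.inl ⟨hc1, h⟩))
        · exact Or.inr (Or.inr (Or.inr ⟨hcm, h⟩))
    have d12 : vpair (i-1) j hne1 ≠ vpair (i+1) j hne2 := by
      intro h
      rcases finset_pair_eq_pair_iff.mp (Subtype.ext_iff.mp h) with ⟨h1, -⟩ | ⟨-, h2⟩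
      · apply htwo
        rw [show (1:Fin n) + 1 = (i+1) - (i-1) by ring, ← h1, sub_self]
      · exact hne2 h2.symm
    have d13 : vpair (i-1) j hne1 ≠ vpair i (j-1) hne3 := by
      intro h
      rcases finset_pair_eq_pair_iff.mp (Subtype.ext_iff.mp h) with ⟨h1, -⟩ | ⟨-, h2⟩
      · exact hsub1 i h1
      · exact hij h2.symm
    have d14 : vpair (i-1) j hne1 ≠ vpair i (j+1) hne4 := by
      intro h
      rcases finset_pair_eq_pair_iff.mp (Subtype.ext_iff.mp h) with ⟨h1, -⟩ | ⟨-, h2⟩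
      · exact hsub1 i h1
      · exact hij h2.symm
    have d23 : vpair (i+1) j hne2 ≠ vpair i (j-1) hne3 := by
      intro h
      rcases finset_pair_eq_pair_iff.mp (Subtype.ext_iff.mp h) with ⟨h1, -⟩ | ⟨-, h2⟩
      · exact hadd1 i h1
      · exact hij h2.symm
    have d24 : vpair (i+1) j hne2 ≠ vpair i (j+1) hne4 := by
      intro h
      rcases finset_pair_eq_pair_iff.mp (Subtype.ext_iff.mp h) with ⟨h1, -⟩ | ⟨-, h2⟩
      · exact hadd1 i h1
      · exact hij h2.symm
    have d34 : vpair i (j-1) hne3 ≠ vpair i (j+1) hne4 := by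
      intro h
      rcases finset_pair_eq_pair_iff.mp (Subtype.ext_iff.mp h) with ⟨-, h1⟩ | ⟨h2, -⟩
      · apply htwo
        rw [show (1:Fin n) + 1 = (j+1) - (j-1) by ring, ← h1, sub_self]
      · exact hne4 h2
    rw [hN,
      Finset.sum_insert (by
        simp only [Finset.mem_insert, Finset.mem_singleton]
        push_neg
        exact ⟨d12, d13, d14⟩),
      Finset.sum_insert (by
        simp only [Finset.mem_insert, Finset.mem_singleton]
        push_neg
        exact ⟨d23, d24⟩),
      Finset.sum_pair d34,
      tvec_eval hn _ (i-1) j hne1 rfl, tvec_eval hn _ (i+1) j hne2 rfl,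
      tvec_eval hn _ i (j-1) hne3 rfl, tvec_eval hn _ i (j+1) hne4 rfl,
      show j - (i-1) = (j - i) + 1 by ring, show j - (i+1) = (j - i) - 1 by ring,
      show (j-1) - i = (j - i) - 1 by ring, show (j+1) - i = (j - i) + 1 by ring,
      fin_add_one_val hn (by omega), fin_sub_one_val hn hd,
      Wf_symm n hn (show (j-i).val + 1 ≤ n by omega),
      Wf_symm n hn (show (j-i).val - 1 ≤ n by omega),
      Wf_symm n hn (show (j-i).val ≤ n by omega)]
    have hstep := Wf_step n hn (k := (j-i).val) (by omega)
    linarith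

theorem two_token_cycle_spectral_radius (n : ℕ) (hn : 3 ≤ n) :
    specRad ((tokenGraph (SimpleGraph.cycleGraph n) 2).adjMatrix ℝ) =
      4 * Real.cos (Real.pi / n) ∧
    specRad ((tokenGraph (SimpleGraph.cycleGraph n) 2).adjMatrix ℝ) =
      2 * specRad ((SimpleGraph.pathGraph (n - 1)).adjMatrix ℝ) := by
  haveI : NeZero n := ⟨by omega⟩
  haveI : Nonempty {s : Finset (Fin n) // s.card = 2} :=
    ⟨vpair 0 1 fun h => fin_one_ne_zero hn h.symm⟩
  have h1 : specRad ((tokenGraph (SimpleGraph.cycleGraph n) 2).adjMatrix ℝ)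
      = 4 * Real.cos (Real.pi / n) :=
    specRad_eq_of_pos_eigenvector _
      (fun i j => by simp [SimpleGraph.adjMatrix]; split <;> norm_num)
      (tvec n) (tvec_pos hn) _ (token_mulVec hn)
  refine ⟨h1, ?_⟩
  rw [h1, path_specRad n hn]
  ring
end

section
/- The 2-token graph of the complete bipartite graph K_{n,n} has spectral radius 2√(n(n−1)). -/
open Finset
open scoped Classical

namespace TokenAux

variable {n : ℕ}

abbrev VV (n : ℕ) := Fin n ⊕ Fin n
abbrev GG (n : ℕ) := completeBipartiteGraph (Fin n) (Fin n)
abbrev SS (n : ℕ) := {s : Finset (VV n) // s.card = 2}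
abbrev TT (n : ℕ) := tokenGraph (GG n) 2

def Lc (A : Finset (VV n)) : ℕ := (A.filter (fun x => x.isLeft)).card

lemma sdiff_left {A : Finset (VV n)} {a b : VV n} (ha : a ∈ A) (hb : b ∉ A) :
    A \ insert b (A.erase a) = {a} := by
  ext x
  simp only [Finset.mem_sdiff, Finset.mem_insert, Finset.mem_erase, Finset.mem_singleton]
  constructor
  · rintro ⟨hx, hx2⟩
    by_contra hxa
    exact hx2 (Or.inr ⟨hxa, hx⟩)
  · rintro rfl
    refine ⟨ha, ?_⟩
    rintro (rfl | ⟨h1, _⟩)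
    · exact hb ha
    · exact h1 rfl

lemma sdiff_right {A : Finset (VV n)} {a b : VV n} (ha : a ∈ A) (hb : b ∉ A) :
    insert b (A.erase a) \ A = {b} := by
  ext x
  simp only [Finset.mem_sdiff, Finset.mem_insert, Finset.mem_erase, Finset.mem_singleton]
  constructor
  · rintro ⟨rfl | ⟨_, hx⟩, hx2⟩
    · rfl
    · exact absurd hx hx2
  · rintro rfl
    exact ⟨Or.inl rfl, hb⟩

lemma card_insert_erase {A : Finset (VV n)} {a b : VV n} (ha : a ∈ A) (hb : b ∉ A) :
    (insert b (A.erase a)).card = A.card := by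
  rw [Finset.card_insert_of_notMem (fun h => hb (Finset.mem_of_mem_erase h)),
    Finset.card_erase_of_mem ha]
  have : 1 ≤ A.card := Finset.card_pos.2 ⟨a, ha⟩
  omega

lemma adj_iff {A B : SS n} : (TT n).Adj A B ↔
    ∃ a ∈ A.1, ∃ b, b ∉ A.1 ∧ (GG n).Adj a b ∧ B.1 = insert b (A.1.erase a) := by
  constructor
  · rintro ⟨a, b, hab, h1, h2⟩
    have ha : a ∈ A.1 := by
      have := Finset.mem_sdiff.1 (h1 ▸ Finset.mem_singleton_self a); exact this.1
    have haB : a ∉ B.1 := by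
      have := Finset.mem_sdiff.1 (h1 ▸ Finset.mem_singleton_self a); exact this.2
    have hbB : b ∈ B.1 := by
      have := Finset.mem_sdiff.1 (h2 ▸ Finset.mem_singleton_self b); exact this.1
    have hb : b ∉ A.1 := by
      have := Finset.mem_sdiff.1 (h2 ▸ Finset.mem_singleton_self b); exact this.2
    refine ⟨a, ha, b, hb, hab, ?_⟩
    ext x
    simp only [Finset.mem_insert, Finset.mem_erase]
    constructor
    · intro hx
      by_cases hxb : x = b
      · exact Or.inl hxb
      · refine Or.inr ⟨?_, ?_⟩
        · rintro rfl; exact haB hx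
        · by_contra hxA
          have : x ∈ B.1 \ A.1 := Finset.mem_sdiff.2 ⟨hx, hxA⟩
          rw [h2, Finset.mem_singleton] at this
          exact hxb this
    · rintro (rfl | ⟨hxa, hxA⟩)
      · exact hbB
      · by_contra hxB
        have : x ∈ A.1 \ B.1 := Finset.mem_sdiff.2 ⟨hxA, hxB⟩
        rw [h1, Finset.mem_singleton] at this
        exact hxa this
  · rintro ⟨a, ha, b, hb, hab, hB⟩
    exact ⟨a, b, hab, by rw [hB]; exact sdiff_left ha hb, by rw [hB]; exact sdiff_right ha hb⟩

lemma adj_sides {a b : VV n} (h : (GG n).Adj a b) :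
    (a.isLeft ∧ b.isRight) ∨ (a.isRight ∧ b.isLeft) := by
  rcases h with ⟨h1, h2⟩ | ⟨h1, h2⟩
  · exact Or.inl ⟨h1, h2⟩
  · exact Or.inr ⟨h1, h2⟩

lemma Lc_le (A : SS n) : Lc A.1 ≤ 2 := by
  have := Finset.card_filter_le A.1 (fun x : VV n => x.isLeft)
  rw [A.2] at this; exact this

lemma parity_adj {A B : SS n} (h : (TT n).Adj A B) : Lc B.1 % 2 ≠ Lc A.1 % 2 := by
  rw [adj_iff] at h
  obtain ⟨a, ha, b, hb, hab, hB⟩ := h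
  unfold Lc
  rw [hB, Finset.filter_insert, Finset.filter_erase]
  rcases adj_sides hab with ⟨h1, h2⟩ | ⟨h1, h2⟩
  · have hbf : ¬ (b.isLeft = true) := by
      rcases b with y | y
      · simp at h2
      · simp
    rw [if_neg hbf]
    have haf : a ∈ A.1.filter (fun x : VV n => x.isLeft) := Finset.mem_filter.2 ⟨ha, h1⟩
    rw [Finset.card_erase_of_mem haf]
    have hpos : 1 ≤ (A.1.filter (fun x : VV n => x.isLeft)).card :=
      Finset.card_pos.2 ⟨a, haf⟩
    omega
  · have hbf : b.isLeft = true := h2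
    rw [if_pos hbf]
    have haf : a ∉ A.1.filter (fun x : VV n => x.isLeft) := by
      intro hmem
      have := (Finset.mem_filter.1 hmem).2
      rcases a with y | y
      · simp at h1
      · simp at this
    rw [Finset.erase_eq_of_notMem haf, Finset.card_insert_of_notMem]
    · omega
    · intro hmem
      exact hb (Finset.mem_filter.1 hmem).1

lemma card_filter_compl (A : Finset (VV n)) (p : VV n → Prop) [DecidablePred p] :
    (Aᶜ.filter p).card + (A.filter p).card = (Finset.univ.filter p).card := by
  have hu : Aᶜ ∪ A = Finset.univ := compl_sup_eq_top
  rw [← Finset.card_union_of_disjoint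
      (Finset.disjoint_filter_filter (disjoint_compl_left)),
    ← Finset.filter_union, hu]

lemma card_univ_right : ((Finset.univ.filter fun x : VV n => x.isRight)).card = n := by
  have h : (Finset.univ.filter fun x : VV n => x.isRight)
      = Finset.univ.map ⟨Sum.inr, Sum.inr_injective⟩ := by
    ext x
    simp only [Finset.mem_filter, Finset.mem_univ, true_and, Finset.mem_map,
      Function.Embedding.coeFn_mk]
    cases x <;> simp
  rw [h, Finset.card_map, Finset.card_univ, Fintype.card_fin]

lemma card_univ_left : ((Finset.univ.filter fun x : VV n => x.isLeft)).card = n := by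
  have h : (Finset.univ.filter fun x : VV n => x.isLeft)
      = Finset.univ.map ⟨Sum.inl, Sum.inl_injective⟩ := by
    ext x
    simp only [Finset.mem_filter, Finset.mem_univ, true_and, Finset.mem_map,
      Function.Embedding.coeFn_mk]
    cases x <;> simp
  rw [h, Finset.card_map, Finset.card_univ, Fintype.card_fin]

lemma left_right_split (A : Finset (VV n)) :
    (A.filter fun x : VV n => x.isLeft).card + (A.filter fun x : VV n => x.isRight).card
      = A.card := by
  have h2 : A.filter (fun x : VV n => ¬ x.isLeft) = A.filter (fun x : VV n => x.isRight) := by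
    apply Finset.filter_congr; intro x _; cases x <;> simp
  rw [← h2, Finset.card_filter_add_card_filter_not]

lemma deg_eq_P (A : SS n) : ((TT n).neighborFinset A).card
    = ((A.1 ×ˢ A.1ᶜ).filter fun p => (GG n).Adj p.1 p.2).card := by
  refine (Finset.card_bij
    (fun p hp => (⟨insert p.2 (A.1.erase p.1), ?_⟩ : SS n)) ?_ ?_ ?_).symm
  · have hp' := Finset.mem_filter.1 hp
    have hmem := Finset.mem_product.1 hp'.1
    rw [card_insert_erase hmem.1 (Finset.mem_compl.1 hmem.2)]
    exact A.2
  · intro p hp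
    have hp' := Finset.mem_filter.1 hp
    have hmem := Finset.mem_product.1 hp'.1
    rw [SimpleGraph.mem_neighborFinset, adj_iff]
    exact ⟨p.1, hmem.1, p.2, Finset.mem_compl.1 hmem.2, hp'.2, rfl⟩
  · intro p hp q hq hpq
    have hp' := Finset.mem_filter.1 hp
    have hpmem := Finset.mem_product.1 hp'.1
    have hq' := Finset.mem_filter.1 hq
    have hqmem := Finset.mem_product.1 hq'.1
    have hBeq : insert p.2 (A.1.erase p.1) = insert q.2 (A.1.erase q.1) :=
      congrArg Subtype.val hpq
    have hap : p.1 ∈ A.1 := hpmem.1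
    have hbp : p.2 ∉ A.1 := Finset.mem_compl.1 hpmem.2
    have haq : q.1 ∈ A.1 := hqmem.1
    have hbq : q.2 ∉ A.1 := Finset.mem_compl.1 hqmem.2
    have h1 : ({p.1} : Finset (VV n)) = {q.1} := by
      rw [← sdiff_left hap hbp, hBeq, sdiff_left haq hbq]
    have h2 : ({p.2} : Finset (VV n)) = {q.2} := by
      rw [← sdiff_right hap hbp, hBeq, sdiff_right haq hbq]
    exact Prod.ext (Finset.singleton_injective h1) (Finset.singleton_injective h2)
  · intro B hB
    rw [SimpleGraph.mem_neighborFinset, adj_iff] at hB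
    obtain ⟨a, ha, b, hb, hab, hBv⟩ := hB
    refine ⟨(a, b), Finset.mem_filter.2
      ⟨Finset.mem_product.2 ⟨ha, Finset.mem_compl.2 hb⟩, hab⟩, ?_⟩
    exact (Subtype.ext hBv.symm)

lemma deg_val (A : SS n) : ((TT n).neighborFinset A).card
    = Lc A.1 * (n - (2 - Lc A.1)) + (2 - Lc A.1) * (n - Lc A.1) := by
  rw [deg_eq_P]
  have hsum : ((A.1 ×ˢ A.1ᶜ).filter fun p => (GG n).Adj p.1 p.2).card
      = ∑ a ∈ A.1, ((A.1ᶜ).filter fun b => (GG n).Adj a b).card := by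
    rw [Finset.card_filter, Finset.sum_product]
    exact Finset.sum_congr rfl (fun a _ => (Finset.card_filter _ _).symm)
  have hRA : (A.1.filter fun x : VV n => x.isRight).card = 2 - Lc A.1 := by
    have := left_right_split A.1
    rw [A.2] at this
    unfold Lc
    omega
  have key : ∀ a ∈ A.1, ((A.1ᶜ).filter fun b => (GG n).Adj a b).card
      = if a.isLeft then n - (2 - Lc A.1) else n - Lc A.1 := by
    intro a _
    rcases a with x | x
    · have hfe : ((A.1ᶜ).filter fun b => (GG n).Adj (Sum.inl x) b)
          = (A.1ᶜ).filter (fun b : VV n => b.isRight) := by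
        apply Finset.filter_congr
        intro b _
        simp [completeBipartiteGraph]
      have h1 := card_filter_compl A.1 (fun b : VV n => b.isRight)
      rw [card_univ_right, hRA] at h1
      have hle : 2 - Lc A.1 ≤ n := by
        rw [← hRA]
        have h2 := Finset.card_filter_le A.1 (fun x : VV n => x.isRight)
        have h3 := card_univ_right (n := n)
        have h4 : (A.1.filter fun x : VV n => x.isRight).card
            ≤ (Finset.univ.filter fun x : VV n => x.isRight).card :=
          Finset.card_le_card (Finset.filter_subset_filter _ (Finset.subset_univ _))
        omega
      rw [hfe]
      simp only [Sum.isLeft_inl, if_true]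
      omega
    · have hfe : ((A.1ᶜ).filter fun b => (GG n).Adj (Sum.inr x) b)
          = (A.1ᶜ).filter (fun b : VV n => b.isLeft) := by
        apply Finset.filter_congr
        intro b _
        simp [completeBipartiteGraph]
      have h1 := card_filter_compl A.1 (fun b : VV n => b.isLeft)
      rw [card_univ_left] at h1
      rw [hfe]
      simp only [Sum.isLeft_inr, Bool.false_eq_true, if_false]
      unfold Lc
      omega
  rw [hsum, Finset.sum_congr rfl key, Finset.sum_ite, Finset.sum_const, Finset.sum_const,
    smul_eq_mul, smul_eq_mul]
  have h2 : A.1.filter (fun a : VV n => ¬ a.isLeft) = A.1.filter (fun x : VV n => x.isRight) := by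
    apply Finset.filter_congr
    intro x _
    cases x <;> simp
  rw [h2, hRA]
  rfl

lemma deg_even (A : SS n) (h : Lc A.1 % 2 = 0) : ((TT n).neighborFinset A).card = 2 * n := by
  have hle := Lc_le A
  rw [deg_val]
  have h0 : Lc A.1 = 0 ∨ Lc A.1 = 2 := by omega
  rcases h0 with h0 | h0 <;> rw [h0] <;> omega

lemma deg_odd (A : SS n) (h : Lc A.1 % 2 = 1) : ((TT n).neighborFinset A).card = 2 * (n - 1) := by
  have hle := Lc_le A
  rw [deg_val]
  have h0 : Lc A.1 = 1 := by omega
  rw [h0]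
  omega

def A0v (m : ℕ) (hm : 2 ≤ m) : SS m :=
  have h0 : 0 < m := by omega
  have h1 : 1 < m := by omega
  ⟨({Sum.inl ⟨0, h0⟩, Sum.inl ⟨1, h1⟩} : Finset (VV m)), by
    rw [Finset.card_insert_of_notMem (by simp [Fin.ext_iff]), Finset.card_singleton]⟩

lemma A0_parity (hn : 2 ≤ n) : Lc (A0v n hn).1 % 2 = 0 := by
  have h2 : Lc (A0v n hn).1 = 2 := by
    unfold Lc
    rw [Finset.filter_true_of_mem, (A0v n hn).2]
    intro x hx
    simp only [A0v, Finset.mem_insert, Finset.mem_singleton] at hx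
    rcases hx with rfl | rfl <;> rfl
  omega

noncomputable def evec (n : ℕ) : SS n → ℝ :=
  fun A => if Lc A.1 % 2 = 1 then Real.sqrt ((n:ℝ) - 1) else Real.sqrt (n:ℝ)

lemma evec_even {A : SS n} (h : Lc A.1 % 2 = 0) : evec n A = Real.sqrt (n:ℝ) :=
  if_neg (by omega)

lemma evec_odd {A : SS n} (h : Lc A.1 % 2 = 1) : evec n A = Real.sqrt ((n:ℝ) - 1) :=
  if_pos h

lemma evec_ne (hn : 2 ≤ n) : evec n ≠ 0 := by
  intro h
  have h0 := congrFun h (A0v n hn)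
  rw [evec_even (A0_parity hn), Pi.zero_apply] at h0
  have hpos := Real.sqrt_pos.2 (show (0:ℝ) < n by exact_mod_cast (by omega : 0 < n))
  linarith

lemma evec_eigen (hn : 2 ≤ n) :
    ((TT n).adjMatrix ℝ).mulVec (evec n)
      = (2 * Real.sqrt ((n:ℝ) * ((n:ℝ) - 1))) • evec n := by
  have hn0 : (0:ℝ) < n := by exact_mod_cast (by omega : 0 < n)
  have hn1 : (0:ℝ) ≤ (n:ℝ) - 1 := by
    have : (1:ℝ) ≤ n := by exact_mod_cast (by omega : 1 ≤ n)
    linarith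
  have hsplit : Real.sqrt ((n:ℝ) * ((n:ℝ)-1)) = Real.sqrt (n:ℝ) * Real.sqrt ((n:ℝ)-1) :=
    Real.sqrt_mul (le_of_lt hn0) _
  have hss : Real.sqrt (n:ℝ) * Real.sqrt (n:ℝ) = (n:ℝ) := Real.mul_self_sqrt (le_of_lt hn0)
  have hss1 : Real.sqrt ((n:ℝ)-1) * Real.sqrt ((n:ℝ)-1) = (n:ℝ)-1 := Real.mul_self_sqrt hn1
  funext A
  rw [SimpleGraph.adjMatrix_mulVec_apply, Pi.smul_apply, smul_eq_mul]
  by_cases hA : Lc A.1 % 2 = 0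
  · have hnb : ∀ B ∈ (TT n).neighborFinset A, evec n B = Real.sqrt ((n:ℝ)-1) := by
      intro B hB
      exact evec_odd (by
        have := parity_adj ((SimpleGraph.mem_neighborFinset _ _ _).1 hB)
        omega)
    rw [Finset.sum_congr rfl hnb, Finset.sum_const, deg_even A hA, nsmul_eq_mul, evec_even hA]
    push_cast
    rw [hsplit]
    linear_combination (-2 * Real.sqrt ((n:ℝ)-1)) * hss
  · have hA1 : Lc A.1 % 2 = 1 := by omega
    have hnb : ∀ B ∈ (TT n).neighborFinset A, evec n B = Real.sqrt (n:ℝ) := by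
      intro B hB
      exact evec_even (by
        have := parity_adj ((SimpleGraph.mem_neighborFinset _ _ _).1 hB)
        omega)
    rw [Finset.sum_congr rfl hnb, Finset.sum_const, deg_odd A hA1, nsmul_eq_mul, evec_odd hA1]
    have hc : ((2*(n-1):ℕ):ℝ) = 2*((n:ℝ)-1) := by
      rw [Nat.cast_mul, Nat.cast_sub (by omega : 1 ≤ n)]
      norm_num
    rw [hc, hsplit]
    linear_combination (-2 * Real.sqrt ((n:ℝ))) * hss1

lemma row_eq {v : SS n → ℝ} {μ : ℝ} (h : ((TT n).adjMatrix ℝ).mulVec v = μ • v) (A : SS n) :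
    ∑ B ∈ (TT n).neighborFinset A, v B = μ * v A := by
  have h2 := congrFun h A
  rwa [SimpleGraph.adjMatrix_mulVec_apply, Pi.smul_apply, smul_eq_mul] at h2

lemma upper (hn : 2 ≤ n) {μ : ℝ} {v : SS n → ℝ} (hv0 : v ≠ 0)
    (h : ((TT n).adjMatrix ℝ).mulVec v = μ • v) :
    μ ≤ 2 * Real.sqrt ((n:ℝ) * ((n:ℝ) - 1)) := by
  classical
  have hrow := row_eq h
  have hA0 : (A0v n hn) ∈ Finset.univ.filter (fun A : SS n => Lc A.1 % 2 = 0) :=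
    Finset.mem_filter.2 ⟨Finset.mem_univ _, A0_parity hn⟩
  obtain ⟨x0, hx0, hmax⟩ := Finset.exists_max_image
    (Finset.univ.filter (fun A : SS n => Lc A.1 % 2 = 0)) (fun A => |v A|) ⟨_, hA0⟩
  have hx0p : Lc x0.1 % 2 = 0 := (Finset.mem_filter.1 hx0).2
  by_cases hm : |v x0| = 0
  · have hX : ∀ A : SS n, Lc A.1 % 2 = 0 → v A = 0 := by
      intro A hA
      have h2 := hmax A (Finset.mem_filter.2 ⟨Finset.mem_univ _, hA⟩)
      rw [hm] at h2
      exact abs_eq_zero.1 (le_antisymm h2 (abs_nonneg _))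
    have hall : ∀ A : SS n, μ * v A = 0 := by
      intro A
      by_cases hA : Lc A.1 % 2 = 0
      · rw [hX A hA, mul_zero]
      · rw [← hrow A]
        apply Finset.sum_eq_zero
        intro B hB
        have hp := parity_adj ((SimpleGraph.mem_neighborFinset _ _ _).1 hB)
        exact hX B (by omega)
    obtain ⟨A, hA⟩ := Function.ne_iff.1 hv0
    have hμ : μ = 0 := by
      rcases mul_eq_zero.1 (hall A) with h' | h'
      · exact h'
      · exact absurd h' hA
    rw [hμ]
    positivity
  · have hmpos : 0 < |v x0| := lt_of_le_of_ne (abs_nonneg _) (Ne.symm hm)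
    have hb1 : ∀ B : SS n, Lc B.1 % 2 = 1 → |μ * v B| ≤ ((2*(n-1):ℕ):ℝ) * |v x0| := by
      intro B hB
      rw [← hrow B]
      calc |∑ C ∈ (TT n).neighborFinset B, v C|
          ≤ ∑ C ∈ (TT n).neighborFinset B, |v C| := Finset.abs_sum_le_sum_abs _ _
        _ ≤ ∑ _C ∈ (TT n).neighborFinset B, |v x0| := by
            apply Finset.sum_le_sum
            intro C hC
            have hp := parity_adj ((SimpleGraph.mem_neighborFinset _ _ _).1 hC)
            exact hmax C (Finset.mem_filter.2 ⟨Finset.mem_univ _, by omega⟩)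
        _ = ((2*(n-1):ℕ):ℝ) * |v x0| := by
            rw [Finset.sum_const, deg_odd B hB, nsmul_eq_mul]
    have e1 : μ^2 * v x0 = ∑ B ∈ (TT n).neighborFinset x0, μ * v B := by
      calc μ^2 * v x0 = μ * (μ * v x0) := by ring
        _ = μ * ∑ B ∈ (TT n).neighborFinset x0, v B := by rw [hrow]
        _ = ∑ B ∈ (TT n).neighborFinset x0, μ * v B := Finset.mul_sum _ _ _
    have hb2 : μ^2 * |v x0| ≤ ((2*n:ℕ):ℝ) * (((2*(n-1):ℕ):ℝ) * |v x0|) := by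
      have habs : μ^2 * |v x0| = |μ^2 * v x0| := by
        rw [abs_mul, abs_of_nonneg (sq_nonneg μ)]
      rw [habs, e1]
      calc |∑ B ∈ (TT n).neighborFinset x0, μ * v B|
          ≤ ∑ B ∈ (TT n).neighborFinset x0, |μ * v B| := Finset.abs_sum_le_sum_abs _ _
        _ ≤ ∑ _B ∈ (TT n).neighborFinset x0, ((2*(n-1):ℕ):ℝ) * |v x0| := by
            apply Finset.sum_le_sum
            intro B hB
            have hp := parity_adj ((SimpleGraph.mem_neighborFinset _ _ _).1 hB)
            exact hb1 B (by omega)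
        _ = ((2*n:ℕ):ℝ) * (((2*(n-1):ℕ):ℝ) * |v x0|) := by
            rw [Finset.sum_const, deg_even x0 hx0p, nsmul_eq_mul]
    have hcast : ((2*n:ℕ):ℝ) * (((2*(n-1):ℕ):ℝ) * |v x0|)
        = (4 * (n:ℝ) * ((n:ℝ)-1)) * |v x0| := by
      rw [Nat.cast_mul, Nat.cast_mul, Nat.cast_sub (by omega : 1 ≤ n)]
      push_cast
      ring
    rw [hcast] at hb2
    have hq : μ^2 ≤ 4 * (n:ℝ) * ((n:ℝ)-1) := le_of_mul_le_mul_right hb2 hmpos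
    have h5 : μ ≤ |μ| := le_abs_self μ
    have h6 : |μ| = Real.sqrt (μ^2) := (Real.sqrt_sq_eq_abs μ).symm
    have h7 : Real.sqrt (μ^2) ≤ Real.sqrt (4*(n:ℝ)*((n:ℝ)-1)) := Real.sqrt_le_sqrt hq
    have h8 : Real.sqrt (4*(n:ℝ)*((n:ℝ)-1)) = 2 * Real.sqrt ((n:ℝ)*((n:ℝ)-1)) := by
      rw [show 4*(n:ℝ)*((n:ℝ)-1) = (2:ℝ)^2 * ((n:ℝ)*((n:ℝ)-1)) by ring,
        Real.sqrt_mul (by positivity), Real.sqrt_sq (by norm_num)]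
    linarith

end TokenAux

lemma sSup_eq_of (s : Set ℝ) (c : ℝ) (h1 : c ∈ s) (h2 : ∀ x ∈ s, x ≤ c) : sSup s = c :=
  le_antisymm (csSup_le ⟨c, h1⟩ h2) (le_csSup ⟨c, fun x hx => h2 x hx⟩ h1)

lemma sSup_empty_of (s : Set ℝ) (h : ∀ x, x ∉ s) : sSup s = 0 := by
  have h2 : s = ∅ := Set.eq_empty_iff_forall_notMem.2 h
  rw [h2]
  exact Real.sSup_empty

open TokenAux in
theorem two_token_complete_bipartite_spectral_radius (n : ℕ) :
    specRad ((tokenGraph (completeBipartiteGraph (Fin n) (Fin n)) 2).adjMatrix ℝ) =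
      2 * Real.sqrt ((n : ℝ) * ((n : ℝ) - 1)) := by
  unfold specRad
  rcases Nat.lt_or_ge n 2 with hn2 | hn2
  · interval_cases n
    · -- n = 0
      rw [show ((0:ℕ):ℝ) * (((0:ℕ):ℝ) - 1) = 0 by norm_num, Real.sqrt_zero, mul_zero]
      have he : IsEmpty (SS 0) := by
        constructor
        intro A
        have h2 : A.1.card ≤ Fintype.card (Fin 0 ⊕ Fin 0) := Finset.card_le_univ A.1
        rw [A.2] at h2
        simp at h2
      apply sSup_empty_of
      rintro μ ⟨v, hv0, -⟩
      exact hv0 (funext fun A => (he.false A).elim)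
    · -- n = 1
      rw [show ((1:ℕ):ℝ) * (((1:ℕ):ℝ) - 1) = 0 by norm_num, Real.sqrt_zero, mul_zero]
      have hsub : ∀ A B : SS 1, A = B := by
        intro A B
        apply Subtype.ext
        have hA : A.1 = Finset.univ := Finset.eq_univ_of_card _ (by simp [A.2])
        have hB : B.1 = Finset.univ := Finset.eq_univ_of_card _ (by simp [B.2])
        rw [hA, hB]
      have hmul : ∀ v : SS 1 → ℝ, ((TT 1).adjMatrix ℝ).mulVec v = 0 := by
        intro v
        funext A
        rw [SimpleGraph.adjMatrix_mulVec_apply]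
        apply Finset.sum_eq_zero
        intro B hB
        have hadj := (SimpleGraph.mem_neighborFinset _ _ _).1 hB
        exact absurd hadj (by rw [hsub A B]; exact (TT 1).loopless.irrefl B)
      apply sSup_eq_of
      · refine ⟨fun _ => (1:ℝ), ?_, ?_⟩
        · intro hc
          have h1 := congrFun hc
            (⟨{Sum.inl 0, Sum.inr 0}, by
              rw [Finset.card_insert_of_notMem (by simp), Finset.card_singleton]⟩ : SS 1)
          simp at h1
        · rw [hmul, zero_smul]
      · rintro μ ⟨v, hv0, hveq⟩
        rw [hmul v] at hveq
        obtain ⟨A, hA⟩ := Function.ne_iff.1 hv0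
        have h2 := congrFun hveq.symm A
        rw [Pi.smul_apply, smul_eq_mul, Pi.zero_apply] at h2
        rcases mul_eq_zero.1 h2 with h' | h'
        · exact le_of_eq h'
        · exact absurd h' hA
  · apply sSup_eq_of
    · exact ⟨evec n, evec_ne hn2, evec_eigen hn2⟩
    · rintro μ ⟨v, hv0, hveq⟩
      exact upper hn2 hv0 hveq
end

section
/- Let G be a distance-regular graph with diameter d and intersection numbers a_i, b_i, c_i. The partition of the vertices of F_2(G) into cells C_1,...,C_d, where C_i consists of the pairs {u,v} with dist_G(u,v) = i, is equitable, and each vertex of C_i has exactly 2c_i neighbors in C_{i−1}, 2a_i neighbors in C_i, and 2b_i neighbors in C_{i+1}. -/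
open Finset
open scoped Classical

lemma tg_part {V : Type*} [Fintype V] [DecidableEq V] (G : SimpleGraph V) (u v : V)
    (hne : u ≠ v) (j : ℕ) (hj : 1 ≤ j) :
    ((((tokenGraph G 2).neighborFinset ⟨{u, v}, Finset.card_pair hne⟩).filter
        (fun B => ∃ x ∈ B.1, ∃ y ∈ B.1, x ≠ y ∧ G.dist x y = j)).filter
        (fun B => u ∈ B.1)).card
      = ((G.neighborFinset v).filter (fun w => G.dist u w = j)).card := by
  symm
  have hwu : ∀ w, G.Adj v w → G.dist u w = j → w ≠ u := by
    intro w _ hd h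
    subst h
    rw [G.dist_self] at hd
    omega
  apply Finset.card_bij (fun w hw => (⟨{u, w}, by
      rw [Finset.mem_filter, SimpleGraph.mem_neighborFinset] at hw
      exact Finset.card_pair (Ne.symm (hwu w hw.1 hw.2))⟩ : {s : Finset V // s.card = 2}))
  · intro w hw
    rw [Finset.mem_filter, SimpleGraph.mem_neighborFinset] at hw
    obtain ⟨hadj, hdist⟩ := hw
    have hwv : w ≠ v := fun h => G.loopless.irrefl v (h ▸ hadj)
    have hwu' : w ≠ u := hwu w hadj hdist
    simp only [Finset.mem_filter, SimpleGraph.mem_neighborFinset]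
    refine ⟨⟨?_, u, by simp, w, by simp, hwu'.symm, hdist⟩, by simp⟩
    refine ⟨v, w, hadj, ?_, ?_⟩
    · ext x
      simp only [Finset.mem_sdiff, Finset.mem_insert, Finset.mem_singleton]
      constructor
      · rintro ⟨h1 | h1, h2⟩
        · exact absurd (Or.inl h1) h2
        · exact h1
      · rintro rfl; exact ⟨Or.inr rfl, by push_neg; exact ⟨hne.symm, hwv.symm⟩⟩
    · ext x
      simp only [Finset.mem_sdiff, Finset.mem_insert, Finset.mem_singleton]
      constructor
      · rintro ⟨h1 | h1, h2⟩
        · exact absurd (Or.inl h1) h2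
        · exact h1
      · rintro rfl; exact ⟨Or.inr rfl, by push_neg; exact ⟨hwu', hwv⟩⟩
  · intro w1 hw1 w2 hw2 heq
    rw [Finset.mem_filter, SimpleGraph.mem_neighborFinset] at hw1 hw2
    have h1 := hwu w1 hw1.1 hw1.2
    have := Subtype.ext_iff.mp heq
    simp only at this
    have : w1 ∈ ({u, w2} : Finset V) := this ▸ (by simp : w1 ∈ ({u, w1} : Finset V))
    rcases Finset.mem_insert.mp this with h | h
    · exact absurd h h1
    · exact Finset.mem_singleton.mp h
  · intro B hB
    rw [Finset.mem_filter, Finset.mem_filter, SimpleGraph.mem_neighborFinset] at hB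
    obtain ⟨⟨⟨e, f, hef, h1, h2⟩, x, hx, y, hy, hxy, hdxy⟩, huB⟩ := hB
    -- e = v
    have heA : e ∈ ({u, v} : Finset V) := by
      have : e ∈ ({u, v} : Finset V) \ B.1 := h1 ▸ Finset.mem_singleton_self e
      exact (Finset.mem_sdiff.mp this).1
    have heB : e ∉ B.1 := by
      have : e ∈ ({u, v} : Finset V) \ B.1 := h1 ▸ Finset.mem_singleton_self e
      exact (Finset.mem_sdiff.mp this).2
    have hev : e = v := by
      rcases Finset.mem_insert.mp heA with h | h
      · exact absurd (h ▸ huB) heB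
      · exact Finset.mem_singleton.mp h
    have hfB : f ∈ B.1 := by
      have : f ∈ B.1 \ ({u, v} : Finset V) := h2 ▸ Finset.mem_singleton_self f
      exact (Finset.mem_sdiff.mp this).1
    have hfA : f ∉ ({u, v} : Finset V) := by
      have : f ∈ B.1 \ ({u, v} : Finset V) := h2 ▸ Finset.mem_singleton_self f
      exact (Finset.mem_sdiff.mp this).2
    have hfu : f ≠ u := fun h => hfA (by simp [h])
    have hBeq : B.1 = {u, f} := by
      apply (Finset.eq_of_subset_of_card_le ?_ ?_).symm
      · intro z hz
        rcases Finset.mem_insert.mp hz with h | h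
        · exact h ▸ huB
        · exact (Finset.mem_singleton.mp h) ▸ hfB
      · rw [B.2, Finset.card_pair hfu.symm]
    -- dist u f = j
    have hduf : G.dist u f = j := by
      rw [hBeq, Finset.mem_insert, Finset.mem_singleton] at hx hy
      rcases hx with rfl | rfl <;> rcases hy with rfl | rfl
      · exact absurd rfl hxy
      · exact hdxy
      · rw [G.dist_comm]; exact hdxy
      · exact absurd rfl hxy
    have hadj : G.Adj v f := hev ▸ hef
    refine ⟨f, ?_, ?_⟩
    · rw [Finset.mem_filter, SimpleGraph.mem_neighborFinset]; exact ⟨hadj, hduf⟩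
    · exact Subtype.ext hBeq.symm

lemma tg_mem_iff {V : Type*} [Fintype V] [DecidableEq V] (G : SimpleGraph V) (u v : V)
    (hne : u ≠ v) (B : {s : Finset V // s.card = 2})
    (hB : B ∈ (tokenGraph G 2).neighborFinset ⟨{u, v}, Finset.card_pair hne⟩) :
    (¬ u ∈ B.1) ↔ v ∈ B.1 := by
  rw [SimpleGraph.mem_neighborFinset] at hB
  obtain ⟨e, f, hef, h1, h2⟩ := hB
  constructor
  · intro hu
    by_contra hv
    have : ({u, v} : Finset V) \ B.1 = {u, v} := by
      ext x
      simp only [Finset.mem_sdiff, Finset.mem_insert, Finset.mem_singleton]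
      constructor
      · exact fun h => h.1
      · rintro (rfl | rfl)
        · exact ⟨Or.inl rfl, hu⟩
        · exact ⟨Or.inr rfl, hv⟩
    rw [h1] at this
    have := congrArg Finset.card this
    rw [Finset.card_singleton, Finset.card_pair hne] at this
    omega
  · intro hv hu
    have hsub : ({u, v} : Finset V) ⊆ B.1 := by
      intro x hx
      rcases Finset.mem_insert.mp hx with rfl | h
      · exact hu
      · exact (Finset.mem_singleton.mp h) ▸ hv
    have : ({u, v} : Finset V) = B.1 :=
      Finset.eq_of_subset_of_card_le hsub (by rw [B.2, Finset.card_pair hne])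
    have he : e ∈ ({u, v} : Finset V) \ B.1 := h1 ▸ Finset.mem_singleton_self e
    rw [Finset.mem_sdiff] at he
    exact he.2 (hsub he.1)

lemma tg_count {V : Type*} [Fintype V] [DecidableEq V] (G : SimpleGraph V) (u v : V)
    (hne : u ≠ v) (j : ℕ) (hj : 1 ≤ j) :
    (((tokenGraph G 2).neighborFinset ⟨{u, v}, Finset.card_pair hne⟩).filter
        (fun B => ∃ x ∈ B.1, ∃ y ∈ B.1, x ≠ y ∧ G.dist x y = j)).card
      = ((G.neighborFinset v).filter (fun w => G.dist u w = j)).card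
        + ((G.neighborFinset u).filter (fun w => G.dist v w = j)).card := by
  rw [← Finset.card_filter_add_card_filter_not
    (p := fun B : {s : Finset V // s.card = 2} => u ∈ B.1)]
  congr 1
  · exact tg_part G u v hne j hj
  · have hA : (⟨{u, v}, Finset.card_pair hne⟩ : {s : Finset V // s.card = 2})
        = ⟨{v, u}, Finset.card_pair hne.symm⟩ := Subtype.ext (Finset.pair_comm u v)
    rw [← tg_part G v u hne.symm j hj, ← hA]
    apply congrArg Finset.card
    apply Finset.filter_congr
    intro B hB
    exact tg_mem_iff G u v hne B (Finset.mem_of_mem_filter B hB)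

theorem distance_regular_two_token_equitable {V : Type*} [Fintype V] [DecidableEq V]
    (G : SimpleGraph V) (hG : G.Connected)
    (d : ℕ) (hd : ∀ u v : V, G.dist u v ≤ d)
    (a b c : ℕ → ℕ)
    (hc : ∀ i, 1 ≤ i → i ≤ d → ∀ u v : V, G.dist u v = i →
      ((G.neighborFinset v).filter (fun w => G.dist u w = i - 1)).card = c i)
    (ha : ∀ i, 1 ≤ i → i ≤ d → ∀ u v : V, G.dist u v = i →
      ((G.neighborFinset v).filter (fun w => G.dist u w = i)).card = a i)
    (hb : ∀ i, 1 ≤ i → i ≤ d → ∀ u v : V, G.dist u v = i →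
      ((G.neighborFinset v).filter (fun w => G.dist u w = i + 1)).card = b i) :
    ∀ (i : ℕ), 1 ≤ i → i ≤ d → ∀ (u v : V) (hne : u ≠ v), G.dist u v = i →
      (2 ≤ i →
        (((tokenGraph G 2).neighborFinset ⟨{u, v}, Finset.card_pair hne⟩).filter
          (fun B => ∃ x ∈ B.1, ∃ y ∈ B.1, x ≠ y ∧ G.dist x y = i - 1)).card = 2 * c i) ∧
      (((tokenGraph G 2).neighborFinset ⟨{u, v}, Finset.card_pair hne⟩).filter
        (fun B => ∃ x ∈ B.1, ∃ y ∈ B.1, x ≠ y ∧ G.dist x y = i)).card = 2 * a i ∧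
      (((tokenGraph G 2).neighborFinset ⟨{u, v}, Finset.card_pair hne⟩).filter
        (fun B => ∃ x ∈ B.1, ∃ y ∈ B.1, x ≠ y ∧ G.dist x y = i + 1)).card = 2 * b i := by
  intro i hi1 hid u v hne hdist
  have hvu : G.dist v u = i := by rw [SimpleGraph.dist_comm]; exact hdist
  refine ⟨fun h2 => ?_, ?_, ?_⟩
  · rw [tg_count G u v hne (i - 1) (by omega), hc i hi1 hid u v hdist, hc i hi1 hid v u hvu]
    omega
  · rw [tg_count G u v hne i hi1, ha i hi1 hid u v hdist, ha i hi1 hid v u hvu]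
    omega
  · rw [tg_count G u v hne (i + 1) (by omega), hb i hi1 hid u v hdist, hb i hi1 hid v u hvu]
    omega
end

section
/- Let G be a strongly regular graph with parameters (n, d, a, c). Then the 2-token graph F_2(G) has an equitable partition into two cells (pairs at distance 1 and pairs at distance 2) with quotient matrix [[2a, 2c],[2d−2a−2, 2d−2c]], and the adjacency spectral radius of F_2(G) equals d + (a−c) + √((d−(a−c))² − 4c). -/
open Finset
open scoped Classical

lemma pair_sdiff_pair_s19 {V : Type*} [DecidableEq V] {x y z : V}
    (hyx : y ≠ x) (hzx : z ≠ x) (hzy : z ≠ y) :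
    ({x, y} : Finset V) \ {x, z} = {y} := by
  ext t
  simp only [Finset.mem_sdiff, Finset.mem_insert, Finset.mem_singleton]
  constructor
  · rintro ⟨rfl | rfl, ht⟩
    · exact absurd (Or.inl rfl) ht
    · rfl
  · rintro rfl
    refine ⟨Or.inr rfl, ?_⟩
    rintro (h | h)
    · exact hyx h
    · exact hzy h.symm

lemma token_adj_iff_s19 {V : Type*} [Fintype V] [DecidableEq V] (G : SimpleGraph V)
    {u v : V} (hne : u ≠ v) (h2 : ({u, v} : Finset V).card = 2)
    (B : {s : Finset V // s.card = 2}) :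
    (tokenGraph G 2).Adj ⟨{u, v}, h2⟩ B ↔
      ((∃ w, G.Adj v w ∧ w ≠ u ∧ w ≠ v ∧ B.1 = {u, w}) ∨
       (∃ w, G.Adj u w ∧ w ≠ u ∧ w ≠ v ∧ B.1 = {v, w})) := by
  constructor
  · rintro ⟨x, y, hxy, h1, hB⟩
    have hy : y ∈ B.1 ∧ y ∉ ({u, v} : Finset V) :=
      Finset.mem_sdiff.mp (hB ▸ Finset.mem_singleton_self y)
    have hyu : y ≠ u := fun h => hy.2 (by simp [h])
    have hyv : y ≠ v := fun h => hy.2 (by simp [h])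
    have hx : x ∈ ({u, v} : Finset V) ∧ x ∉ B.1 :=
      Finset.mem_sdiff.mp (h1 ▸ Finset.mem_singleton_self x)
    have hxuv : x = u ∨ x = v := by
      rcases Finset.mem_insert.mp hx.1 with h | h
      · exact Or.inl h
      · exact Or.inr (Finset.mem_singleton.mp h)
    rcases hxuv with h | h
    · -- x = u removed, so v ∈ B.1, B.1 = {v, y}
      have hvB : v ∈ B.1 := by
        by_contra hvB
        have hm : v ∈ ({u, v} : Finset V) \ B.1 := Finset.mem_sdiff.mpr ⟨by simp, hvB⟩
        rw [h1] at hm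
        exact hne (((Finset.mem_singleton.mp hm).trans h).symm)
      have hsub : ({v, y} : Finset V) ⊆ B.1 := by
        intro z hz
        rcases Finset.mem_insert.mp hz with rfl | hz
        · exact hvB
        · exact (Finset.mem_singleton.mp hz) ▸ hy.1
      have hBeq : ({v, y} : Finset V) = B.1 :=
        Finset.eq_of_subset_of_card_le hsub (by rw [B.2, Finset.card_pair hyv.symm])
      exact Or.inr ⟨y, h ▸ hxy, hyu, hyv, hBeq.symm⟩
    · have huB : u ∈ B.1 := by
        by_contra huB
        have hm : u ∈ ({u, v} : Finset V) \ B.1 := Finset.mem_sdiff.mpr ⟨by simp, huB⟩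
        rw [h1] at hm
        exact hne ((Finset.mem_singleton.mp hm).trans h)
      have hsub : ({u, y} : Finset V) ⊆ B.1 := by
        intro z hz
        rcases Finset.mem_insert.mp hz with rfl | hz
        · exact huB
        · exact (Finset.mem_singleton.mp hz) ▸ hy.1
      have hBeq : ({u, y} : Finset V) = B.1 :=
        Finset.eq_of_subset_of_card_le hsub (by rw [B.2, Finset.card_pair hyu.symm])
      exact Or.inl ⟨y, h ▸ hxy, hyu, hyv, hBeq.symm⟩
  · rintro (⟨w, hadj, hwu, hwv, hBeq⟩ | ⟨w, hadj, hwu, hwv, hBeq⟩)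
    · refine ⟨v, w, hadj, ?_, ?_⟩
      · show ({u, v} : Finset V) \ B.1 = {v}
        rw [hBeq]
        exact pair_sdiff_pair_s19 hne.symm hwu hwv
      · show B.1 \ ({u, v} : Finset V) = {w}
        rw [hBeq]
        exact pair_sdiff_pair_s19 hwu hne.symm hwv.symm
    · refine ⟨u, w, hadj, ?_, ?_⟩
      · show ({u, v} : Finset V) \ B.1 = {u}
        rw [hBeq, Finset.pair_comm u v]
        exact pair_sdiff_pair_s19 hne hwv hwu
      · show B.1 \ ({u, v} : Finset V) = {w}
        rw [hBeq, Finset.pair_comm u v]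
        exact pair_sdiff_pair_s19 hwv hne hwu.symm

section
variable {V : Type*} [Fintype V] [DecidableEq V] (G : SimpleGraph V)

lemma token_filter_card
    {u v : V} (hne : u ≠ v) (h2 : ({u, v} : Finset V).card = 2)
    (P : {s : Finset V // s.card = 2} → Prop) [DecidablePred P] (q : V → V → Prop)
    (hPq : ∀ (B : {s : Finset V // s.card = 2}) (x y : V), x ≠ y → B.1 = {x, y} →
      (P B ↔ q x y)) :
    (((tokenGraph G 2).neighborFinset ⟨{u, v}, h2⟩).filter P).card
      = (univ.filter fun w => G.Adj v w ∧ w ≠ u ∧ q u w).card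
        + (univ.filter fun w => G.Adj u w ∧ w ≠ v ∧ q v w).card := by
  set N := (tokenGraph G 2).neighborFinset ⟨{u, v}, h2⟩ with hN
  have hsplit := Finset.card_filter_add_card_filter_not
    (s := N.filter P) (p := fun B => u ∈ B.1)
  have h1 : ((N.filter P).filter (fun B => u ∈ B.1)).card
      = (univ.filter fun w => G.Adj v w ∧ w ≠ u ∧ q u w).card := by
    refine (Finset.card_bij
      (fun w hw => (⟨{u, w}, Finset.card_pair
        ((Finset.mem_filter.mp hw).2.2.1.symm)⟩ : {s : Finset V // s.card = 2}))
      ?_ ?_ ?_).symm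
    · intro w hw
      obtain ⟨-, hadj, hwu, hq⟩ := Finset.mem_filter.mp hw
      refine Finset.mem_filter.mpr ⟨Finset.mem_filter.mpr ⟨?_, ?_⟩, ?_⟩
      · rw [hN, SimpleGraph.mem_neighborFinset, token_adj_iff_s19 G hne]
        exact Or.inl ⟨w, hadj, hwu, hadj.ne', rfl⟩
      · exact (hPq _ u w hwu.symm rfl).mpr hq
      · simp
    · intro w1 hw1 w2 hw2 heq
      have he : ({u, w1} : Finset V) = {u, w2} := congrArg Subtype.val heq
      have hm : w1 ∈ ({u, w2} : Finset V) := he ▸ (by simp : w1 ∈ ({u, w1} : Finset V))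
      rcases Finset.mem_insert.mp hm with h | h
      · exact absurd h (Finset.mem_filter.mp hw1).2.2.1
      · exact Finset.mem_singleton.mp h
    · intro B hB
      obtain ⟨hBP, huB⟩ := Finset.mem_filter.mp hB
      obtain ⟨hBN, hP⟩ := Finset.mem_filter.mp hBP
      rw [hN, SimpleGraph.mem_neighborFinset, token_adj_iff_s19 G hne] at hBN
      rcases hBN with ⟨w, hadj, hwu, hwv, hBeq⟩ | ⟨w, hadj, hwu, hwv, hBeq⟩
      · exact ⟨w, Finset.mem_filter.mpr ⟨Finset.mem_univ _,
          hadj, hwu, (hPq B u w hwu.symm hBeq).mp hP⟩, Subtype.ext hBeq.symm⟩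
      · exfalso
        rw [hBeq] at huB
        rcases Finset.mem_insert.mp huB with h | h
        · exact hne h
        · exact hwu (Finset.mem_singleton.mp h).symm
  have h2' : ((N.filter P).filter (fun B => u ∉ B.1)).card
      = (univ.filter fun w => G.Adj u w ∧ w ≠ v ∧ q v w).card := by
    refine (Finset.card_bij
      (fun w hw => (⟨{v, w}, Finset.card_pair
        ((Finset.mem_filter.mp hw).2.2.1.symm)⟩ : {s : Finset V // s.card = 2}))
      ?_ ?_ ?_).symm
    · intro w hw
      obtain ⟨-, hadj, hwv, hq⟩ := Finset.mem_filter.mp hw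
      refine Finset.mem_filter.mpr ⟨Finset.mem_filter.mpr ⟨?_, ?_⟩, ?_⟩
      · rw [hN, SimpleGraph.mem_neighborFinset, token_adj_iff_s19 G hne]
        exact Or.inr ⟨w, hadj, hadj.ne', hwv, rfl⟩
      · exact (hPq _ v w hwv.symm rfl).mpr hq
      · intro hu
        rcases Finset.mem_insert.mp hu with h | h
        · exact hne h
        · exact hadj.ne (Finset.mem_singleton.mp h)
    · intro w1 hw1 w2 hw2 heq
      have he : ({v, w1} : Finset V) = {v, w2} := congrArg Subtype.val heq
      have hm : w1 ∈ ({v, w2} : Finset V) := he ▸ (by simp : w1 ∈ ({v, w1} : Finset V))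
      rcases Finset.mem_insert.mp hm with h | h
      · exact absurd h (Finset.mem_filter.mp hw1).2.2.1
      · exact Finset.mem_singleton.mp h
    · intro B hB
      obtain ⟨hBP, huB⟩ := Finset.mem_filter.mp hB
      obtain ⟨hBN, hP⟩ := Finset.mem_filter.mp hBP
      rw [hN, SimpleGraph.mem_neighborFinset, token_adj_iff_s19 G hne] at hBN
      rcases hBN with ⟨w, hadj, hwu, hwv, hBeq⟩ | ⟨w, hadj, hwu, hwv, hBeq⟩
      · exfalso
        exact huB (hBeq ▸ (by simp : u ∈ ({u, w} : Finset V)))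
      · exact ⟨w, Finset.mem_filter.mpr ⟨Finset.mem_univ _,
          hadj, hwv, (hPq B v w hwv.symm hBeq).mp hP⟩, Subtype.ext hBeq.symm⟩
  omega

end
section
variable {V : Type*} [Fintype V] [DecidableEq V] {G : SimpleGraph V} {n d a c : ℕ}

lemma card_common_adj (hsrg : G.IsSRGWith n d a c) {x y : V} (h : G.Adj x y) :
    (univ.filter fun w => G.Adj x w ∧ G.Adj y w).card = a := by
  rw [← hsrg.of_adj x y h]
  exact (Fintype.card_of_subtype _ (fun w => by
    simp [SimpleGraph.mem_commonNeighbors])).symm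

lemma card_common_nonadj (hsrg : G.IsSRGWith n d a c) {x y : V} (hne : x ≠ y)
    (h : ¬ G.Adj x y) :
    (univ.filter fun w => G.Adj x w ∧ G.Adj y w).card = c := by
  rw [← hsrg.of_not_adj hne h]
  exact (Fintype.card_of_subtype _ (fun w => by
    simp [SimpleGraph.mem_commonNeighbors])).symm

lemma deg_filter_card (hsrg : G.IsSRGWith n d a c) (y : V) :
    (univ.filter fun w => G.Adj y w).card = d := by
  have := hsrg.regular y
  rwa [SimpleGraph.degree, SimpleGraph.neighborFinset_eq_filter] at this

lemma deg_split_adj (hsrg : G.IsSRGWith n d a c) {x y : V} (h : G.Adj x y) :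
    d = 1 + a + (univ.filter fun w => G.Adj y w ∧ w ≠ x ∧ ¬ G.Adj x w).card := by
  have hd := deg_filter_card hsrg y
  have e1 := Finset.card_filter_add_card_filter_not
    (s := univ.filter fun w => G.Adj y w) (p := fun w => w = x)
  have c1 : ((univ.filter fun w => G.Adj y w).filter fun w => w = x) = {x} := by
    ext z
    simp only [Finset.mem_filter, Finset.mem_univ, true_and, Finset.mem_singleton]
    constructor
    · rintro ⟨-, rfl⟩; rfl
    · rintro rfl; exact ⟨h.symm, rfl⟩
  have e2 := Finset.card_filter_add_card_filter_not
    (s := (univ.filter fun w => G.Adj y w).filter fun w => ¬ w = x)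
    (p := fun w => G.Adj x w)
  have c2 : (((univ.filter fun w => G.Adj y w).filter fun w => ¬ w = x).filter
      fun w => G.Adj x w) = univ.filter fun w => G.Adj x w ∧ G.Adj y w := by
    ext z
    simp only [Finset.mem_filter, Finset.mem_univ, true_and]
    constructor
    · rintro ⟨⟨h1, -⟩, h3⟩; exact ⟨h3, h1⟩
    · rintro ⟨h1, h2⟩; exact ⟨⟨h2, fun hh => h1.ne (hh.symm)⟩, h1⟩
  have c3 : (((univ.filter fun w => G.Adj y w).filter fun w => ¬ w = x).filter
      fun w => ¬ G.Adj x w) = univ.filter fun w => G.Adj y w ∧ w ≠ x ∧ ¬ G.Adj x w := by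
    ext z
    simp only [Finset.mem_filter, Finset.mem_univ, true_and]
    tauto
  rw [c1] at e1
  rw [c2, c3] at e2
  rw [card_common_adj hsrg h] at e2
  simp only [Finset.card_singleton] at e1
  omega

lemma deg_split_nonadj (hsrg : G.IsSRGWith n d a c) {x y : V} (hne : x ≠ y)
    (h : ¬ G.Adj x y) :
    d = c + (univ.filter fun w => G.Adj y w ∧ w ≠ x ∧ ¬ G.Adj x w).card := by
  have hd := deg_filter_card hsrg y
  have e1 := Finset.card_filter_add_card_filter_not
    (s := univ.filter fun w => G.Adj y w) (p := fun w => G.Adj x w)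
  have c1 : ((univ.filter fun w => G.Adj y w).filter fun w => G.Adj x w)
      = univ.filter fun w => G.Adj x w ∧ G.Adj y w := by
    ext z
    simp only [Finset.mem_filter, Finset.mem_univ, true_and]
    tauto
  have c2 : ((univ.filter fun w => G.Adj y w).filter fun w => ¬ G.Adj x w)
      = univ.filter fun w => G.Adj y w ∧ w ≠ x ∧ ¬ G.Adj x w := by
    ext z
    simp only [Finset.mem_filter, Finset.mem_univ, true_and]
    constructor
    · rintro ⟨h1, h2⟩
      exact ⟨h1, fun hzx => h ((hzx ▸ h1).symm), h2⟩
    · rintro ⟨h1, -, h3⟩; exact ⟨h1, h3⟩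
  rw [c1, c2, card_common_nonadj hsrg hne h] at e1
  omega

end
set_option linter.unusedSectionVars false
section
variable {V : Type*} [Fintype V] [DecidableEq V] {G : SimpleGraph V} {n d a c : ℕ}

lemma Pedge_iff (B : {s : Finset V // s.card = 2}) {x y : V} (hxy : x ≠ y)
    (hB : B.1 = {x, y}) :
    (∃ p ∈ B.1, ∃ r ∈ B.1, G.Adj p r) ↔ G.Adj x y := by
  constructor
  · rintro ⟨p, hp, r, hr, hpr⟩
    have hp2 : p = x ∨ p = y := by rw [hB] at hp; simpa using hp
    have hr2 : r = x ∨ r = y := by rw [hB] at hr; simpa using hr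
    rcases hp2 with rfl | rfl <;> rcases hr2 with rfl | rfl
    · exact absurd hpr (G.irrefl)
    · exact hpr
    · exact hpr.symm
    · exact absurd hpr (G.irrefl)
  · intro h
    exact ⟨x, by simp [hB], y, by simp [hB], h⟩

lemma Pnon_iff (B : {s : Finset V // s.card = 2}) {x y : V} (hxy : x ≠ y)
    (hB : B.1 = {x, y}) :
    (∃ p ∈ B.1, ∃ r ∈ B.1, p ≠ r ∧ ¬ G.Adj p r) ↔ ¬ G.Adj x y := by
  constructor
  · rintro ⟨p, hp, r, hr, hpr, hnadj⟩
    have hp2 : p = x ∨ p = y := by rw [hB] at hp; simpa using hp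
    have hr2 : r = x ∨ r = y := by rw [hB] at hr; simpa using hr
    rcases hp2 with rfl | rfl <;> rcases hr2 with rfl | rfl
    · exact absurd rfl hpr
    · exact hnadj
    · exact fun hh => hnadj hh.symm
    · exact absurd rfl hpr
  · intro h
    exact ⟨x, by simp [hB], y, by simp [hB], hxy, h⟩

lemma count_adj_edge (hsrg : G.IsSRGWith n d a c) {u v : V} (h : G.Adj u v)
    (h2 : ({u, v} : Finset V).card = 2) :
    (((tokenGraph G 2).neighborFinset ⟨{u, v}, h2⟩).filter
      (fun B => ∃ x ∈ B.1, ∃ y ∈ B.1, G.Adj x y)).card = 2 * a := by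
  refine (token_filter_card G h.ne h2 _ (fun x y => G.Adj x y)
    (fun B x y hxy hB => Pedge_iff B hxy hB)).trans ?_
  have e1 : (univ.filter fun w => G.Adj v w ∧ w ≠ u ∧ G.Adj u w)
      = univ.filter fun w => G.Adj u w ∧ G.Adj v w := by
    ext z
    simp only [Finset.mem_filter, Finset.mem_univ, true_and]
    constructor
    · rintro ⟨h1, -, h3⟩; exact ⟨h3, h1⟩
    · rintro ⟨h1, h2⟩; exact ⟨h2, h1.ne', h1⟩
  have e2 : (univ.filter fun w => G.Adj u w ∧ w ≠ v ∧ G.Adj v w)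
      = univ.filter fun w => G.Adj v w ∧ G.Adj u w := by
    ext z
    simp only [Finset.mem_filter, Finset.mem_univ, true_and]
    constructor
    · rintro ⟨h1, -, h3⟩; exact ⟨h3, h1⟩
    · rintro ⟨h1, h2⟩; exact ⟨h2, h1.ne', h1⟩
  rw [e1, e2, card_common_adj hsrg h, card_common_adj hsrg h.symm]
  omega

lemma count_adj_non (hsrg : G.IsSRGWith n d a c) {u v : V} (h : G.Adj u v)
    (h2 : ({u, v} : Finset V).card = 2) :
    (((tokenGraph G 2).neighborFinset ⟨{u, v}, h2⟩).filter
      (fun B => ∃ x ∈ B.1, ∃ y ∈ B.1, x ≠ y ∧ ¬ G.Adj x y)).card = 2 * d - 2 * a - 2 := by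
  refine (token_filter_card G h.ne h2 _ (fun x y => ¬ G.Adj x y)
    (fun B x y hxy hB => Pnon_iff B hxy hB)).trans ?_
  have e1 := deg_split_adj hsrg h
  have e2 := deg_split_adj hsrg h.symm
  have key : (univ.filter fun w => G.Adj v w ∧ w ≠ u ∧ ¬ G.Adj u w).card
      + (univ.filter fun w => G.Adj u w ∧ w ≠ v ∧ ¬ G.Adj v w).card = 2 * d - 2 * a - 2 := by
    omega
  convert key using 4 <;> exact Subsingleton.elim _ _

lemma count_nonadj_edge (hsrg : G.IsSRGWith n d a c) {u v : V} (hne : u ≠ v)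
    (h : ¬ G.Adj u v) (h2 : ({u, v} : Finset V).card = 2) :
    (((tokenGraph G 2).neighborFinset ⟨{u, v}, h2⟩).filter
      (fun B => ∃ x ∈ B.1, ∃ y ∈ B.1, G.Adj x y)).card = 2 * c := by
  refine (token_filter_card G hne h2 _ (fun x y => G.Adj x y)
    (fun B x y hxy hB => Pedge_iff B hxy hB)).trans ?_
  have e1 : (univ.filter fun w => G.Adj v w ∧ w ≠ u ∧ G.Adj u w)
      = univ.filter fun w => G.Adj u w ∧ G.Adj v w := by
    ext z
    simp only [Finset.mem_filter, Finset.mem_univ, true_and]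
    constructor
    · rintro ⟨h1, -, h3⟩; exact ⟨h3, h1⟩
    · rintro ⟨h1, h2⟩; exact ⟨h2, h1.ne', h1⟩
  have e2 : (univ.filter fun w => G.Adj u w ∧ w ≠ v ∧ G.Adj v w)
      = univ.filter fun w => G.Adj v w ∧ G.Adj u w := by
    ext z
    simp only [Finset.mem_filter, Finset.mem_univ, true_and]
    constructor
    · rintro ⟨h1, -, h3⟩; exact ⟨h3, h1⟩
    · rintro ⟨h1, h2⟩; exact ⟨h2, h1.ne', h1⟩
  rw [e1, e2, card_common_nonadj hsrg hne h,
    card_common_nonadj hsrg hne.symm (fun hh => h hh.symm)]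
  omega

lemma count_nonadj_non (hsrg : G.IsSRGWith n d a c) {u v : V} (hne : u ≠ v)
    (h : ¬ G.Adj u v) (h2 : ({u, v} : Finset V).card = 2) :
    (((tokenGraph G 2).neighborFinset ⟨{u, v}, h2⟩).filter
      (fun B => ∃ x ∈ B.1, ∃ y ∈ B.1, x ≠ y ∧ ¬ G.Adj x y)).card = 2 * d - 2 * c := by
  refine (token_filter_card G hne h2 _ (fun x y => ¬ G.Adj x y)
    (fun B x y hxy hB => Pnon_iff B hxy hB)).trans ?_
  have e1 := deg_split_nonadj hsrg hne h
  have e2 := deg_split_nonadj hsrg hne.symm (fun hh => h hh.symm)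
  have key : (univ.filter fun w => G.Adj v w ∧ w ≠ u ∧ ¬ G.Adj u w).card
      + (univ.filter fun w => G.Adj u w ∧ w ≠ v ∧ ¬ G.Adj v w).card = 2 * d - 2 * c := by
    omega
  convert key using 4 <;> exact Subsingleton.elim _ _

end
noncomputable def tokenVec {V : Type*} [Fintype V] [DecidableEq V] (G : SimpleGraph V)
    (α β : ℝ) : {s : Finset V // s.card = 2} → ℝ :=
  fun B => if ∃ x ∈ B.1, ∃ y ∈ B.1, G.Adj x y then α else β

section
variable {V : Type*} [Fintype V] [DecidableEq V] {G : SimpleGraph V} {n d a c : ℕ}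

lemma tokenVec_mulVec (hsrg : G.IsSRGWith n d a c) (α β : ℝ)
    (B : {s : Finset V // s.card = 2}) :
    ((tokenGraph G 2).adjMatrix ℝ).mulVec (tokenVec G α β) B
      = if ∃ x ∈ B.1, ∃ y ∈ B.1, G.Adj x y
        then ((2 * a : ℕ) : ℝ) * α + ((2 * d - 2 * a - 2 : ℕ) : ℝ) * β
        else ((2 * c : ℕ) : ℝ) * α + ((2 * d - 2 * c : ℕ) : ℝ) * β := by
  obtain ⟨x, y, hxy, hBxy⟩ := Finset.card_eq_two.mp B.2
  have hB : B = ⟨{x, y}, Finset.card_pair hxy⟩ := Subtype.ext hBxy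
  subst hB
  rw [SimpleGraph.adjMatrix_mulVec_apply]
  have hsum : (∑ B' ∈ (tokenGraph G 2).neighborFinset ⟨{x, y}, Finset.card_pair hxy⟩,
      tokenVec G α β B')
      = (((tokenGraph G 2).neighborFinset ⟨{x, y}, Finset.card_pair hxy⟩).filter
          (fun B' => ∃ p ∈ B'.1, ∃ r ∈ B'.1, G.Adj p r)).card • α
        + (((tokenGraph G 2).neighborFinset ⟨{x, y}, Finset.card_pair hxy⟩).filter
          (fun B' => ¬ ∃ p ∈ B'.1, ∃ r ∈ B'.1, G.Adj p r)).card • β := by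
    simp only [tokenVec]
    rw [Finset.sum_ite, Finset.sum_const, Finset.sum_const]
  have hneg : (((tokenGraph G 2).neighborFinset ⟨{x, y}, Finset.card_pair hxy⟩).filter
        (fun B' => ¬ ∃ p ∈ B'.1, ∃ r ∈ B'.1, G.Adj p r))
      = (((tokenGraph G 2).neighborFinset ⟨{x, y}, Finset.card_pair hxy⟩).filter
        (fun B' => ∃ p ∈ B'.1, ∃ r ∈ B'.1, p ≠ r ∧ ¬ G.Adj p r)) := by
    apply Finset.filter_congr
    intro B' _
    obtain ⟨p0, r0, hpr0, hB'⟩ := Finset.card_eq_two.mp B'.2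
    rw [Pnon_iff B' hpr0 hB']
    exact not_congr (Pedge_iff B' hpr0 hB')
  rw [hsum, hneg]
  by_cases hadj : G.Adj x y
  · rw [if_pos ⟨x, by simp, y, by simp, hadj⟩,
      count_adj_edge hsrg hadj, count_adj_non hsrg hadj,
      nsmul_eq_mul, nsmul_eq_mul]
  · rw [if_neg (by rw [Pedge_iff _ hxy rfl]; exact hadj),
      count_nonadj_edge hsrg hxy hadj, count_nonadj_non hsrg hxy hadj,
      nsmul_eq_mul, nsmul_eq_mul]

end
theorem srg_two_token_quotient_and_radius {V : Type*} [Fintype V] [DecidableEq V]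
    (G : SimpleGraph V) (n d a c : ℕ)
    (hsrg : G.IsSRGWith n d a c) (hconn : G.Connected) (hc1 : 1 ≤ c)
    (hnc : ∃ u v : V, u ≠ v ∧ ¬ G.Adj u v) :
    (∀ (u v : V) (h : G.Adj u v),
      (((tokenGraph G 2).neighborFinset ⟨{u, v}, Finset.card_pair h.ne⟩).filter
        (fun B => ∃ x ∈ B.1, ∃ y ∈ B.1, G.Adj x y)).card = 2 * a ∧
      (((tokenGraph G 2).neighborFinset ⟨{u, v}, Finset.card_pair h.ne⟩).filter
        (fun B => ∃ x ∈ B.1, ∃ y ∈ B.1, x ≠ y ∧ ¬ G.Adj x y)).card = 2 * d - 2 * a - 2) ∧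
    (∀ (u v : V) (hne : u ≠ v), ¬ G.Adj u v →
      (((tokenGraph G 2).neighborFinset ⟨{u, v}, Finset.card_pair hne⟩).filter
        (fun B => ∃ x ∈ B.1, ∃ y ∈ B.1, G.Adj x y)).card = 2 * c ∧
      (((tokenGraph G 2).neighborFinset ⟨{u, v}, Finset.card_pair hne⟩).filter
        (fun B => ∃ x ∈ B.1, ∃ y ∈ B.1, x ≠ y ∧ ¬ G.Adj x y)).card = 2 * d - 2 * c) ∧
    specRad ((tokenGraph G 2).adjMatrix ℝ) =
      (d : ℝ) + ((a : ℝ) - (c : ℝ)) +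
        Real.sqrt (((d : ℝ) - ((a : ℝ) - (c : ℝ))) ^ 2 - 4 * (c : ℝ)) := by
  obtain ⟨u0, v0, hne0, hnadj0⟩ := hnc
  have hfc := card_common_nonadj hsrg hne0 hnadj0
  have hcd : c ≤ d := by
    have hsub : (univ.filter fun w => G.Adj u0 w ∧ G.Adj v0 w)
        ⊆ univ.filter fun w => G.Adj u0 w := by
      intro z hz
      rw [Finset.mem_filter] at hz ⊢
      exact ⟨hz.1, hz.2.1⟩
    have h1 := Finset.card_le_card hsub
    rwa [hfc, deg_filter_card hsrg u0] at h1
  have hd_a : a + 2 ≤ d := by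
    have hpos : 0 < (univ.filter fun w => G.Adj u0 w ∧ G.Adj v0 w).card := by
      rw [hfc]; omega
    obtain ⟨w0, hw0⟩ := Finset.card_pos.mp hpos
    obtain ⟨hwu, hwv⟩ := (Finset.mem_filter.mp hw0).2
    have ha := card_common_adj hsrg hwu.symm
    have e := Finset.card_filter_add_card_filter_not
      (s := univ.filter fun z => G.Adj w0 z) (p := fun z => z ≠ u0 ∧ z ≠ v0)
    have hsub1 : (univ.filter fun z => G.Adj w0 z ∧ G.Adj u0 z)
        ⊆ ((univ.filter fun z => G.Adj w0 z).filter fun z => z ≠ u0 ∧ z ≠ v0) := by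
      intro z hz
      rw [Finset.mem_filter] at hz
      refine Finset.mem_filter.mpr ⟨Finset.mem_filter.mpr ⟨Finset.mem_univ _, hz.2.1⟩,
        hz.2.2.ne', fun hzv => hnadj0 ?_⟩
      rw [← hzv]
      exact hz.2.2
    have hsub2 : ({u0, v0} : Finset V)
        ⊆ ((univ.filter fun z => G.Adj w0 z).filter fun z => ¬(z ≠ u0 ∧ z ≠ v0)) := by
      intro z hz
      rcases Finset.mem_insert.mp hz with rfl | hz
      · exact Finset.mem_filter.mpr ⟨Finset.mem_filter.mpr ⟨Finset.mem_univ _, hwu.symm⟩,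
          fun hh => hh.1 rfl⟩
      · rw [Finset.mem_singleton] at hz
        subst hz
        exact Finset.mem_filter.mpr ⟨Finset.mem_filter.mpr ⟨Finset.mem_univ _, hwv.symm⟩,
          fun hh => hh.2 rfl⟩
    have c1 := Finset.card_le_card hsub1
    have c2 := Finset.card_le_card hsub2
    rw [ha] at c1
    rw [Finset.card_pair hne0] at c2
    rw [deg_filter_card hsrg w0] at e
    omega
  refine ⟨?_, ?_, ?_⟩
  · intro u v h
    exact ⟨count_adj_edge hsrg h (Finset.card_pair h.ne),
      count_adj_non hsrg h (Finset.card_pair h.ne)⟩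
  · intro u v hne h
    exact ⟨count_nonadj_edge hsrg hne h (Finset.card_pair hne),
      count_nonadj_non hsrg hne h (Finset.card_pair hne)⟩
  · set s := Real.sqrt (((d : ℝ) - ((a : ℝ) - (c : ℝ))) ^ 2 - 4 * (c : ℝ)) with hs_def
    have hdaR : (a : ℝ) + 2 ≤ (d : ℝ) := by exact_mod_cast hd_a
    have hcdR : (c : ℝ) ≤ (d : ℝ) := by exact_mod_cast hcd
    have hcR : (1 : ℝ) ≤ (c : ℝ) := by exact_mod_cast hc1
    have haR : (0 : ℝ) ≤ (a : ℝ) := Nat.cast_nonneg a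
    have hDpos : (0 : ℝ) < ((d : ℝ) - ((a : ℝ) - (c : ℝ))) ^ 2 - 4 * (c : ℝ) := by
      nlinarith [mul_nonneg (by linarith : (0:ℝ) ≤ (d:ℝ) - (a:ℝ) - 2)
        (by linarith : (0:ℝ) ≤ (d:ℝ) - (a:ℝ) + 2*(c:ℝ) + 2), sq_nonneg ((c:ℝ))]
    have hs0 : 0 ≤ s := Real.sqrt_nonneg _
    have hs2 : s ^ 2 = ((d : ℝ) - ((a : ℝ) - (c : ℝ))) ^ 2 - 4 * (c : ℝ) :=
      Real.sq_sqrt hDpos.le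
    set lam := (d : ℝ) + ((a : ℝ) - (c : ℝ)) + s with hlam_def
    have halpha : (0 : ℝ) < 2 * (d : ℝ) - 2 * (a : ℝ) - 2 := by linarith
    have hbeta : (0 : ℝ) < lam - 2 * (a : ℝ) := by
      rw [hlam_def]
      by_contra hcon
      push_neg at hcon
      have h1 : s ≤ (a : ℝ) + (c : ℝ) - (d : ℝ) := by linarith
      have h2 : s ^ 2 ≤ ((a : ℝ) + (c : ℝ) - (d : ℝ)) ^ 2 := by nlinarith [hs0]
      have h3 : (1 : ℝ) * 1 ≤ (c : ℝ) * ((d : ℝ) - (a : ℝ) - 1) :=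
        mul_le_mul hcR (by linarith) (by norm_num) (by linarith)
      nlinarith [hs2, h2, h3]
    set α := 2 * (d : ℝ) - 2 * (a : ℝ) - 2 with halpha_def
    set β := lam - 2 * (a : ℝ) with hbeta_def
    have hwpos : ∀ B : {s : Finset V // s.card = 2}, 0 < tokenVec G α β B := by
      intro B
      simp only [tokenVec]
      split_ifs
      · exact halpha
      · exact hbeta
    have hc2a : ((2 * a : ℕ) : ℝ) = 2 * (a : ℝ) := by push_cast; ring
    have hc2c : ((2 * c : ℕ) : ℝ) = 2 * (c : ℝ) := by push_cast; ring
    have hcda : ((2 * d - 2 * a - 2 : ℕ) : ℝ) = 2 * (d : ℝ) - 2 * (a : ℝ) - 2 := by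
      have hh : (2 * d - 2 * a - 2 : ℕ) + (2 * a + 2) = 2 * d := by omega
      have hh2 : ((2 * d - 2 * a - 2 : ℕ) : ℝ) + (2 * (a : ℝ) + 2) = 2 * (d : ℝ) := by
        exact_mod_cast hh
      linarith
    have hcdc : ((2 * d - 2 * c : ℕ) : ℝ) = 2 * (d : ℝ) - 2 * (c : ℝ) := by
      have hh : (2 * d - 2 * c : ℕ) + 2 * c = 2 * d := by omega
      have hh2 : ((2 * d - 2 * c : ℕ) : ℝ) + 2 * (c : ℝ) = 2 * (d : ℝ) := by
        exact_mod_cast hh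
      linarith
    have key : ∀ B : {s : Finset V // s.card = 2},
        ((tokenGraph G 2).adjMatrix ℝ).mulVec (tokenVec G α β) B
          = lam * tokenVec G α β B := by
      intro B
      rw [tokenVec_mulVec hsrg α β B]
      simp only [tokenVec]
      split_ifs with hE
      · rw [hc2a, hcda, halpha_def, hbeta_def]
        ring
      · rw [hc2c, hcdc, halpha_def, hbeta_def, hlam_def]
        linear_combination -hs2
    have hB0 : ({u0, v0} : Finset V).card = 2 := Finset.card_pair hne0
    have hmem : lam ∈ {μ : ℝ | ∃ v : {s : Finset V // s.card = 2} → ℝ,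
        v ≠ 0 ∧ ((tokenGraph G 2).adjMatrix ℝ).mulVec v = μ • v} := by
      refine ⟨tokenVec G α β, ?_, ?_⟩
      · intro hzero
        exact (hwpos ⟨{u0, v0}, hB0⟩).ne' (congrFun hzero ⟨{u0, v0}, hB0⟩)
      · funext B
        rw [Pi.smul_apply, smul_eq_mul]
        exact key B
    have hub : ∀ μ ∈ {μ : ℝ | ∃ v : {s : Finset V // s.card = 2} → ℝ,
        v ≠ 0 ∧ ((tokenGraph G 2).adjMatrix ℝ).mulVec v = μ • v}, μ ≤ lam := by
      rintro μ ⟨v, hv0, hveq⟩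
      obtain ⟨i, -, hmax⟩ := Finset.exists_max_image Finset.univ
        (fun j => |v j| / tokenVec G α β j) ⟨⟨{u0, v0}, hB0⟩, Finset.mem_univ _⟩
      set t := |v i| / tokenVec G α β i with ht_def
      have hta : ∀ j, |v j| ≤ t * tokenVec G α β j := by
        intro j
        exact (div_le_iff₀ (hwpos j)).mp (hmax j (Finset.mem_univ j))
      have htpos : 0 < t := by
        obtain ⟨k, hk⟩ := Function.ne_iff.mp hv0
        exact lt_of_lt_of_le (div_pos (abs_pos.mpr hk) (hwpos k)) (hmax k (Finset.mem_univ k))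
      have hvi : t * tokenVec G α β i = |v i| := by
        rw [ht_def]
        exact div_mul_cancel₀ _ (hwpos i).ne'
      have hA : ∀ P Q : {s : Finset V // s.card = 2},
          0 ≤ (tokenGraph G 2).adjMatrix ℝ P Q := by
        intro P Q
        rw [SimpleGraph.adjMatrix_apply]
        split_ifs <;> norm_num
      have hchain : |μ| * |v i| ≤ lam * (t * tokenVec G α β i) := by
        have h1 : ((tokenGraph G 2).adjMatrix ℝ).mulVec v i = μ * v i := by
          rw [hveq]; simp
        calc |μ| * |v i| = |μ * v i| := (abs_mul μ (v i)).symm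
        _ = |∑ j, (tokenGraph G 2).adjMatrix ℝ i j * v j| := by rw [← h1]; rfl
        _ ≤ ∑ j, |(tokenGraph G 2).adjMatrix ℝ i j * v j| := Finset.abs_sum_le_sum_abs _ _
        _ ≤ ∑ j, (tokenGraph G 2).adjMatrix ℝ i j * (t * tokenVec G α β j) := by
            apply Finset.sum_le_sum
            intro j _
            rw [abs_mul, abs_of_nonneg (hA i j)]
            exact mul_le_mul_of_nonneg_left (hta j) (hA i j)
        _ = t * ∑ j, (tokenGraph G 2).adjMatrix ℝ i j * tokenVec G α β j := by
            rw [Finset.mul_sum]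
            congr 1
            funext j
            ring
        _ = t * (((tokenGraph G 2).adjMatrix ℝ).mulVec (tokenVec G α β) i) := rfl
        _ = t * (lam * tokenVec G α β i) := by rw [key i]
        _ = lam * (t * tokenVec G α β i) := by ring
      have h2 : |μ| ≤ lam := by
        rw [← hvi] at hchain
        exact le_of_mul_le_mul_right hchain (mul_pos htpos (hwpos i))
      exact le_trans (le_abs_self μ) h2
    exact IsGreatest.csSup_eq ⟨hmem, hub⟩
end
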